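/- arXiv:1507.06681 — 7 statements merged into one kernel-verified Lean document; each statement's English description precedes it below -/
import Mathlib

section
/- Let a, b be real numbers with 1 < a < b. Then ∫₀^{1/b} dx/√((x²−a²)(x²−1/a²)(x²−b²)(x²−1/b²)) = (1/2)·( (b/(1+b²))·K( b(1+a²)/(a(1+b²)) ) + (b/(b²−1))·K( b(a²−1)/(a(b²−1)) ) ). (The polynomial (x²−a²)(x²−1/a²)(x²−b²)(x²−1/b²) is nonnegative for x ∈ [0,1/b], so the integrand is real.) -/
open MeasureTheory Real

/-- Complete elliptic integral of the first kind. -/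
noncomputable def ellipticK (k : ℝ) : ℝ :=
  ∫ t in (0:ℝ)..1, 1 / Real.sqrt ((1 - t ^ 2) * (1 - k ^ 2 * t ^ 2))

/-- Complete elliptic integral of the second kind. -/
noncomputable def ellipticE (k : ℝ) : ℝ :=
  ∫ t in (0:ℝ)..1, Real.sqrt (1 - k ^ 2 * t ^ 2) / Real.sqrt (1 - t ^ 2)

/-- Lauricella hypergeometric function `F_D^(3)` (real arguments), via its
Euler integral representation. -/
noncomputable def FD3 (a b₁ b₂ b₃ c x₁ x₂ x₃ : ℝ) : ℝ :=
  Real.Gamma c / (Real.Gamma a * Real.Gamma (c - a)) *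
    ∫ u in (0:ℝ)..1,
      u ^ (a - 1) * (1 - u) ^ (c - a - 1) *
        (1 - x₁ * u) ^ (-b₁) * (1 - x₂ * u) ^ (-b₂) * (1 - x₃ * u) ^ (-b₃)

/-- Appell hypergeometric function `F₁` (real arguments), via its
Euler integral representation. -/
noncomputable def appellF1 (a b₁ b₂ c x y : ℝ) : ℝ :=
  Real.Gamma c / (Real.Gamma a * Real.Gamma (c - a)) *
    ∫ u in (0:ℝ)..1,
      u ^ (a - 1) * (1 - u) ^ (c - a - 1) * (1 - x * u) ^ (-b₁) * (1 - y * u) ^ (-b₂)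

/-- Lauricella hypergeometric function `F_D^(3)` (complex arguments), via its
Euler integral representation with principal branches. -/
noncomputable def FD3C (a b₁ b₂ b₃ c x₁ x₂ x₃ : ℂ) : ℂ :=
  Complex.Gamma c / (Complex.Gamma a * Complex.Gamma (c - a)) *
    ∫ u in (0:ℝ)..1,
      (u : ℂ) ^ (a - 1) * ((1 : ℂ) - (u : ℂ)) ^ (c - a - 1) *
        (1 - x₁ * (u : ℂ)) ^ (-b₁) * (1 - x₂ * (u : ℂ)) ^ (-b₂) *
        (1 - x₃ * (u : ℂ)) ^ (-b₃)

/-- Lauricella hypergeometric function `F_D^(4)` (complex arguments), via its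
Euler integral representation with principal branches. -/
noncomputable def FD4C (a b₁ b₂ b₃ b₄ c x₁ x₂ x₃ x₄ : ℂ) : ℂ :=
  Complex.Gamma c / (Complex.Gamma a * Complex.Gamma (c - a)) *
    ∫ u in (0:ℝ)..1,
      (u : ℂ) ^ (a - 1) * ((1 : ℂ) - (u : ℂ)) ^ (c - a - 1) *
        (1 - x₁ * (u : ℂ)) ^ (-b₁) * (1 - x₂ * (u : ℂ)) ^ (-b₂) *
        (1 - x₃ * (u : ℂ)) ^ (-b₃) * (1 - x₄ * (u : ℂ)) ^ (-b₄)


section Helpers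
open MeasureTheory Real Set

-- integrability of the K integrand
lemma intK {k : ℝ} (hk0 : 0 ≤ k) (hk1 : k < 1) :
    IntegrableOn (fun t => 1 / Real.sqrt ((1 - t^2) * (1 - k^2 * t^2))) (Ioo (0:ℝ) 1) := by
  have hmaj : IntegrableOn (fun t : ℝ => (1 - t) ^ (-(1/2) : ℝ)) (Ioo (0:ℝ) 1) := by
    have h1 : IntervalIntegrable (fun x : ℝ => x ^ (-(1/2) : ℝ)) volume 0 1 :=
      intervalIntegral.intervalIntegrable_rpow' (by norm_num)
    have h2 := (h1.comp_sub_left 1).symm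
    simp only [sub_zero, sub_self] at h2
    have := (intervalIntegrable_iff_integrableOn_Ioc_of_le (by norm_num : (0:ℝ) ≤ 1)).1 h2
    exact this.mono_set Ioo_subset_Ioc_self
  have hk2 : 0 < 1 - k^2 := by nlinarith
  have hcont : ContinuousOn (fun t : ℝ => 1 / Real.sqrt ((1 - t^2) * (1 - k^2 * t^2)))
      (Ioo (0:ℝ) 1) := by
    apply ContinuousOn.div continuousOn_const
    · exact (Real.continuous_sqrt.comp (by continuity)).continuousOn
    · intro t ht
      have h1 : 0 < 1 - t^2 := by nlinarith [ht.1, ht.2]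
      have h2 : 0 < 1 - k^2 * t^2 := by nlinarith [ht.1, ht.2, sq_nonneg (k*t)]
      positivity
  refine Integrable.mono' (hmaj.const_mul ((1 - k^2) ^ (-(1/2) : ℝ)))
    (hcont.aestronglyMeasurable measurableSet_Ioo) ?_
  filter_upwards [ae_restrict_mem measurableSet_Ioo] with t ht
  have h1 : 0 < 1 - t := by linarith [ht.2]
  have h1' : 0 < 1 - t^2 := by nlinarith [ht.1, ht.2]
  have h2 : 0 < 1 - k^2 * t^2 := by nlinarith [ht.1, ht.2, sq_nonneg (k*t)]
  have key : (1 - k^2) * (1 - t) ≤ (1 - t^2) * (1 - k^2 * t^2) := by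
    nlinarith [mul_nonneg h1.le (add_nonneg (mul_nonneg (sq_nonneg k) h1'.le)
      (mul_nonneg ht.1.le h2.le))]
  have hs : Real.sqrt ((1 - k^2) * (1 - t)) ≤ Real.sqrt ((1 - t^2) * (1 - k^2 * t^2)) :=
    Real.sqrt_le_sqrt key
  have hpos : 0 < Real.sqrt ((1 - k^2) * (1 - t)) := Real.sqrt_pos.2 (by positivity)
  rw [Real.norm_eq_abs, abs_of_nonneg (by positivity)]
  calc 1 / Real.sqrt ((1 - t^2) * (1 - k^2 * t^2)) ≤ 1 / Real.sqrt ((1 - k^2) * (1 - t)) := by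
        apply one_div_le_one_div_of_le hpos hs
    _ = (1 - k^2) ^ (-(1/2) : ℝ) * (1 - t) ^ (-(1/2) : ℝ) := by
        rw [Real.sqrt_mul hk2.le, Real.rpow_neg hk2.le, Real.rpow_neg h1.le,
          ← Real.sqrt_eq_rpow, ← Real.sqrt_eq_rpow, one_div, mul_inv]


lemma der1 (B x : ℝ) : HasDerivAt (fun x => B * x / (1 + x^2)) (B * (1 - x^2) / (1 + x^2)^2) x := by
  have hne : (1 + x^2) ≠ 0 := by positivity
  have h := ((hasDerivAt_id x).const_mul B).div ((hasDerivAt_pow 2 x).const_add 1) hne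
  refine h.congr_deriv ?_
  simp only [id]
  ring

lemma der2 (B x : ℝ) (hx : 1 - x^2 ≠ 0) :
    HasDerivAt (fun x => B * x / (1 - x^2)) (B * (1 + x^2) / (1 - x^2)^2) x := by
  have h := ((hasDerivAt_id x).const_mul B).div ((hasDerivAt_pow 2 x).const_sub 1) hx
  refine h.congr_deriv ?_
  simp only [id]
  ring

lemma inj1 (B c : ℝ) (hB : 0 < B) (hc : c ≤ 1) : InjOn (fun x => B * x / (1 + x^2)) (Ioo 0 c) := by
  intro x hx y hy h
  simp only at h
  have hnx : (1 + x^2) ≠ 0 := by positivity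
  have hny : (1 + y^2) ≠ 0 := by positivity
  rw [div_eq_div_iff hnx hny] at h
  have key : B * ((x - y) * (1 - x * y)) = 0 := by linear_combination h
  have hxy : x * y < 1 := by nlinarith [hx.1, hx.2, hy.1, hy.2]
  have h2 : (x - y) * (1 - x*y) = 0 := by
    rcases mul_eq_zero.1 key with h' | h'
    · exact absurd h' (ne_of_gt hB)
    · exact h'
  rcases mul_eq_zero.1 h2 with h' | h'
  · linarith [sub_eq_zero.1 h']
  · nlinarith

lemma inj2 (B c : ℝ) (hB : 0 < B) (hc : c ≤ 1) : InjOn (fun x => B * x / (1 - x^2)) (Ioo 0 c) := by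
  intro x hx y hy h
  simp only at h
  have hx2 : x^2 < 1 := by nlinarith [hx.1, hx.2]
  have hy2 : y^2 < 1 := by nlinarith [hy.1, hy.2]
  have hnx : (1 - x^2) ≠ 0 := by nlinarith
  have hny : (1 - y^2) ≠ 0 := by nlinarith
  rw [div_eq_div_iff hnx hny] at h
  have key : B * ((x - y) * (1 + x * y)) = 0 := by linear_combination h
  have hxy : 0 < 1 + x * y := by nlinarith [hx.1, hy.1]
  have h2 : (x - y) * (1 + x*y) = 0 := by
    rcases mul_eq_zero.1 key with h' | h'
    · exact absurd h' (ne_of_gt hB)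
    · exact h'
  rcases mul_eq_zero.1 h2 with h' | h'
  · linarith [sub_eq_zero.1 h']
  · nlinarith

lemma img1 (b : ℝ) (hb : 1 < b) :
    (fun x => (b + 1/b) * x / (1 + x^2)) '' Ioo 0 (1/b) = Ioo 0 1 := by
  have hb0 : (0:ℝ) < b := by linarith
  have hb0' : b ≠ 0 := ne_of_gt hb0
  apply Subset.antisymm
  · rintro _ ⟨x, hx, rfl⟩
    have hbx : x * b < 1 := (lt_div_iff₀ hb0).1 hx.2
    have hxb : x < b := by nlinarith [hx.1]
    constructor
    · have : (0:ℝ) < (b + 1/b) * x := by have := hx.1; positivity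
      positivity
    · rw [div_lt_one (by positivity)]
      have key : 0 < (1 - x*b) * (b - x) := mul_pos (by linarith) (by linarith)
      have hinv : b * (1/b) = 1 := mul_one_div_cancel hb0'
      nlinarith [mul_pos key (one_div_pos.2 hb0)]
  · have hcont : ContinuousOn (fun x => (b + 1/b) * x / (1 + x^2)) (Icc 0 (1/b)) :=
      (Continuous.div ((continuous_const).mul continuous_id) (by continuity)
        (fun x => by positivity)).continuousOn
    have h0 : (fun x => (b + 1/b) * x / (1 + x^2)) 0 = 0 := by simp
    have h1 : (fun x => (b + 1/b) * x / (1 + x^2)) (1/b) = 1 := by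
      have : (1:ℝ) + (1/b)^2 ≠ 0 := by positivity
      field_simp
    have := intermediate_value_Ioo (by positivity : (0:ℝ) ≤ 1/b) hcont
    simp only [mul_zero, zero_div] at this
    rw [show (b + 1/b) * (1/b) / (1 + (1/b)^2) = 1 from h1] at this
    exact this

lemma img2 (b : ℝ) (hb : 1 < b) :
    (fun x => (b - 1/b) * x / (1 - x^2)) '' Ioo 0 (1/b) = Ioo 0 1 := by
  have hb0 : (0:ℝ) < b := by linarith
  have hb0' : b ≠ 0 := ne_of_gt hb0
  have hc1 : (1:ℝ)/b < 1 := by rw [div_lt_one hb0]; linarith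
  have hB'0 : 0 < b - 1/b := by
    rw [sub_pos, div_lt_iff₀ hb0]; nlinarith
  have hden : ∀ x ∈ Icc (0:ℝ) (1/b), (1:ℝ) - x^2 ≠ 0 := by
    intro x hx
    have : x^2 < 1 := by nlinarith [hx.1, hx.2]
    nlinarith
  apply Subset.antisymm
  · rintro _ ⟨x, hx, rfl⟩
    have hbx : x * b < 1 := (lt_div_iff₀ hb0).1 hx.2
    have hx2 : x^2 < 1 := by nlinarith [hx.1, hx.2]
    constructor
    · exact div_pos (mul_pos hB'0 hx.1) (by nlinarith)
    · rw [div_lt_one (by nlinarith)]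
      have key : 0 < (1 - x*b) * (b + x) := mul_pos (by linarith) (by linarith [hx.1])
      nlinarith [mul_pos key (one_div_pos.2 hb0), mul_one_div_cancel hb0']
  · have hcont : ContinuousOn (fun x => (b - 1/b) * x / (1 - x^2)) (Icc 0 (1/b)) := by
      apply ContinuousOn.div ((continuous_const.mul continuous_id).continuousOn)
        (by fun_prop) hden
    have h0 : (fun x => (b - 1/b) * x / (1 - x^2)) 0 = 0 := by simp
    have h1 : (fun x => (b - 1/b) * x / (1 - x^2)) (1/b) = 1 := by
      simp only
      rw [div_eq_one_iff_eq (hden (1/b) (by constructor <;> [positivity; rfl]))]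
      field_simp
    have := intermediate_value_Ioo (by positivity : (0:ℝ) ≤ 1/b) hcont
    simp only [mul_zero, zero_div] at this
    rw [show (b - 1/b) * (1/b) / (1 - (1/b)^2) = 1 from h1] at this
    exact this

set_option maxHeartbeats 1000000 in
lemma pt1 (a b x : ℝ) (ha : 1 < a) (hab : a < b) (hx0 : 0 < x) (hxc : x < 1/b) :
    |(b + 1/b) * (1 - x^2) / (1 + x^2)^2| *
      (1 / Real.sqrt ((1 - ((b + 1/b) * x / (1 + x^2))^2) *
        (1 - (b * (1 + a^2) / (a * (1 + b^2)))^2 * ((b + 1/b) * x / (1 + x^2))^2))) =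
    (b + 1/b) * (1 - x^2) /
      Real.sqrt ((x^2 - a^2) * (x^2 - 1/a^2) * (x^2 - b^2) * (x^2 - 1/b^2)) := by
  have hb0 : (0:ℝ) < b := by linarith
  have ha0 : (0:ℝ) < a := by linarith
  have ha0' : a ≠ 0 := ne_of_gt ha0
  have hb0' : b ≠ 0 := ne_of_gt hb0
  have hbx : x * b < 1 := (lt_div_iff₀ hb0).1 hxc
  have hax : x * a < 1 := by nlinarith
  have hx1 : x < 1 := by nlinarith
  have hQa : 0 < (a^2 - x^2) * (1/a^2 - x^2) := by
    apply mul_pos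
    · nlinarith
    · rw [sub_pos, lt_div_iff₀ (by positivity)]
      nlinarith [mul_pos (sub_pos.2 hax) (show (0:ℝ) < 1 + x*a by positivity)]
  have hQb : 0 < (b^2 - x^2) * (1/b^2 - x^2) := by
    apply mul_pos
    · nlinarith
    · rw [sub_pos, lt_div_iff₀ (by positivity)]
      nlinarith [mul_pos (sub_pos.2 hbx) (show (0:ℝ) < 1 + x*b by positivity)]
  have hne : (1:ℝ) + x^2 ≠ 0 := by positivity
  have hne2 : (1:ℝ) + b^2 ≠ 0 := by positivity
  have key : (1 - ((b + 1/b) * x / (1 + x^2))^2) *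
        (1 - (b * (1 + a^2) / (a * (1 + b^2)))^2 * ((b + 1/b) * x / (1 + x^2))^2) =
      (((b^2 - x^2) * (1/b^2 - x^2)) * ((a^2 - x^2) * (1/a^2 - x^2))) / ((1 + x^2)^2)^2 := by
    field_simp
    ring
  have hS : (x^2 - a^2) * (x^2 - 1/a^2) * (x^2 - b^2) * (x^2 - 1/b^2) =
      ((b^2 - x^2) * (1/b^2 - x^2)) * ((a^2 - x^2) * (1/a^2 - x^2)) := by ring
  rw [key, hS, Real.sqrt_div (by positivity), Real.sqrt_sq (by positivity)]
  have hsq : 0 < Real.sqrt (((b^2 - x^2) * (1/b^2 - x^2)) * ((a^2 - x^2) * (1/a^2 - x^2))) :=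
    Real.sqrt_pos.2 (by positivity)
  have h1x : (0:ℝ) < 1 - x^2 := by nlinarith
  rw [abs_of_nonneg (by positivity : (0:ℝ) ≤ (b + 1/b) * (1 - x^2) / (1 + x^2)^2)]
  rw [one_div_div, div_mul_div_comm,
    mul_comm ((b + 1/b) * (1 - x^2)) ((1 + x^2)^2),
    mul_div_mul_left _ _ (by positivity : ((1:ℝ) + x^2)^2 ≠ 0)]

set_option maxHeartbeats 1000000 in
lemma pt2 (a b x : ℝ) (ha : 1 < a) (hab : a < b) (hx0 : 0 < x) (hxc : x < 1/b) :
    |(b - 1/b) * (1 + x^2) / (1 - x^2)^2| *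
      (1 / Real.sqrt ((1 - ((b - 1/b) * x / (1 - x^2))^2) *
        (1 - (b * (a^2 - 1) / (a * (b^2 - 1)))^2 * ((b - 1/b) * x / (1 - x^2))^2))) =
    (b - 1/b) * (1 + x^2) /
      Real.sqrt ((x^2 - a^2) * (x^2 - 1/a^2) * (x^2 - b^2) * (x^2 - 1/b^2)) := by
  have hb0 : (0:ℝ) < b := by linarith
  have ha0 : (0:ℝ) < a := by linarith
  have ha0' : a ≠ 0 := ne_of_gt ha0
  have hb0' : b ≠ 0 := ne_of_gt hb0
  have hbx : x * b < 1 := (lt_div_iff₀ hb0).1 hxc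
  have hax : x * a < 1 := by nlinarith
  have hx1 : x < 1 := by nlinarith
  have h1x : (0:ℝ) < 1 - x^2 := by nlinarith
  have hne : (1:ℝ) - x^2 ≠ 0 := ne_of_gt h1x
  have hne2 : b^2 - 1 ≠ 0 := by nlinarith
  have hQa : 0 < (a^2 - x^2) * (1/a^2 - x^2) := by
    apply mul_pos
    · nlinarith
    · rw [sub_pos, lt_div_iff₀ (by positivity)]
      nlinarith [mul_pos (sub_pos.2 hax) (show (0:ℝ) < 1 + x*a by positivity)]
  have hQb : 0 < (b^2 - x^2) * (1/b^2 - x^2) := by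
    apply mul_pos
    · nlinarith
    · rw [sub_pos, lt_div_iff₀ (by positivity)]
      nlinarith [mul_pos (sub_pos.2 hbx) (show (0:ℝ) < 1 + x*b by positivity)]
  have key : (1 - ((b - 1/b) * x / (1 - x^2))^2) *
        (1 - (b * (a^2 - 1) / (a * (b^2 - 1)))^2 * ((b - 1/b) * x / (1 - x^2))^2) =
      (((b^2 - x^2) * (1/b^2 - x^2)) * ((a^2 - x^2) * (1/a^2 - x^2))) / ((1 - x^2)^2)^2 := by
    field_simp
    ring
  have hS : (x^2 - a^2) * (x^2 - 1/a^2) * (x^2 - b^2) * (x^2 - 1/b^2) =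
      ((b^2 - x^2) * (1/b^2 - x^2)) * ((a^2 - x^2) * (1/a^2 - x^2)) := by ring
  rw [key, hS, Real.sqrt_div (by positivity), Real.sqrt_sq (by positivity)]
  have hB'0 : 0 < b - 1/b := by
    rw [sub_pos, div_lt_iff₀ hb0]; nlinarith
  rw [abs_of_nonneg (by positivity : (0:ℝ) ≤ (b - 1/b) * (1 + x^2) / (1 - x^2)^2)]
  rw [one_div_div, div_mul_div_comm,
    mul_comm ((b - 1/b) * (1 + x^2)) ((1 - x^2)^2),
    mul_div_mul_left _ _ (by positivity : ((1:ℝ) - x^2)^2 ≠ 0)]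

end Helpers

open MeasureTheory Real Set in
set_option maxHeartbeats 1000000 in
theorem stmt_0 (a b : ℝ) (ha : 1 < a) (hab : a < b) :
    (∫ x in (0:ℝ)..(1/b),
        1 / Real.sqrt ((x^2 - a^2) * (x^2 - 1/a^2) * (x^2 - b^2) * (x^2 - 1/b^2))) =
      (1/2) * ((b / (1 + b^2)) * ellipticK (b * (1 + a^2) / (a * (1 + b^2))) +
        (b / (b^2 - 1)) * ellipticK (b * (a^2 - 1) / (a * (b^2 - 1)))) := by
  have ha0 : (0:ℝ) < a := by linarith
  have hb1 : (1:ℝ) < b := by linarith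
  have hb0 : (0:ℝ) < b := by linarith
  have ha0' : a ≠ 0 := ne_of_gt ha0
  have hb0' : b ≠ 0 := ne_of_gt hb0
  have hc0 : (0:ℝ) < 1/b := by positivity
  have hc1 : (1:ℝ)/b ≤ 1 := by rw [div_le_one hb0]; linarith
  have hB0 : (0:ℝ) < b + 1/b := by positivity
  have hB'0 : (0:ℝ) < b - 1/b := by
    rw [sub_pos, div_lt_iff₀ hb0]; nlinarith
  have hk₁0 : 0 ≤ b * (1 + a^2) / (a * (1 + b^2)) := by positivity
  have hk₁1 : b * (1 + a^2) / (a * (1 + b^2)) < 1 := by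
    rw [div_lt_one (by positivity)]
    nlinarith [mul_pos (sub_pos.2 hab) (by nlinarith : (0:ℝ) < a*b - 1)]
  have hk₂0 : 0 ≤ b * (a^2 - 1) / (a * (b^2 - 1)) := by
    apply div_nonneg
    · nlinarith [mul_pos hb0 (show (0:ℝ) < a^2 - 1 by nlinarith)]
    · nlinarith [mul_pos ha0 (show (0:ℝ) < b^2 - 1 by nlinarith)]
  have hk₂1 : b * (a^2 - 1) / (a * (b^2 - 1)) < 1 := by
    rw [div_lt_one (by nlinarith)]
    nlinarith [mul_pos (sub_pos.2 hab) (by nlinarith : (0:ℝ) < a*b + 1)]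
  -- derivative hypotheses within the interval
  have hd1 : ∀ x ∈ Ioo (0:ℝ) (1/b),
      HasDerivWithinAt (fun x => (b + 1/b) * x / (1 + x^2))
        ((fun x => (b + 1/b) * (1 - x^2) / (1 + x^2)^2) x) (Ioo (0:ℝ) (1/b)) x :=
    fun x _ => (der1 (b + 1/b) x).hasDerivWithinAt
  have hd2 : ∀ x ∈ Ioo (0:ℝ) (1/b),
      HasDerivWithinAt (fun x => (b - 1/b) * x / (1 - x^2))
        ((fun x => (b - 1/b) * (1 + x^2) / (1 - x^2)^2) x) (Ioo (0:ℝ) (1/b)) x := by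
    intro x hx
    have hx2 : x^2 < 1 := by nlinarith [hx.1, hx.2, (lt_div_iff₀ hb0).1 hx.2]
    exact (der2 (b - 1/b) x (by nlinarith)).hasDerivWithinAt
  -- the two elliptic integrand functions
  set g₁ : ℝ → ℝ := fun t => 1 / Real.sqrt ((1 - t^2) *
    (1 - (b * (1 + a^2) / (a * (1 + b^2)))^2 * t^2)) with hg₁
  set g₂ : ℝ → ℝ := fun t => 1 / Real.sqrt ((1 - t^2) *
    (1 - (b * (a^2 - 1) / (a * (b^2 - 1)))^2 * t^2)) with hg₂
  -- substitution identities
  have sub1 : (∫ t in Ioo (0:ℝ) 1, g₁ t) =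
      ∫ x in Ioo (0:ℝ) (1/b), |(b + 1/b) * (1 - x^2) / (1 + x^2)^2| *
        g₁ ((b + 1/b) * x / (1 + x^2)) := by
    rw [← img1 b hb1,
      integral_image_eq_integral_abs_deriv_smul measurableSet_Ioo hd1 (inj1 _ _ hB0 hc1) g₁]
    simp [smul_eq_mul]
  have sub2 : (∫ t in Ioo (0:ℝ) 1, g₂ t) =
      ∫ x in Ioo (0:ℝ) (1/b), |(b - 1/b) * (1 + x^2) / (1 - x^2)^2| *
        g₂ ((b - 1/b) * x / (1 - x^2)) := by
    rw [← img2 b hb1,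
      integral_image_eq_integral_abs_deriv_smul measurableSet_Ioo hd2 (inj2 _ _ hB'0 hc1) g₂]
    simp [smul_eq_mul]
  -- integrability of the substituted integrands
  have int1 : IntegrableOn (fun x => |(b + 1/b) * (1 - x^2) / (1 + x^2)^2| *
      g₁ ((b + 1/b) * x / (1 + x^2))) (Ioo (0:ℝ) (1/b)) := by
    have h := (integrableOn_image_iff_integrableOn_abs_deriv_smul measurableSet_Ioo hd1
      (inj1 _ _ hB0 hc1) g₁).1 (by rw [img1 b hb1]; exact intK hk₁0 hk₁1)
    simpa [smul_eq_mul] using h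
  have int2 : IntegrableOn (fun x => |(b - 1/b) * (1 + x^2) / (1 - x^2)^2| *
      g₂ ((b - 1/b) * x / (1 - x^2))) (Ioo (0:ℝ) (1/b)) := by
    have h := (integrableOn_image_iff_integrableOn_abs_deriv_smul measurableSet_Ioo hd2
      (inj2 _ _ hB'0 hc1) g₂).1 (by rw [img2 b hb1]; exact intK hk₂0 hk₂1)
    simpa [smul_eq_mul] using h
  -- rewrite everything as Ioo integrals
  rw [intervalIntegral.integral_of_le hc0.le, integral_Ioc_eq_integral_Ioo]
  rw [ellipticK, ellipticK, intervalIntegral.integral_of_le zero_le_one,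
    intervalIntegral.integral_of_le zero_le_one,
    integral_Ioc_eq_integral_Ioo, integral_Ioc_eq_integral_Ioo]
  have hgg₁ : (∫ t in Ioo (0:ℝ) 1,
      1 / Real.sqrt ((1 - t ^ 2) * (1 - (b * (1 + a^2) / (a * (1 + b^2))) ^ 2 * t ^ 2))) =
      ∫ t in Ioo (0:ℝ) 1, g₁ t := by rfl
  have hgg₂ : (∫ t in Ioo (0:ℝ) 1,
      1 / Real.sqrt ((1 - t ^ 2) * (1 - (b * (a^2 - 1) / (a * (b^2 - 1))) ^ 2 * t ^ 2))) =
      ∫ t in Ioo (0:ℝ) 1, g₂ t := by rfl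
  rw [hgg₁, hgg₂, sub1, sub2]
  -- pointwise identity
  have hpt : EqOn
      (fun x => 1 / Real.sqrt ((x^2 - a^2) * (x^2 - 1/a^2) * (x^2 - b^2) * (x^2 - 1/b^2)))
      (fun x => (1/2) * ((b / (1 + b^2)) * (|(b + 1/b) * (1 - x^2) / (1 + x^2)^2| *
          g₁ ((b + 1/b) * x / (1 + x^2))) +
        (b / (b^2 - 1)) * (|(b - 1/b) * (1 + x^2) / (1 - x^2)^2| *
          g₂ ((b - 1/b) * x / (1 - x^2))))) (Ioo (0:ℝ) (1/b)) := by
    intro x hx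
    simp only
    rw [hg₁, hg₂]
    rw [pt1 a b x ha hab hx.1 hx.2, pt2 a b x ha hab hx.1 hx.2]
    have hbx : x * b < 1 := (lt_div_iff₀ hb0).1 hx.2
    have hax : x * a < 1 := by nlinarith [hx.1]
    have hQa : 0 < (a^2 - x^2) * (1/a^2 - x^2) := by
      apply mul_pos
      · nlinarith [hx.1]
      · rw [sub_pos, lt_div_iff₀ (by positivity)]
        nlinarith [mul_pos (sub_pos.2 hax) (show (0:ℝ) < 1 + x*a by nlinarith [hx.1])]
    have hQb : 0 < (b^2 - x^2) * (1/b^2 - x^2) := by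
      apply mul_pos
      · nlinarith [hx.1]
      · rw [sub_pos, lt_div_iff₀ (by positivity)]
        nlinarith [mul_pos (sub_pos.2 hbx) (show (0:ℝ) < 1 + x*b by nlinarith [hx.1])]
    have hP : 0 < (x^2 - a^2) * (x^2 - 1/a^2) * (x^2 - b^2) * (x^2 - 1/b^2) := by
      have : (x^2 - a^2) * (x^2 - 1/a^2) * (x^2 - b^2) * (x^2 - 1/b^2) =
        ((b^2 - x^2) * (1/b^2 - x^2)) * ((a^2 - x^2) * (1/a^2 - x^2)) := by ring
      rw [this]; exact mul_pos hQb hQa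
    have hs : Real.sqrt ((x^2 - a^2) * (x^2 - 1/a^2) * (x^2 - b^2) * (x^2 - 1/b^2)) ≠ 0 :=
      ne_of_gt (Real.sqrt_pos.2 hP)
    have e1 : b / (1 + b^2) * ((b + 1/b) * (1 - x^2) /
        Real.sqrt ((x^2 - a^2) * (x^2 - 1/a^2) * (x^2 - b^2) * (x^2 - 1/b^2))) =
        (1 - x^2) / Real.sqrt ((x^2 - a^2) * (x^2 - 1/a^2) * (x^2 - b^2) * (x^2 - 1/b^2)) := by
      rw [mul_div_assoc']
      congr 1
      field_simp
      ring
    have e2 : b / (b^2 - 1) * ((b - 1/b) * (1 + x^2) /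
        Real.sqrt ((x^2 - a^2) * (x^2 - 1/a^2) * (x^2 - b^2) * (x^2 - 1/b^2))) =
        (1 + x^2) / Real.sqrt ((x^2 - a^2) * (x^2 - 1/a^2) * (x^2 - b^2) * (x^2 - 1/b^2)) := by
      rw [mul_div_assoc']
      congr 1
      have hb21 : b^2 - 1 ≠ 0 := by nlinarith
      field_simp
    rw [e1, e2, ← add_div]
    rw [show (1 - x^2) + (1 + x^2) = 2 by ring]
    ring
  rw [setIntegral_congr_fun measurableSet_Ioo hpt]
  rw [integral_const_mul, integral_add (int1.const_mul _) (int2.const_mul _),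
    integral_const_mul, integral_const_mul]
end

section
/- Let a, b be real numbers with 1 < a < b. Then π = ( (b²/(b²+1))·K( (a²+1)b/((b²+1)a) ) + (b²/(b²−1))·K( (a²−1)b/((b²−1)a) ) ) / F_D^(3)(1/2; 1/2,1/2,1/2; 1 | a²/b², 1/(a²b²), 1/b⁴). -/
open MeasureTheory Real

lemma one_sub_mul_pos {x u : ℝ} (hx0 : 0 ≤ x) (hx1 : x < 1) (hu0 : 0 ≤ u)
    (hu1 : u ≤ 1) : 0 < 1 - x*u := by nlinarith

lemma sq_lt_one'' {k : ℝ} (h0 : 0 ≤ k) (h1 : k < 1) : k^2 < 1 := by nlinarith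

noncomputable def Kio (k : ℝ) : ℝ :=
  ∫ t in Set.Ioo (0:ℝ) 1, (Real.sqrt ((1 - t ^ 2) * (1 - k ^ 2 * t ^ 2)))⁻¹

lemma fact_pos {k t : ℝ} (hk : k ^ 2 < 1) (ht : t ∈ Set.Ioo (0:ℝ) 1) :
    0 < (1 - t ^ 2) * (1 - k ^ 2 * t ^ 2) := by
  obtain ⟨ht0, ht1⟩ := ht
  have h1 : 0 < 1 - t ^ 2 := by nlinarith
  have h2 : 0 < 1 - k ^ 2 * t ^ 2 := by nlinarith [sq_nonneg k, sq_nonneg t, sq_nonneg (k*t)]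
  exact mul_pos h1 h2

lemma gIntegrable {k : ℝ} (hk : k ^ 2 < 1) :
    IntegrableOn (fun t => (Real.sqrt ((1 - t ^ 2) * (1 - k ^ 2 * t ^ 2)))⁻¹)
      (Set.Ioo (0:ℝ) 1) := by
  have hb : IntegrableOn
      (fun t : ℝ => (Real.sqrt (1 - k ^ 2))⁻¹ * ((1 - t) ^ (-(1/2) : ℝ)))
      (Set.Ioo (0:ℝ) 1) := by
    have h1 : IntervalIntegrable (fun x : ℝ => x ^ (-(1/2) : ℝ)) volume 0 1 :=
      intervalIntegral.intervalIntegrable_rpow' (by norm_num)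
    have h2 := h1.comp_sub_left 1
    simp only [sub_zero, sub_self] at h2
    have h3 : IntervalIntegrable (fun x : ℝ => (1 - x) ^ (-(1/2) : ℝ)) volume 0 1 := h2.symm
    have h4 := (intervalIntegrable_iff_integrableOn_Ioc_of_le zero_le_one).mp h3
    exact (h4.mono_set Set.Ioo_subset_Ioc_self).const_mul _
  apply hb.mono'
  · apply ContinuousOn.aestronglyMeasurable _ measurableSet_Ioo
    apply ContinuousOn.inv₀
    · exact (Real.continuous_sqrt.comp (by continuity)).continuousOn
    · intro t ht
      exact (Real.sqrt_pos.mpr (fact_pos hk ht)).ne'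
  · filter_upwards [self_mem_ae_restrict measurableSet_Ioo] with t ht
    obtain ⟨ht0, ht1⟩ := ht
    have hk0 : (0:ℝ) ≤ 1 - k ^ 2 := by linarith
    have ht1' : (0:ℝ) ≤ 1 - t := by linarith
    rw [Real.rpow_neg ht1', ← Real.sqrt_eq_rpow]
    rw [Real.norm_eq_abs, abs_of_nonneg (by positivity)]
    rw [← mul_inv, ← Real.sqrt_mul hk0]
    apply inv_anti₀
    · apply Real.sqrt_pos.mpr
      nlinarith
    · apply Real.sqrt_le_sqrt
      have h1 : (0:ℝ) ≤ 1 - k ^ 2 * t ^ 2 := by nlinarith [sq_nonneg k, sq_nonneg t]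
      have h2 : (0:ℝ) ≤ 1 - t ^ 2 := by nlinarith
      nlinarith [mul_nonneg ht1' (add_nonneg (mul_nonneg ht0.le h1)
        (mul_nonneg (sq_nonneg k) h2))]

lemma ellipticK_eq_Kio (k : ℝ) : ellipticK k = Kio k := by
  rw [ellipticK, Kio, intervalIntegral.integral_of_le zero_le_one,
    MeasureTheory.integral_Ioc_eq_integral_Ioo]
  simp [one_div]

lemma Kio_pos {k : ℝ} (hk : k ^ 2 < 1) : 0 < Kio k := by
  rw [Kio, setIntegral_pos_iff_support_of_nonneg_ae]
  · refine lt_of_lt_of_le (b := volume (Set.Ioo (0:ℝ) 1)) ?_ (measure_mono ?_)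
    · rw [Real.volume_Ioo]
      norm_num
    · intro t ht
      refine ⟨?_, ht⟩
      show (Real.sqrt ((1 - t ^ 2) * (1 - k ^ 2 * t ^ 2)))⁻¹ ≠ 0
      exact (inv_pos.mpr (Real.sqrt_pos.mpr (fact_pos hk ht))).ne'
  · filter_upwards with t
    positivity
  · exact gIntegrable hk

set_option maxHeartbeats 1000000 in
lemma main_aux {l m : ℝ} (hm0 : 0 < m) (hml : m < l) (hl1 : l < 1) :
    (∫ s in Set.Ioo (0:ℝ) 1,
        2 * (Real.sqrt ((1 - s ^ 2) * (1 - (l*m) ^ 2 * s ^ 2) *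
          ((1 - l ^ 2 * s ^ 2) * (1 - m ^ 2 * s ^ 2))))⁻¹)
    = (1/(1+l*m)) * Kio ((l+m)/(1+l*m)) + (1/(1-l*m)) * Kio ((l-m)/(1-l*m)) := by
  have hl0 : 0 < l := hm0.trans hml
  have hm1 : m < 1 := hml.trans hl1
  have hc0 : 0 < l * m := mul_pos hl0 hm0
  have hc1 : l * m < 1 := by nlinarith
  set c := l * m with hcdef
  have hkp1 : (l+m)/(1+c) < 1 := by
    rw [div_lt_one (by linarith)]; nlinarith
  have hkp0 : 0 < (l+m)/(1+c) := by positivity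
  have hkm1 : (l-m)/(1-c) < 1 := by
    rw [div_lt_one (by linarith)]; nlinarith
  have hkm0 : 0 < (l-m)/(1-c) := div_pos (by linarith) (by linarith)
  set kp := (l+m)/(1+c) with hkpdef
  set km := (l-m)/(1-c) with hkmdef
  have hkp2 : kp ^ 2 < 1 := sq_lt_one'' hkp0.le hkp1
  have hkm2 : km ^ 2 < 1 := sq_lt_one'' hkm0.le hkm1
  set F : ℝ → ℝ := fun s => (1+c)*s/(1+c*s^2) with hFdef
  set G : ℝ → ℝ := fun s => (1-c)*s/(1-c*s^2) with hGdef
  set F' : ℝ → ℝ := fun s => (1+c)*(1-c*s^2)/(1+c*s^2)^2 with hF'def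
  set G' : ℝ → ℝ := fun s => (1-c)*(1+c*s^2)/(1-c*s^2)^2 with hG'def
  have hdenF : ∀ s : ℝ, 0 < 1 + c*s^2 := fun s => by positivity
  have hdenG : ∀ s ∈ Set.Icc (0:ℝ) 1, 0 < 1 - c*s^2 := by
    intro s hs
    have h1 := hs.1; have h2 := hs.2
    have hs2 : s^2 ≤ 1 := by nlinarith
    nlinarith [mul_le_of_le_one_right hc0.le hs2]
  have hFmono : StrictMonoOn F (Set.Icc (0:ℝ) 1) := by
    intro x hx y hy hxy
    show (1+c)*x/(1+c*x^2) < (1+c)*y/(1+c*y^2)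
    rw [div_lt_div_iff₀ (hdenF x) (hdenF y)]
    have hxy1 : x*y ≤ 1 := mul_le_one₀ hx.2 hy.1 hy.2
    have h1 : 0 < 1 - c*(x*y) := by nlinarith [mul_le_of_le_one_right hc0.le hxy1]
    have h2 := mul_pos (sub_pos.2 hxy) h1
    nlinarith [h2, mul_pos hc0 h2]
  have hGmono : StrictMonoOn G (Set.Icc (0:ℝ) 1) := by
    intro x hx y hy hxy
    show (1-c)*x/(1-c*x^2) < (1-c)*y/(1-c*y^2)
    rw [div_lt_div_iff₀ (hdenG x hx) (hdenG y hy)]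
    have h1 : 0 < 1 + c*(x*y) := by nlinarith [mul_nonneg hx.1 hy.1, mul_nonneg hc0.le (mul_nonneg hx.1 hy.1)]
    have h2 := mul_pos (sub_pos.2 hxy) h1
    nlinarith [h2, mul_pos hc0 h2]
  have hF0 : F 0 = 0 := by simp [hFdef]
  have hF1 : F 1 = 1 := by
    show (1+c)*1/(1+c*1^2) = 1
    rw [div_eq_one_iff_eq (by positivity)]; ring
  have hG0 : G 0 = 0 := by simp [hGdef]
  have hG1 : G 1 = 1 := by
    show (1-c)*1/(1-c*1^2) = 1
    rw [div_eq_one_iff_eq (by nlinarith)]; ring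
  have hFcont : ContinuousOn F (Set.Icc (0:ℝ) 1) := by
    rw [hFdef]
    apply ContinuousOn.div
    · exact (continuous_const.mul continuous_id).continuousOn
    · exact (continuous_const.add (continuous_const.mul (continuous_pow 2))).continuousOn
    · intro s _; exact (hdenF s).ne'
  have hGcont : ContinuousOn G (Set.Icc (0:ℝ) 1) := by
    rw [hGdef]
    apply ContinuousOn.div
    · exact (continuous_const.mul continuous_id).continuousOn
    · exact (continuous_const.sub (continuous_const.mul (continuous_pow 2))).continuousOn
    · intro s hs; exact (hdenG s hs).ne'
  have hFimage : F '' Set.Ioo 0 1 = Set.Ioo (0:ℝ) 1 := by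
    apply Set.Subset.antisymm
    · rintro _ ⟨s, hs, rfl⟩
      have h0 : F 0 < F s :=
        hFmono (Set.left_mem_Icc.2 zero_le_one) (Set.Ioo_subset_Icc_self hs) hs.1
      have h1 : F s < F 1 :=
        hFmono (Set.Ioo_subset_Icc_self hs) (Set.right_mem_Icc.2 zero_le_one) hs.2
      rw [hF0] at h0; rw [hF1] at h1
      exact ⟨h0, h1⟩
    · have := intermediate_value_Ioo zero_le_one hFcont
      rw [hF0, hF1] at this
      exact this
  have hGimage : G '' Set.Ioo 0 1 = Set.Ioo (0:ℝ) 1 := by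
    apply Set.Subset.antisymm
    · rintro _ ⟨s, hs, rfl⟩
      have h0 : G 0 < G s :=
        hGmono (Set.left_mem_Icc.2 zero_le_one) (Set.Ioo_subset_Icc_self hs) hs.1
      have h1 : G s < G 1 :=
        hGmono (Set.Ioo_subset_Icc_self hs) (Set.right_mem_Icc.2 zero_le_one) hs.2
      rw [hG0] at h0; rw [hG1] at h1
      exact ⟨h0, h1⟩
    · have := intermediate_value_Ioo zero_le_one hGcont
      rw [hG0, hG1] at this
      exact this
  have hFinj : Set.InjOn F (Set.Ioo 0 1) := (hFmono.injOn).mono Set.Ioo_subset_Icc_self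
  have hGinj : Set.InjOn G (Set.Ioo 0 1) := (hGmono.injOn).mono Set.Ioo_subset_Icc_self
  have hFderiv : ∀ s ∈ Set.Ioo (0:ℝ) 1, HasDerivWithinAt F (F' s) (Set.Ioo 0 1) s := by
    intro s _
    have h1 : HasDerivAt (fun x : ℝ => (1+c)*x) (1+c) s := by
      simpa using (hasDerivAt_id s).const_mul (1+c)
    have h2 : HasDerivAt (fun x : ℝ => 1+c*x^2) (c*(2*s^1)) s := by
      have := ((hasDerivAt_pow 2 s).const_mul c).const_add 1
      simpa using this
    have h3 := h1.div h2 (hdenF s).ne'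
    have h4 : ((1+c)*(1+c*s^2) - (1+c)*s*(c*(2*s^1)))/(1+c*s^2)^2 = F' s := by
      simp only [hF'def]
      congr 1
      ring
    rw [h4] at h3
    exact h3.hasDerivWithinAt
  have hGderiv : ∀ s ∈ Set.Ioo (0:ℝ) 1, HasDerivWithinAt G (G' s) (Set.Ioo 0 1) s := by
    intro s hs
    have h1 : HasDerivAt (fun x : ℝ => (1-c)*x) (1-c) s := by
      simpa using (hasDerivAt_id s).const_mul (1-c)
    have h2 : HasDerivAt (fun x : ℝ => 1-c*x^2) (-(c*(2*s^1))) s := by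
      have := (((hasDerivAt_pow 2 s).const_mul c).neg).const_add 1
      simpa [sub_eq_add_neg] using this
    have h3 := h1.div h2 (hdenG s (Set.Ioo_subset_Icc_self hs)).ne'
    have h4 : ((1-c)*(1-c*s^2) - (1-c)*s*(-(c*(2*s^1))))/(1-c*s^2)^2 = G' s := by
      simp only [hG'def]
      congr 1
      ring
    rw [h4] at h3
    exact h3.hasDerivWithinAt
  have hKp : Kio kp = ∫ s in Set.Ioo (0:ℝ) 1,
      |F' s| • (Real.sqrt ((1 - F s ^ 2) * (1 - kp ^ 2 * F s ^ 2)))⁻¹ := by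
    rw [Kio]
    conv_lhs => rw [← hFimage]
    exact integral_image_eq_integral_abs_deriv_smul measurableSet_Ioo hFderiv hFinj _
  have hKm : Kio km = ∫ s in Set.Ioo (0:ℝ) 1,
      |G' s| • (Real.sqrt ((1 - G s ^ 2) * (1 - km ^ 2 * G s ^ 2)))⁻¹ := by
    rw [Kio]
    conv_lhs => rw [← hGimage]
    exact integral_image_eq_integral_abs_deriv_smul measurableSet_Ioo hGderiv hGinj _
  have hIp : IntegrableOn (fun s =>
      |F' s| • (Real.sqrt ((1 - F s ^ 2) * (1 - kp ^ 2 * F s ^ 2)))⁻¹) (Set.Ioo (0:ℝ) 1) := by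
    refine (integrableOn_image_iff_integrableOn_abs_deriv_smul measurableSet_Ioo hFderiv hFinj
      (fun t => (Real.sqrt ((1 - t ^ 2) * (1 - kp ^ 2 * t ^ 2)))⁻¹)).mp ?_
    rw [hFimage]
    exact gIntegrable hkp2
  have hIm : IntegrableOn (fun s =>
      |G' s| • (Real.sqrt ((1 - G s ^ 2) * (1 - km ^ 2 * G s ^ 2)))⁻¹) (Set.Ioo (0:ℝ) 1) := by
    refine (integrableOn_image_iff_integrableOn_abs_deriv_smul measurableSet_Ioo hGderiv hGinj
      (fun t => (Real.sqrt ((1 - t ^ 2) * (1 - km ^ 2 * t ^ 2)))⁻¹)).mp ?_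
    rw [hGimage]
    exact gIntegrable hkm2
  rw [hKp, hKm, ← MeasureTheory.integral_const_mul, ← MeasureTheory.integral_const_mul,
    ← MeasureTheory.integral_add (hIp.const_mul _) (hIm.const_mul _)]
  apply setIntegral_congr_fun measurableSet_Ioo
  intro s hs
  obtain ⟨hs0, hs1⟩ := hs
  have hq : 0 < 1 + c*s^2 := hdenF s
  have hr : 0 < 1 - c*s^2 := hdenG s ⟨hs0.le, hs1.le⟩
  have hss : s^2 ≤ 1 := by
    have := mul_le_one₀ hs1.le hs0.le hs1.le
    calc s^2 = s*s := sq s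
      _ ≤ 1 := this
  have hP1 : 0 < 1 - s^2 := by rw [sq]; exact one_sub_mul_pos hs0.le hs1 hs0.le hs1.le
  have hP2 : 0 < 1 - c^2*s^2 :=
    one_sub_mul_pos (sq_nonneg c) (sq_lt_one'' hc0.le hc1) (sq_nonneg s) hss
  have hP3 : 0 < 1 - l^2*s^2 :=
    one_sub_mul_pos (sq_nonneg l) (sq_lt_one'' hl0.le hl1) (sq_nonneg s) hss
  have hP4 : 0 < 1 - m^2*s^2 :=
    one_sub_mul_pos (sq_nonneg m) (sq_lt_one'' hm0.le hm1) (sq_nonneg s) hss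
  have hP : 0 < (1 - s ^ 2) * (1 - c ^ 2 * s ^ 2) *
      ((1 - l ^ 2 * s ^ 2) * (1 - m ^ 2 * s ^ 2)) := by positivity
  have hsP : 0 < Real.sqrt ((1 - s ^ 2) * (1 - c ^ 2 * s ^ 2) *
      ((1 - l ^ 2 * s ^ 2) * (1 - m ^ 2 * s ^ 2))) := Real.sqrt_pos.2 hP
  have hFs : |F' s| = F' s := abs_of_pos (by
    simp only [hF'def]
    exact div_pos (mul_pos (by linarith) hr) (pow_pos hq 2))
  have hGs : |G' s| = G' s := abs_of_pos (by
    simp only [hG'def]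
    exact div_pos (mul_pos (by linarith) hq) (pow_pos hr 2))
  have hfp : (1 - F s ^ 2) * (1 - kp ^ 2 * F s ^ 2) =
      ((1 - s ^ 2) * (1 - c ^ 2 * s ^ 2) * ((1 - l ^ 2 * s ^ 2) * (1 - m ^ 2 * s ^ 2))) /
        ((1 + c*s^2) ^ 2) ^ 2 := by
    simp only [hFdef, hkpdef]
    rw [hcdef]
    have h1 : (1 + l*m*s^2) ≠ 0 := by positivity
    have h2 : (1 + l*m) ≠ 0 := by positivity
    field_simp
    ring
  have hfm : (1 - G s ^ 2) * (1 - km ^ 2 * G s ^ 2) =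
      ((1 - s ^ 2) * (1 - c ^ 2 * s ^ 2) * ((1 - l ^ 2 * s ^ 2) * (1 - m ^ 2 * s ^ 2))) /
        ((1 - c*s^2) ^ 2) ^ 2 := by
    simp only [hGdef, hkmdef]
    have hr1 : (1 - c*s^2) ≠ 0 := hr.ne'
    have hc1' : (1 - c) ≠ 0 := (sub_pos.2 hc1).ne'
    rw [hcdef] at hr1 hc1' ⊢
    field_simp
    ring
  have hsqp : Real.sqrt ((1 - F s ^ 2) * (1 - kp ^ 2 * F s ^ 2)) =
      Real.sqrt ((1 - s ^ 2) * (1 - c ^ 2 * s ^ 2) *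
        ((1 - l ^ 2 * s ^ 2) * (1 - m ^ 2 * s ^ 2))) / (1 + c*s^2) ^ 2 := by
    rw [hfp, Real.sqrt_div hP.le, Real.sqrt_sq (by positivity)]
  have hsqm : Real.sqrt ((1 - G s ^ 2) * (1 - km ^ 2 * G s ^ 2)) =
      Real.sqrt ((1 - s ^ 2) * (1 - c ^ 2 * s ^ 2) *
        ((1 - l ^ 2 * s ^ 2) * (1 - m ^ 2 * s ^ 2))) / (1 - c*s^2) ^ 2 := by
    rw [hfm, Real.sqrt_div hP.le, Real.sqrt_sq (by positivity)]
  simp only [smul_eq_mul]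
  rw [hFs, hGs, hsqp, hsqm]
  simp only [hF'def, hG'def]
  set Q := Real.sqrt ((1 - s ^ 2) * (1 - c ^ 2 * s ^ 2) *
      ((1 - l ^ 2 * s ^ 2) * (1 - m ^ 2 * s ^ 2))) with hQdef
  have e1 : (1:ℝ) + c ≠ 0 := by positivity
  have e2 : (1:ℝ) - c ≠ 0 := (sub_pos.2 hc1).ne'
  have e3 : (1:ℝ) + c*s^2 ≠ 0 := hq.ne'
  have e4 : (1:ℝ) - c*s^2 ≠ 0 := hr.ne'
  have e5 : Q ≠ 0 := hsP.ne'
  rw [inv_div, inv_div]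
  field_simp
  ring

set_option maxHeartbeats 1600000 in
theorem stmt_1 (a b : ℝ) (ha : 1 < a) (hab : a < b) :
    π = ((b^2 / (b^2 + 1)) * ellipticK ((a^2 + 1) * b / ((b^2 + 1) * a)) +
          (b^2 / (b^2 - 1)) * ellipticK ((a^2 - 1) * b / ((b^2 - 1) * a))) /
        FD3 (1/2) (1/2) (1/2) (1/2) 1 (a^2/b^2) (1/(a^2*b^2)) (1/b^4) := by
  have hb1 : 1 < b := ha.trans hab
  have ha0 : 0 < a := by linarith
  have hb0 : 0 < b := by linarith
  have hab1 : 1 < a*b := by nlinarith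
  have hm0 : 0 < 1/(a*b) := by positivity
  have hml : 1/(a*b) < a/b := by
    rw [div_lt_div_iff₀ (by positivity) hb0]
    nlinarith
  have hl1 : a/b < 1 := by rw [div_lt_one hb0]; exact hab
  have key := main_aux hm0 hml hl1
  have harg1 : ((a/b)+(1/(a*b)))/(1+(a/b)*(1/(a*b))) = (a^2+1)*b/((b^2+1)*a) := by
    rw [div_eq_div_iff (by positivity) (by positivity)]
    field_simp
  have hbm1 : (0:ℝ) < 1 - (a/b)*(1/(a*b)) := by
    have : (a/b)*(1/(a*b)) = 1/b^2 := by field_simp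
    rw [this]
    rw [sub_pos, div_lt_one (by positivity)]
    nlinarith
  have harg2 : ((a/b)-(1/(a*b)))/(1-(a/b)*(1/(a*b))) = (a^2-1)*b/((b^2-1)*a) := by
    rw [div_eq_div_iff hbm1.ne' (ne_of_gt (by nlinarith : (0:ℝ) < (b^2-1)*a))]
    · field_simp
  have hco1 : 1/(1+(a/b)*(1/(a*b))) = b^2/(b^2+1) := by
    rw [div_eq_div_iff (by positivity) (by positivity)]
    field_simp
  have hco2 : 1/(1-(a/b)*(1/(a*b))) = b^2/(b^2-1) := by
    rw [div_eq_div_iff hbm1.ne' (ne_of_gt (by nlinarith : (0:ℝ) < (b^2:ℝ)-1))]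
    · field_simp
  rw [harg1, harg2, hco1, hco2] at key
  -- FD3 evaluation
  have hrp : ∀ x : ℝ, 0 < x → x ^ (-(1/2) : ℝ) = (Real.sqrt x)⁻¹ := by
    intro x hx
    rw [Real.rpow_neg hx.le, Real.sqrt_eq_rpow]
  have hrp1 : ∀ x : ℝ, 0 < x → x ^ ((1:ℝ)/2 - 1) = (Real.sqrt x)⁻¹ := by
    intro x hx
    rw [show ((1:ℝ)/2 - 1) = -(1/2) by norm_num]
    exact hrp x hx
  have hrp2 : ∀ x : ℝ, 0 < x → x ^ ((1:ℝ) - 1/2 - 1) = (Real.sqrt x)⁻¹ := by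
    intro x hx
    rw [show ((1:ℝ) - 1/2 - 1) = -(1/2) by norm_num]
    exact hrp x hx
  have hargS : ∀ s : ℝ, s^2 * ((1-s^2) * ((1 - a^2/b^2*s^2) *
        ((1 - 1/(a^2*b^2)*s^2) * (1 - 1/b^4*s^2))))
      = s^2 * ((1 - s ^ 2) * (1 - ((a/b)*(1/(a*b))) ^ 2 * s ^ 2) *
          ((1 - (a/b) ^ 2 * s ^ 2) * (1 - (1/(a*b)) ^ 2 * s ^ 2))) := by
    intro s
    field_simp
  have isq : ∀ x y : ℝ, 0 ≤ x → (Real.sqrt (x*y))⁻¹ = (Real.sqrt x)⁻¹ * (Real.sqrt y)⁻¹ := by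
    intro x y hx
    rw [Real.sqrt_mul hx, mul_inv]
  have hpre : Real.Gamma 1 / (Real.Gamma (1/2) * Real.Gamma (1 - 1/2)) = π⁻¹ := by
    rw [show (1:ℝ) - 1/2 = 1/2 by norm_num, Real.Gamma_one, Real.Gamma_one_half_eq,
      Real.mul_self_sqrt Real.pi_pos.le, one_div]
  have hx1 : a^2/b^2 < 1 := by rw [div_lt_one (by positivity)]; nlinarith
  have hx2 : 1/(a^2*b^2) < 1 := by
    rw [div_lt_one (by positivity)]
    nlinarith [mul_lt_mul'' hab1 hab1 zero_le_one zero_le_one]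
  have hx3 : 1/b^4 < 1 := by
    rw [div_lt_one (by positivity)]
    have hb2 : 1 < b^2 := by nlinarith
    nlinarith [mul_lt_mul'' hb2 hb2 zero_le_one zero_le_one]
  have hint1 : (∫ u in (0:ℝ)..1, u ^ ((1:ℝ)/2 - 1) * (1 - u) ^ ((1:ℝ) - 1/2 - 1) *
        (1 - a^2/b^2 * u) ^ (-(1/2):ℝ) * (1 - 1/(a^2*b^2) * u) ^ (-(1/2):ℝ) *
        (1 - 1/b^4 * u) ^ (-(1/2):ℝ))
      = ∫ u in Set.Ioo (0:ℝ) 1, (Real.sqrt (u * ((1-u) * ((1 - a^2/b^2*u) *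
          ((1 - 1/(a^2*b^2)*u) * (1 - 1/b^4*u))))))⁻¹ := by
    rw [intervalIntegral.integral_of_le zero_le_one, MeasureTheory.integral_Ioc_eq_integral_Ioo]
    apply setIntegral_congr_fun measurableSet_Ioo
    intro u hu
    obtain ⟨hu0, hu1⟩ := hu
    beta_reduce
    have e1 : (0:ℝ) < 1 - u := by linarith
    have e2 : (0:ℝ) < 1 - a^2/b^2*u := one_sub_mul_pos (by positivity) hx1 hu0.le hu1.le
    have e3 : (0:ℝ) < 1 - 1/(a^2*b^2)*u := one_sub_mul_pos (by positivity) hx2 hu0.le hu1.le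
    have e4 : (0:ℝ) < 1 - 1/b^4*u := one_sub_mul_pos (by positivity) hx3 hu0.le hu1.le
    rw [hrp1 u hu0, hrp2 _ e1, hrp _ e2, hrp _ e3, hrp _ e4]
    rw [isq _ _ hu0.le, isq _ _ e1.le, isq _ _ e2.le, isq _ _ e3.le]
    ring
  have himg : (fun s : ℝ => s^2) '' Set.Ioo 0 1 = Set.Ioo (0:ℝ) 1 := by
    apply Set.Subset.antisymm
    · rintro _ ⟨s, hs, rfl⟩
      have h1 : (0:ℝ) < s^2 := pow_pos hs.1 2
      have h2 : s^2 < 1 := by nlinarith [hs.1, hs.2]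
      exact ⟨h1, h2⟩
    · intro x hx
      refine ⟨Real.sqrt x, ⟨Real.sqrt_pos.2 hx.1, ?_⟩, Real.sq_sqrt hx.1.le⟩
      calc Real.sqrt x < Real.sqrt 1 := Real.sqrt_lt_sqrt hx.1.le hx.2
        _ = 1 := Real.sqrt_one
  have hder2 : ∀ s ∈ Set.Ioo (0:ℝ) 1,
      HasDerivWithinAt (fun s : ℝ => s^2) (2*s) (Set.Ioo 0 1) s := by
    intro s _
    have h := hasDerivAt_pow 2 s
    norm_num at h
    exact h.hasDerivWithinAt
  have hinj2 : Set.InjOn (fun s : ℝ => s^2) (Set.Ioo 0 1) := by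
    intro x hx y hy hxy
    simp only at hxy
    have h : Real.sqrt (x^2) = Real.sqrt (y^2) := by rw [hxy]
    rwa [Real.sqrt_sq hx.1.le, Real.sqrt_sq hy.1.le] at h
  have hsub : (∫ u in Set.Ioo (0:ℝ) 1, (Real.sqrt (u * ((1-u) * ((1 - a^2/b^2*u) *
          ((1 - 1/(a^2*b^2)*u) * (1 - 1/b^4*u))))))⁻¹)
      = ∫ s in Set.Ioo (0:ℝ) 1, 2 * (Real.sqrt ((1 - s ^ 2) *
          (1 - ((a/b)*(1/(a*b))) ^ 2 * s ^ 2) *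
          ((1 - (a/b) ^ 2 * s ^ 2) * (1 - (1/(a*b)) ^ 2 * s ^ 2))))⁻¹ := by
    conv_lhs => rw [← himg]
    rw [integral_image_eq_integral_abs_deriv_smul measurableSet_Ioo hder2 hinj2]
    apply setIntegral_congr_fun measurableSet_Ioo
    intro s hs
    obtain ⟨hs0, hs1⟩ := hs
    beta_reduce
    simp only [smul_eq_mul]
    rw [abs_of_pos (by positivity : (0:ℝ) < 2*s)]
    rw [hargS s]
    rw [Real.sqrt_mul (sq_nonneg s), Real.sqrt_sq hs0.le, mul_inv]
    rw [← mul_assoc, mul_assoc 2 s s⁻¹, mul_inv_cancel₀ hs0.ne', mul_one]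
  have hFD : FD3 (1/2) (1/2) (1/2) (1/2) 1 (a^2/b^2) (1/(a^2*b^2)) (1/b^4)
      = π⁻¹ * (b^2/(b^2+1) * Kio ((a^2+1)*b/((b^2+1)*a)) +
          b^2/(b^2-1) * Kio ((a^2-1)*b/((b^2-1)*a))) := by
    unfold FD3
    rw [hpre, hint1, hsub, key]
  have hK1pos : 0 < Kio ((a^2+1)*b/((b^2+1)*a)) := by
    apply Kio_pos
    have h1 : 0 < (a^2+1)*b/((b^2+1)*a) := by positivity
    have h2 : (a^2+1)*b/((b^2+1)*a) < 1 := by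
      rw [div_lt_one (by positivity)]
      nlinarith [mul_pos (sub_pos.2 hab) (by nlinarith : (0:ℝ) < a*b - 1)]
    exact sq_lt_one'' h1.le h2
  have hK2pos : 0 < Kio ((a^2-1)*b/((b^2-1)*a)) := by
    apply Kio_pos
    have h1 : 0 < (a^2-1)*b/((b^2-1)*a) :=
      div_pos (by nlinarith) (by nlinarith)
    have h2 : (a^2-1)*b/((b^2-1)*a) < 1 := by
      rw [div_lt_one (by nlinarith)]
      nlinarith [mul_pos (sub_pos.2 hab) (by positivity : (0:ℝ) < a*b + 1)]
    exact sq_lt_one'' h1.le h2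
  have hSpos : 0 < b^2/(b^2+1) * Kio ((a^2+1)*b/((b^2+1)*a)) +
      b^2/(b^2-1) * Kio ((a^2-1)*b/((b^2-1)*a)) := by
    have c1 : (0:ℝ) < b^2/(b^2+1) := by positivity
    have c2 : (0:ℝ) < b^2/(b^2-1) := div_pos (by positivity) (by nlinarith)
    exact add_pos (mul_pos c1 hK1pos) (mul_pos c2 hK2pos)
  rw [ellipticK_eq_Kio, ellipticK_eq_Kio, hFD]
  rw [eq_div_iff (mul_pos (inv_pos.2 Real.pi_pos) hSpos).ne']
  rw [← mul_assoc, mul_inv_cancel₀ Real.pi_ne_zero, one_mul]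
end

section
/- Let b be a real number with b > 1. Then π = 2 b² (b²−1) K( 2b/(1+b²) ) / ( (1+b²)·( 2(b²−1)·F₁(1/2; 1, 1/2; 1 | 1/b², 1/b⁴) − b² ) ). -/
open MeasureTheory Real

namespace Stmt2Aux

open Set Filter intervalIntegral

/-- common square-root expression -/
noncomputable def S (b t : ℝ) : ℝ := Real.sqrt ((1 - t^2) * (b^4 - t^2))

lemma b4_big {b t : ℝ} (hb : 1 < b) (h1 : t < 1) (h0 : 0 ≤ t) : t^2 < b^4 := by
  nlinarith [sq_nonneg (b^2 - 1), sq_nonneg b]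

lemma S_pos {b t : ℝ} (hb : 1 < b) (h0 : 0 ≤ t) (h1 : t < 1) : 0 < S b t := by
  apply Real.sqrt_pos.2
  have h2 := b4_big hb h1 h0
  exact mul_pos (by nlinarith) (by nlinarith)

lemma S_sq {b t : ℝ} (hb : 1 < b) (h0 : 0 ≤ t) (h1 : t < 1) :
    (S b t)^2 = (1 - t^2) * (b^4 - t^2) :=
  Real.sq_sqrt (mul_nonneg (by nlinarith) (by nlinarith [b4_big hb h1 h0]))

lemma S_eq_mul {b t : ℝ} (hb : 1 < b) (h0 : 0 ≤ t) (h1 : t < 1) :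
    S b t = Real.sqrt (1 - t^2) * Real.sqrt (b^4 - t^2) :=
  Real.sqrt_mul (by nlinarith) _

lemma S_zero_one (b : ℝ) : S b 1 = 0 := by simp [S]

lemma S_cont (b : ℝ) : Continuous (S b) := by
  apply Real.continuous_sqrt.comp
  fun_prop

/-- master integrability lemma -/
lemma master {b : ℝ} (hb : 1 < b) (p : ℝ → ℝ) (hp : Continuous p) :
    IntervalIntegrable (fun t => p t / ((b^2 - t^2) * S b t)) volume 0 1 := by
  obtain ⟨C, hC⟩ : ∃ C, ∀ t ∈ Icc (0:ℝ) 1, |p t| ≤ C := by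
    obtain ⟨C, hC⟩ := (isCompact_Icc (a := (0:ℝ)) (b := 1)).exists_bound_of_continuousOn
      hp.continuousOn
    exact ⟨C, fun t ht => by simpa using hC t ht⟩
  have hC0 : 0 ≤ C := le_trans (abs_nonneg _) (hC 0 (by norm_num))
  have hb2 : (0:ℝ) < b^2 - 1 := by nlinarith
  have hb4 : (0:ℝ) < b^4 - 1 := by nlinarith [sq_nonneg (b^2-1)]
  set M : ℝ := C / ((b^2 - 1) * Real.sqrt (b^4 - 1)) with hM
  have hM0 : 0 ≤ M := by positivity
  have hbase : IntervalIntegrable (fun t : ℝ => M * (1 - t) ^ (-(1/2) : ℝ)) volume 0 1 := by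
    have h0 : IntervalIntegrable (fun t : ℝ => t ^ (-(1/2) : ℝ)) volume 0 1 :=
      intervalIntegral.intervalIntegrable_rpow' (by norm_num)
    have h1 := (h0.comp_sub_left 1)
    simp only [sub_self, sub_zero] at h1
    exact (h1.symm.const_mul M)
  apply hbase.mono_fun
  · apply Measurable.aestronglyMeasurable
    exact hp.measurable.div
      (((continuous_const.sub (continuous_pow 2)).measurable).mul (S_cont b).measurable)
  · rw [Filter.EventuallyLE, ae_restrict_iff' measurableSet_uIoc]
    refine Eventually.of_forall fun t ht => ?_
    rw [uIoc_of_le (by norm_num : (0:ℝ) ≤ 1)] at ht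
    obtain ⟨ht0, ht1⟩ := ht
    rcases eq_or_lt_of_le ht1 with rfl | ht1'
    · simp [S_zero_one, hM0]
    · have hS := S_pos hb ht0.le ht1'
      have ht2 : t^2 < 1 := by nlinarith
      have hbt : (0:ℝ) < b^2 - t^2 := by nlinarith
      have h1t : (0:ℝ) < 1 - t := by linarith
      have hsqrt_le : Real.sqrt (1 - t) * Real.sqrt (b^4 - 1) ≤ S b t := by
        rw [← Real.sqrt_mul (by linarith)]
        apply Real.sqrt_le_sqrt
        have e1 : (1 - t) ≤ (1 - t^2) := by nlinarith
        have e2 : (b^4 - 1) ≤ (b^4 - t^2) := by nlinarith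
        exact mul_le_mul e1 e2 (by linarith) (by nlinarith)
      have hrw : (1 - t) ^ (-(1/2) : ℝ) = 1 / Real.sqrt (1 - t) := by
        rw [one_div, Real.rpow_neg h1t.le, Real.sqrt_eq_rpow]
        norm_num
      rw [Real.norm_eq_abs (M * _), abs_of_nonneg (by positivity),
        Real.norm_eq_abs, abs_div,
        abs_of_pos (show (0:ℝ) < (b^2 - t^2) * S b t by positivity),
        hrw, hM, div_mul_eq_mul_div, mul_one_div, div_div]
      apply div_le_div₀ hC0 (hC t ⟨ht0.le, ht1⟩) (by positivity)
      calc Real.sqrt (1-t) * ((b^2 - 1) * Real.sqrt (b^4-1))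
          = (b^2-1) * (Real.sqrt (1-t) * Real.sqrt (b^4-1)) := by ring
        _ ≤ (b^2-1) * S b t := mul_le_mul_of_nonneg_left hsqrt_le hb2.le
        _ ≤ (b^2 - t^2) * S b t := by nlinarith

/-- integrability, variant without the `(b^2 - t^2)` factor -/
lemma master' {b : ℝ} (hb : 1 < b) (p : ℝ → ℝ) (hp : Continuous p) :
    IntervalIntegrable (fun t => p t / S b t) volume 0 1 := by
  have h := master hb (fun t => p t * (b^2 - t^2)) (by fun_prop)
  apply h.congr_ae
  rw [Filter.EventuallyEq, ae_restrict_iff' measurableSet_uIoc]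
  refine Eventually.of_forall fun t ht => ?_
  rw [uIoc_of_le (by norm_num : (0:ℝ) ≤ 1)] at ht
  have hbt : b^2 - t^2 ≠ 0 := by nlinarith [ht.1, ht.2]
  rw [mul_comm (b^2 - t^2) (S b t), mul_div_mul_right _ _ hbt]

/-- Landen-type transformation -/
lemma landen {b : ℝ} (hb : 1 < b) :
    ellipticK (2*b/(1+b^2)) = ∫ t in (0:ℝ)..1, (b^2+1) / S b t := by
  have hb0 : (0:ℝ) < b := by linarith
  have hden : ∀ t : ℝ, (0:ℝ) < b^2 + t^2 := fun t => by positivity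
  set φ : ℝ → ℝ := fun t => (b^2+1)*t/(b^2+t^2) with hφ
  set φ' : ℝ → ℝ := fun t => (b^2+1)*(b^2-t^2)/(b^2+t^2)^2 with hφ'
  have hderiv : ∀ t ∈ Ioo (0:ℝ) 1, HasDerivWithinAt φ (φ' t) (Ioo (0:ℝ) 1) t := by
    intro t _
    have h1 : HasDerivAt (fun t : ℝ => (b^2+1)*t) (b^2+1) t := by
      simpa using (hasDerivAt_id t).const_mul (b^2+1)
    have h2 : HasDerivAt (fun t : ℝ => b^2+t^2) (2*t) t := by
      simpa using ((hasDerivAt_pow 2 t).const_add (b^2))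
    have hd := (h1.div h2 (ne_of_gt (hden t)))
    have e : ((b^2+1)*(b^2+t^2) - (b^2+1)*t*(2*t))/(b^2+t^2)^2 = φ' t := by
      simp only [hφ']
      congr 1
      ring
    apply HasDerivAt.hasDerivWithinAt
    rw [← e]
    exact hd
  have hinj : InjOn φ (Ioo (0:ℝ) 1) := by
    intro s hs t ht h
    simp only [hφ] at h
    rw [div_eq_div_iff (ne_of_gt (hden s)) (ne_of_gt (hden t))] at h
    have h2 : (b^2 + 1) * ((s - t) * (b^2 - s*t)) = 0 := by linear_combination h
    have h2 : (s - t) * (b^2 - s*t) = 0 := by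
      rcases mul_eq_zero.1 h2 with h4 | h4
      · exfalso; nlinarith
      · exact h4
    have h3 : (0:ℝ) < b^2 - s*t := by nlinarith [hs.1, hs.2, ht.1, ht.2]
    have := mul_eq_zero.1 h2
    rcases this with h4 | h4
    · linarith
    · linarith
  have himg : φ '' Ioo (0:ℝ) 1 = Ioo (0:ℝ) 1 := by
    apply Subset.antisymm
    · rintro _ ⟨t, ht, rfl⟩
      obtain ⟨ht0, ht1⟩ := ht
      constructor
      · have : (0:ℝ) < (b^2+1)*t := by positivity
        exact div_pos this (hden t)
      · rw [div_lt_one (hden t)]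
        nlinarith [mul_pos (show (0:ℝ) < 1 - t by linarith)
          (show (0:ℝ) < b^2 - t by nlinarith)]
    · have hcont : ContinuousOn φ (Icc (0:ℝ) 1) := by
        apply ContinuousOn.div (by fun_prop) (by fun_prop)
        exact fun t _ => ne_of_gt (hden t)
      have h0 : φ 0 = 0 := by simp [hφ]
      have h1 : φ 1 = 1 := by
        have hne : (b^2+1:ℝ) ≠ 0 := by positivity
        simp only [hφ]
        rw [one_pow, mul_one, div_self hne]
      have := intermediate_value_Ioo (by norm_num : (0:ℝ) ≤ 1) hcont
      rw [h0, h1] at this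
      exact this
  unfold ellipticK
  rw [intervalIntegral.integral_of_le zero_le_one, intervalIntegral.integral_of_le zero_le_one,
    MeasureTheory.integral_Ioc_eq_integral_Ioo, MeasureTheory.integral_Ioc_eq_integral_Ioo,
    show Ioo (0:ℝ) 1 = φ '' Ioo (0:ℝ) 1 from himg.symm,
    integral_image_eq_integral_abs_deriv_smul measurableSet_Ioo hderiv hinj]
  rw [show φ '' Ioo (0:ℝ) 1 = Ioo (0:ℝ) 1 from himg]
  apply setIntegral_congr_fun measurableSet_Ioo
  intro t ht
  obtain ⟨ht0, ht1⟩ := ht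
  have hS := S_pos hb ht0.le ht1
  have ht2 : t^2 < 1 := by nlinarith
  have hbt : (0:ℝ) < b^2 - t^2 := by nlinarith
  have hb21 : (0:ℝ) < 1 + b^2 := by positivity
  have key : (1 - (φ t)^2) * (1 - (2*b/(1+b^2))^2 * (φ t)^2)
      = ((1 - t^2) * (b^4 - t^2)) * ((b^2-t^2)/(b^2+t^2)^2)^2 := by
    simp only [hφ]
    field_simp
    ring
  have hq : (0:ℝ) < (b^2-t^2)/(b^2+t^2)^2 := by positivity
  have hsqrt : Real.sqrt ((1 - (φ t)^2) * (1 - (2*b/(1+b^2))^2 * (φ t)^2))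
      = S b t * ((b^2-t^2)/(b^2+t^2)^2) := by
    rw [key, Real.sqrt_mul (by nlinarith [b4_big hb ht1 ht0.le]),
      Real.sqrt_sq hq.le]
    rfl
  have hφ'pos : 0 < φ' t := by
    simp only [hφ']
    positivity
  simp only [smul_eq_mul]
  rw [abs_of_pos hφ'pos, hsqrt]
  simp only [hφ']
  rw [div_mul_eq_mul_div, mul_one_div]
  field_simp

/-- the Appell integral via `u = t^2` -/
lemma appell {b : ℝ} (hb : 1 < b) :
    π * appellF1 (1/2) 1 (1/2) 1 (1/b^2) (1/b^4)
      = ∫ t in (0:ℝ)..1, 2*b^4 / ((b^2 - t^2) * S b t) := by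
  have hb0 : (0:ℝ) < b := by linarith
  have hπfac : Real.Gamma (1:ℝ) / (Real.Gamma (1/2) * Real.Gamma (1 - 1/2)) = 1/π := by
    rw [show (1:ℝ) - 1/2 = 1/2 by norm_num, Real.Gamma_one, Real.Gamma_one_half_eq,
      Real.mul_self_sqrt Real.pi_pos.le]
  unfold appellF1
  rw [hπfac, ← mul_assoc, mul_one_div, div_self (ne_of_gt Real.pi_pos), one_mul]
  set φ : ℝ → ℝ := fun t => t^2 with hφdef
  have hderiv : ∀ t ∈ Ioo (0:ℝ) 1, HasDerivWithinAt φ (2*t) (Ioo (0:ℝ) 1) t := by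
    intro t _
    simpa using (hasDerivAt_pow 2 t).hasDerivWithinAt
  have hinj : InjOn φ (Ioo (0:ℝ) 1) := by
    intro s hs t ht h
    simp only [hφdef] at h
    have h2 : (s - t) * (s + t) = 0 := by linear_combination h
    rcases mul_eq_zero.1 h2 with h4 | h4
    · linarith
    · exfalso; nlinarith [hs.1, ht.1]
  have himg : φ '' Ioo (0:ℝ) 1 = Ioo (0:ℝ) 1 := by
    apply Subset.antisymm
    · rintro _ ⟨t, ht, rfl⟩
      simp only [hφdef]
      exact ⟨pow_pos ht.1 2, by nlinarith [ht.1, ht.2]⟩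
    · intro y hy
      refine ⟨Real.sqrt y, ⟨Real.sqrt_pos.2 hy.1, ?_⟩, Real.sq_sqrt hy.1.le⟩
      rw [show (1:ℝ) = Real.sqrt 1 from (Real.sqrt_one).symm]
      exact Real.sqrt_lt_sqrt hy.1.le hy.2
  rw [intervalIntegral.integral_of_le zero_le_one, intervalIntegral.integral_of_le zero_le_one,
    MeasureTheory.integral_Ioc_eq_integral_Ioo, MeasureTheory.integral_Ioc_eq_integral_Ioo,
    show Ioo (0:ℝ) 1 = φ '' Ioo (0:ℝ) 1 from himg.symm,
    integral_image_eq_integral_abs_deriv_smul measurableSet_Ioo hderiv hinj,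
    show φ '' Ioo (0:ℝ) 1 = Ioo (0:ℝ) 1 from himg]
  apply setIntegral_congr_fun measurableSet_Ioo
  intro t ht
  obtain ⟨ht0, ht1⟩ := ht
  have ht2 : t^2 < 1 := by nlinarith
  have hbt : (0:ℝ) < b^2 - t^2 := by nlinarith
  have hb4t : (0:ℝ) < b^4 - t^2 := b4_big hb ht1 ht0.le |> sub_pos.2
  have h1t2 : (0:ℝ) < 1 - t^2 := by linarith
  simp only [hφdef, smul_eq_mul]
  rw [show ((1:ℝ)/2 - 1) = -(1/2) by norm_num, show ((1:ℝ) - 1/2 - 1) = -(1/2) by norm_num]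
  have e1 : ((t^2:ℝ))^(-(1/2):ℝ) = t⁻¹ := by
    rw [Real.rpow_neg (sq_nonneg t), ← Real.sqrt_eq_rpow, Real.sqrt_sq ht0.le]
  have e2 : ((1-t^2:ℝ))^(-(1/2):ℝ) = (Real.sqrt (1-t^2))⁻¹ := by
    rw [Real.rpow_neg h1t2.le, ← Real.sqrt_eq_rpow]
  have e3 : (1 - 1/b^2*t^2 : ℝ)^(-(1:ℝ)) = ((b^2 - t^2)/b^2)⁻¹ := by
    rw [show (1 - 1/b^2*t^2 : ℝ) = (b^2-t^2)/b^2 by field_simp, Real.rpow_neg_one]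
  have e4 : (1 - 1/b^4*t^2 : ℝ)^(-(1/2):ℝ) = (Real.sqrt (b^4 - t^2)/b^2)⁻¹ := by
    rw [show (1 - 1/b^4*t^2 : ℝ) = (b^4-t^2)/b^4 by
        rw [eq_div_iff (by positivity : (b:ℝ)^4 ≠ 0), sub_mul, one_mul]; field_simp,
      Real.rpow_neg (by positivity), ← Real.sqrt_eq_rpow,
      Real.sqrt_div hb4t.le, show Real.sqrt (b^4) = b^2 by
        rw [show (b:ℝ)^4 = (b^2)^2 by ring, Real.sqrt_sq (by positivity)]]
  rw [abs_of_pos (by positivity : (0:ℝ) < 2*t), e1, e2, e3, e4,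
    S_eq_mul hb ht0.le ht1]
  have hs1 : (0:ℝ) < Real.sqrt (1-t^2) := Real.sqrt_pos.2 h1t2
  have hs2 : (0:ℝ) < Real.sqrt (b^4-t^2) := Real.sqrt_pos.2 hb4t
  field_simp

/-- the elementary integral, by the fundamental theorem of calculus -/
lemma ftc {b : ℝ} (hb : 1 < b) :
    ∫ t in (0:ℝ)..1, (b^2-1)*(b^2+t^2) / ((b^2 - t^2) * S b t) = π/2 := by
  have hb0 : (0:ℝ) < b := by linarith
  have hb2 : (0:ℝ) < b^2 - 1 := by nlinarith
  have hint := master hb (fun t => (b^2-1)*(b^2+t^2)) (by fun_prop)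
  set F : ℝ → ℝ := fun t => Real.arctan ((b^2-1)*t / S b t) with hFdef
  have hderiv : ∀ t ∈ Ioo (0:ℝ) 1,
      HasDerivAt F ((b^2-1)*(b^2+t^2) / ((b^2 - t^2) * S b t)) t := by
    intro t ht
    obtain ⟨ht0, ht1⟩ := ht
    have hS := S_pos hb ht0.le ht1
    have hq2 := S_sq hb ht0.le ht1
    have ht2 : t^2 < 1 := by nlinarith
    have hbt : (0:ℝ) < b^2 - t^2 := by nlinarith
    have hb4t : (0:ℝ) < b^4 - t^2 := b4_big hb ht1 ht0.le |> sub_pos.2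
    have h1t2 : (0:ℝ) < 1 - t^2 := by linarith
    have hPpos : (0:ℝ) < (1 - t^2)*(b^4 - t^2) := mul_pos h1t2 hb4t
    have hP : HasDerivAt (fun s : ℝ => (1 - s^2)*(b^4 - s^2))
        (-(2*t)*(b^4-t^2) + (1-t^2)*(-(2*t))) t := by
      have h1 : HasDerivAt (fun s : ℝ => 1 - s^2) (-(2*t)) t := by
        simpa using (hasDerivAt_pow 2 t).const_sub 1
      have h2 : HasDerivAt (fun s : ℝ => b^4 - s^2) (-(2*t)) t := by
        simpa using (hasDerivAt_pow 2 t).const_sub (b^4)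
      exact h1.mul h2
    have hSd : HasDerivAt (S b)
        (1/(2 * Real.sqrt ((1 - t^2)*(b^4 - t^2))) * (-(2*t)*(b^4-t^2) + (1-t^2)*(-(2*t)))) t :=
      (Real.hasDerivAt_sqrt (ne_of_gt hPpos)).comp t hP
    have hnum : HasDerivAt (fun s : ℝ => (b^2-1)*s) (b^2-1) t := by
      simpa using (hasDerivAt_id t).const_mul (b^2-1)
    have hu := hnum.div hSd (ne_of_gt hS)
    have harc := (Real.hasDerivAt_arctan ((b^2-1)*t / S b t)).comp t hu
    refine harc.congr_deriv (Eq.symm ?_)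
    have hq : S b t ≠ 0 := ne_of_gt hS
    have hqS : Real.sqrt ((1 - t^2)*(b^4 - t^2)) = S b t := rfl
    rw [hqS]
    set q := S b t with hqdef
    have h1p : 1 + ((b^2-1)*t/q)^2 = (b^2-t^2)^2/q^2 := by
      field_simp
      linear_combination hq2
    have hN : (b^2-1)*q - (b^2-1)*t*(1/(2*q) * (-(2*t)*(b^4-t^2) + (1-t^2)* -(2*t)))
        = (b^2-1)*(b^4-t^4)/q := by
      field_simp
      linear_combination hq2
    rw [h1p, hN, one_div_div]
    field_simp
    ring
  have h0 : Tendsto F (nhdsWithin 0 (Ioi 0)) (nhds 0) := by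
    have hSne : S b 0 ≠ 0 := by
      simp only [S]
      norm_num
      rw [show (b:ℝ)^4 = (b^2)^2 by ring, Real.sqrt_sq (by positivity)]
      positivity
    have hc : ContinuousAt F 0 := by
      apply Real.continuous_arctan.continuousAt.comp
      exact ContinuousAt.div (by fun_prop) (S_cont b).continuousAt hSne
    have hval : F 0 = 0 := by
      simp [hFdef]
    have := hc.tendsto
    rw [hval] at this
    exact this.mono_left nhdsWithin_le_nhds
  have h1 : Tendsto F (nhdsWithin 1 (Iio 1)) (nhds (π/2)) := by
    have hSto : Tendsto (S b) (nhdsWithin 1 (Iio 1)) (nhdsWithin 0 (Ioi 0)) := by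
      rw [tendsto_nhdsWithin_iff]
      constructor
      · have h := ((S_cont b).tendsto 1).mono_left
          (nhdsWithin_le_nhds (s := Iio (1:ℝ)))
        rwa [S_zero_one] at h
      · filter_upwards [Ioo_mem_nhdsLT_of_mem
          (show (1:ℝ) ∈ Ioc (0:ℝ) 1 from ⟨zero_lt_one, le_refl 1⟩)] with t ht
        exact S_pos hb ht.1.le ht.2
    have hnum : Tendsto (fun t : ℝ => (b^2-1)*t) (nhdsWithin 1 (Iio 1)) (nhds (b^2-1)) := by
      have hcont : Continuous fun t : ℝ => (b^2-1)*t := by fun_prop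
      have := (hcont.tendsto 1).mono_left (nhdsWithin_le_nhds (s := Iio (1:ℝ)))
      simpa using this
    have hinv : Tendsto (fun t => (S b t)⁻¹) (nhdsWithin 1 (Iio 1)) atTop :=
      tendsto_inv_nhdsGT_zero.comp hSto
    have harg : Tendsto (fun t => (b^2-1)*t / S b t) (nhdsWithin 1 (Iio 1)) atTop := by
      have := hnum.pos_mul_atTop hb2 hinv
      simpa [div_eq_mul_inv] using this
    exact (tendsto_nhds_of_tendsto_nhdsWithin Real.tendsto_arctan_atTop).comp harg
  have := intervalIntegral.integral_eq_sub_of_hasDerivAt_of_tendsto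
    (f := F) (f' := fun t => (b^2-1)*(b^2+t^2) / ((b^2 - t^2) * S b t))
    zero_lt_one hderiv hint h0 h1
  rw [this]
  ring

end Stmt2Aux

theorem stmt_2 (b : ℝ) (hb : 1 < b) :
    π = 2 * b^2 * (b^2 - 1) * ellipticK (2*b / (1 + b^2)) /
        ((1 + b^2) * (2 * (b^2 - 1) * appellF1 (1/2) 1 (1/2) 1 (1/b^2) (1/b^4) - b^2)) := by
  have hb0 : (0:ℝ) < b := by linarith
  have hb2 : (0:ℝ) < b^2 - 1 := by nlinarith
  have hπ := Real.pi_pos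
  set I : ℝ := ∫ t in (0:ℝ)..1, 1 / Stmt2Aux.S b t with hI
  have hIint : IntervalIntegrable (fun t => 1 / Stmt2Aux.S b t) volume 0 1 :=
    Stmt2Aux.master' hb (fun _ => 1) continuous_const
  have hIpos : 0 < I := by
    apply intervalIntegral.intervalIntegral_pos_of_pos_on hIint ?_ zero_lt_one
    intro t ht
    exact div_pos one_pos (Stmt2Aux.S_pos hb ht.1.le ht.2)
  have hK : ellipticK (2*b/(1+b^2)) = (b^2+1) * I := by
    rw [Stmt2Aux.landen hb, hI, ← intervalIntegral.integral_const_mul]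
    congr 1
    funext t
    rw [mul_one_div]
  have hA := Stmt2Aux.appell hb
  have hcong : ∀ t ∈ Set.uIcc (0:ℝ) 1, 2*b^4 / ((b^2 - t^2) * Stmt2Aux.S b t)
      = b^2 * (1 / Stmt2Aux.S b t)
        + (b^2/(b^2-1)) * ((b^2-1)*(b^2+t^2) / ((b^2 - t^2) * Stmt2Aux.S b t)) := by
    intro t ht
    rw [Set.uIcc_of_le zero_le_one] at ht
    rcases eq_or_lt_of_le ht.2 with rfl | ht1
    · simp [Stmt2Aux.S_zero_one]
    · have hS := Stmt2Aux.S_pos hb ht.1 ht1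
      have hbt : (0:ℝ) < b^2 - t^2 := by nlinarith [ht.1]
      field_simp
      ring
  have h2int : IntervalIntegrable
      (fun t => (b^2/(b^2-1)) * ((b^2-1)*(b^2+t^2) / ((b^2 - t^2) * Stmt2Aux.S b t)))
      volume 0 1 :=
    (Stmt2Aux.master hb (fun t => (b^2-1)*(b^2+t^2)) (by fun_prop)).const_mul _
  have h1int : IntervalIntegrable (fun t => b^2 * (1 / Stmt2Aux.S b t)) volume 0 1 :=
    hIint.const_mul _
  have hsplit : (∫ t in (0:ℝ)..1, 2*b^4 / ((b^2 - t^2) * Stmt2Aux.S b t))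
      = b^2 * I + (b^2/(b^2-1)) * (π/2) := by
    rw [intervalIntegral.integral_congr hcong,
      intervalIntegral.integral_add h1int h2int,
      intervalIntegral.integral_const_mul, intervalIntegral.integral_const_mul,
      ← hI, Stmt2Aux.ftc hb]
  have hπF : π * appellF1 (1/2) 1 (1/2) 1 (1/b^2) (1/b^4)
      = b^2 * I + (b^2/(b^2-1)) * (π/2) := hA.trans hsplit
  have hc : (b^2 - 1) * (b^2/(b^2-1)) = b^2 := by field_simp
  have hD : π * (2 * (b^2 - 1) * appellF1 (1/2) 1 (1/2) 1 (1/b^2) (1/b^4) - b^2)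
      = 2*b^2*(b^2-1)*I := by
    linear_combination 2*(b^2-1)*hπF + π*hc
  have hDpos : 0 < 2 * (b^2 - 1) * appellF1 (1/2) 1 (1/2) 1 (1/b^2) (1/b^4) - b^2 := by
    have he : 2 * (b^2 - 1) * appellF1 (1/2) 1 (1/2) 1 (1/b^2) (1/b^4) - b^2
        = 2*b^2*(b^2-1)*I/π := by
      rw [eq_div_iff (ne_of_gt hπ)]
      linear_combination hD
    rw [he]
    exact div_pos (mul_pos (mul_pos (by positivity) hb2) hIpos) hπ
  rw [hK, eq_div_iff (ne_of_gt (mul_pos (by positivity : (0:ℝ) < 1+b^2) hDpos))]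
  linear_combination (1+b^2) * hD
end

section
/- Let a, b be real numbers with 1 < a < b. Then ∫_{1/a}^{a} dx/√((x²−a²)(x²−1/a²)(x²−b²)(x²−1/b²)) = (b/(b²−1))·K( b(a²−1)/(a(b²−1)) ). (The polynomial (x²−a²)(x²−1/a²)(x²−b²)(x²−1/b²) is nonnegative for x ∈ [1/a, a], so the integrand is real.) -/
open MeasureTheory Real

open Set intervalIntegral in
lemma frac_aux {c x s E : ℝ} (hc : c ≠ 0) (hx : x ≠ 0) (hs : s ≠ 0) (hE : E ≠ 0)
    (h : x * s = x^2 + 1) :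
    c * x / s * (1 / (x ^ 2 * c * E)) = 1 / ((x ^ 2 + 1) * E) := by
  rw [← h]
  field_simp

noncomputable def sAux (A θ : ℝ) : ℝ := Real.sqrt (A^2 * Real.sin θ^2 + 4)
open Set intervalIntegral in
noncomputable def fAux (A θ : ℝ) : ℝ := (A * Real.sin θ + sAux A θ) / 2

open Set intervalIntegral in
lemma sAux_pos (A θ : ℝ) : 0 < sAux A θ := Real.sqrt_pos.mpr (by positivity)

open Set intervalIntegral in
lemma sAux_sq (A θ : ℝ) : sAux A θ ^ 2 = A^2 * Real.sin θ^2 + 4 :=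
  Real.sq_sqrt (by positivity)

open Set intervalIntegral in
lemma abs_lt_sAux (A θ : ℝ) : |A * Real.sin θ| < sAux A θ := by
  rw [← Real.sqrt_sq_eq_abs]
  exact Real.sqrt_lt_sqrt (sq_nonneg _) (by nlinarith)

open Set intervalIntegral in
lemma fAux_pos (A θ : ℝ) : 0 < fAux A θ := by
  have h := abs_lt_sAux A θ
  rw [abs_lt] at h
  unfold fAux; linarith [h.1]

open Set intervalIntegral in
lemma fAux_neg (A θ : ℝ) : fAux A (-θ) = (sAux A θ - A * Real.sin θ) / 2 := by
  unfold fAux sAux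
  rw [Real.sin_neg]
  ring_nf

open Set intervalIntegral in
lemma fAux_mul_fAux_neg (A θ : ℝ) : fAux A θ * fAux A (-θ) = 1 := by
  rw [fAux_neg]
  have h := sAux_sq A θ
  unfold fAux
  nlinarith [h]

open Set intervalIntegral in
lemma fAux_sub_inv (A θ : ℝ) : fAux A θ - 1 / fAux A θ = A * Real.sin θ := by
  have h := fAux_mul_fAux_neg A θ
  have hx := fAux_pos A θ
  have h1 : 1 / fAux A θ = fAux A (-θ) := by
    field_simp
    linarith [h]
  rw [h1, fAux_neg]
  unfold fAux
  ring

open Set intervalIntegral in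
lemma hasDerivAt_fAux (A θ : ℝ) :
    HasDerivAt (fAux A) (A * Real.cos θ * fAux A θ / sAux A θ) θ := by
  have hs := sAux_pos A θ
  have h1 : HasDerivAt (fun θ : ℝ => A^2 * Real.sin θ^2 + 4)
      (A^2 * (2 * Real.sin θ ^ 1 * Real.cos θ)) θ :=
    (((Real.hasDerivAt_sin θ).pow 2).const_mul (A^2)).add_const 4
  have h2 : HasDerivAt (fun θ : ℝ => sAux A θ)
      ((A^2 * (2 * Real.sin θ ^ 1 * Real.cos θ)) / (2 * sAux A θ)) θ :=
    h1.sqrt (by positivity)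
  have h4 := (((Real.hasDerivAt_sin θ).const_mul A).add h2).div_const 2
  convert h4 using 1
  · rfl
  · rfl
  · rfl
  unfold fAux
  have hsne : sAux A θ ≠ 0 := hs.ne'
  field_simp
  ring

open Set intervalIntegral in
lemma continuous_fAux (A : ℝ) : Continuous (fAux A) := by
  unfold fAux sAux
  fun_prop

open Set intervalIntegral in
lemma strictMonoOn_fAux {A : ℝ} (hA : 0 < A) :
    StrictMonoOn (fAux A) (Icc (-(π/2)) (π/2)) := by
  apply strictMonoOn_of_deriv_pos (convex_Icc _ _) (continuous_fAux A).continuousOn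
  intro θ hθ
  rw [interior_Icc] at hθ
  rw [(hasDerivAt_fAux A θ).deriv]
  have hcos : 0 < Real.cos θ := Real.cos_pos_of_mem_Ioo hθ
  have := fAux_pos A θ
  have := sAux_pos A θ
  positivity

open Set intervalIntegral in
lemma fAux_pi_div_two {c : ℝ} (hc : 0 < c) : fAux (c - 1/c) (π/2) = c := by
  unfold fAux sAux
  rw [Real.sin_pi_div_two]
  have h : (c - 1/c)^2 * 1^2 + 4 = (c + 1/c)^2 := by field_simp; ring
  rw [h, Real.sqrt_sq (by positivity)]
  ring

open Set intervalIntegral in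
lemma fAux_neg_pi_div_two {c : ℝ} (hc : 0 < c) : fAux (c - 1/c) (-(π/2)) = 1/c := by
  unfold fAux sAux
  rw [Real.sin_neg, Real.sin_pi_div_two]
  have h : (c - 1/c)^2 * (-1)^2 + 4 = (c + 1/c)^2 := by field_simp; ring
  rw [h, Real.sqrt_sq (by positivity)]
  ring

open Set intervalIntegral in
lemma ellipticK_eq_trig (k : ℝ) :
    ellipticK k = ∫ θ in (0:ℝ)..(π/2), 1 / Real.sqrt (1 - k^2 * Real.sin θ ^ 2) := by
  have hpi : (0:ℝ) < π/2 := by positivity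
  have hsub : Ioo 0 (π/2) ⊆ Icc (-(π/2)) (π/2) := fun θ hθ =>
    ⟨by linarith [hθ.1], le_of_lt hθ.2⟩
  have himg : Real.sin '' Ioo 0 (π/2) = Ioo (0:ℝ) 1 := by
    apply Subset.antisymm
    · rintro _ ⟨θ, hθ, rfl⟩
      refine ⟨Real.sin_pos_of_pos_of_lt_pi hθ.1 (by linarith [pi_pos, hθ.2]), ?_⟩
      have := Real.strictMonoOn_sin (hsub hθ) ⟨by linarith, le_refl _⟩ hθ.2
      simpa using this
    · have h := intermediate_value_Ioo (le_of_lt hpi) Real.continuous_sin.continuousOn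
      simpa using h
  have hder : ∀ θ ∈ Ioo (0:ℝ) (π/2),
      HasDerivWithinAt Real.sin (Real.cos θ) (Ioo (0:ℝ) (π/2)) θ :=
    fun θ _ => (Real.hasDerivAt_sin θ).hasDerivWithinAt
  have hinj : InjOn Real.sin (Ioo (0:ℝ) (π/2)) :=
    Real.strictMonoOn_sin.injOn.mono hsub
  rw [ellipticK, integral_of_le (by norm_num : (0:ℝ) ≤ 1),
    integral_of_le (le_of_lt hpi), integral_Ioc_eq_integral_Ioo,
    integral_Ioc_eq_integral_Ioo, ← himg,
    integral_image_eq_integral_abs_deriv_smul measurableSet_Ioo hder hinj]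
  apply setIntegral_congr_fun measurableSet_Ioo
  intro θ hθ
  simp only
  have hcos : 0 < Real.cos θ := Real.cos_pos_of_mem_Ioo ⟨by linarith [hθ.1], hθ.2⟩
  have h1 : 1 - Real.sin θ ^ 2 = Real.cos θ ^ 2 := (Real.cos_sq' θ).symm
  rw [smul_eq_mul, abs_of_pos hcos, Real.sqrt_mul (by rw [h1]; positivity), h1,
    Real.sqrt_sq hcos.le]
  rcases eq_or_ne (Real.sqrt (1 - k^2 * Real.sin θ ^ 2)) 0 with h | h
  · rw [h, mul_zero, div_zero, mul_zero]
  · field_simp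

open Set intervalIntegral in
theorem stmt_3 (a b : ℝ) (ha : 1 < a) (hab : a < b) :
    (∫ x in (1/a : ℝ)..a,
        1 / Real.sqrt ((x^2 - a^2) * (x^2 - 1/a^2) * (x^2 - b^2) * (x^2 - 1/b^2))) =
      (b / (b^2 - 1)) * ellipticK (b * (a^2 - 1) / (a * (b^2 - 1))) := by
  have ha0 : (0:ℝ) < a := by linarith
  have hb1 : (1:ℝ) < b := by linarith
  have hb0 : (0:ℝ) < b := by linarith
  have hia : 1/a < 1 := by rw [div_lt_one ha0]; exact ha
  have hib : 1/b < 1/a := by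
    rw [div_lt_div_iff₀ hb0 ha0]; nlinarith
  set A := a - 1/a with hA
  set B := b - 1/b with hB
  have hA0 : 0 < A := by rw [hA]; linarith
  have hAB : A < B := by rw [hA, hB]; linarith
  have hB0 : 0 < B := hA0.trans hAB
  set k := A / B with hk
  have hk1 : k < 1 := by rw [hk, div_lt_one hB0]; exact hAB
  have hk0 : 0 ≤ k := by positivity
  have hEpos : ∀ θ : ℝ, 0 < B^2 - A^2 * Real.sin θ^2 := fun θ => by
    nlinarith [Real.sin_sq_le_one θ, sq_nonneg (Real.sin θ), sq_nonneg A]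
  set G : ℝ → ℝ :=
    fun θ => 1 / ((fAux A θ^2 + 1) * Real.sqrt (B^2 - A^2 * Real.sin θ^2)) with hG
  have hDc : Continuous fun θ : ℝ => Real.sqrt (B^2 - A^2 * Real.sin θ^2) := by fun_prop
  have hGcont : Continuous G := by
    rw [hG]
    refine continuous_const.div
      ((((continuous_fAux A).pow 2).add continuous_const).mul hDc) fun θ => ?_
    have h1 := fAux_pos A θ
    have h2 : 0 < Real.sqrt (B^2 - A^2 * Real.sin θ^2) := Real.sqrt_pos.mpr (hEpos θ)
    positivity
  have hIcc : Ioo (-(π/2)) (π/2) ⊆ Icc (-(π/2)) (π/2) := Ioo_subset_Icc_self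
  have hmono := strictMonoOn_fAux hA0
  have himg : fAux A '' Ioo (-(π/2)) (π/2) = Ioo (1/a) a := by
    apply Subset.antisymm
    · rintro _ ⟨θ, hθ, rfl⟩
      constructor
      · have := hmono (left_mem_Icc.mpr (by linarith [pi_pos])) (hIcc hθ) hθ.1
        rwa [hA, fAux_neg_pi_div_two ha0] at this
      · have := hmono (hIcc hθ) (right_mem_Icc.mpr (by linarith [pi_pos])) hθ.2
        rwa [hA, fAux_pi_div_two ha0] at this
    · have h := intermediate_value_Ioo (by linarith [pi_pos] : -(π/2) ≤ (π/2))
        (continuous_fAux A).continuousOn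
      rw [hA, fAux_neg_pi_div_two ha0, fAux_pi_div_two ha0] at h
      exact h
  have key1 : (∫ x in (1/a : ℝ)..a,
      1 / Real.sqrt ((x^2 - a^2) * (x^2 - 1/a^2) * (x^2 - b^2) * (x^2 - 1/b^2)))
      = ∫ θ in Ioo (-(π/2)) (π/2), G θ := by
    have h1a : 1/a ≤ a := by nlinarith
    rw [integral_of_le h1a, integral_Ioc_eq_integral_Ioo, ← himg,
      integral_image_eq_integral_abs_deriv_smul measurableSet_Ioo
        (fun θ _ => (hasDerivAt_fAux A θ).hasDerivWithinAt) (hmono.injOn.mono hIcc)]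
    apply setIntegral_congr_fun measurableSet_Ioo
    intro θ hθ
    simp only [hG]
    have hx0 : 0 < fAux A θ := fAux_pos A θ
    have hs0 : 0 < sAux A θ := sAux_pos A θ
    have hcos : 0 < Real.cos θ := Real.cos_pos_of_mem_Ioo hθ
    have hsub : fAux A θ - 1 / fAux A θ = A * Real.sin θ := fAux_sub_inv A θ
    set x := fAux A θ with hx
    have e1 : (x^2 - a^2) * (x^2 - 1/a^2) = x^2 * ((A * Real.sin θ)^2 - A^2) := by
      rw [← hsub, hA]; field_simp; ring
    have e2 : (x^2 - b^2) * (x^2 - 1/b^2) = x^2 * ((A * Real.sin θ)^2 - B^2) := by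
      rw [← hsub, hB]; field_simp; ring
    have e3 : (A * Real.sin θ)^2 - A^2 = -((A * Real.cos θ)^2) := by
      linear_combination A^2 * Real.sin_sq_add_cos_sq θ
    have earg : (x^2 - a^2) * (x^2 - 1/a^2) * (x^2 - b^2) * (x^2 - 1/b^2)
        = (x^2 * (A * Real.cos θ))^2 * (B^2 - A^2 * Real.sin θ^2) := by
      have h4 : (x^2 - a^2) * (x^2 - 1/a^2) * (x^2 - b^2) * (x^2 - 1/b^2)
          = ((x^2 - a^2) * (x^2 - 1/a^2)) * ((x^2 - b^2) * (x^2 - 1/b^2)) := by ring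
      rw [h4, e1, e2, e3]; ring
    have hxs : x * sAux A θ = x^2 + 1 := by
      have h2x : sAux A θ = 2*x - A*Real.sin θ := by rw [hx]; unfold fAux; ring
      have hone : x * (1/x) = 1 := by field_simp
      have hxx : x^2 = A*Real.sin θ*x + 1 := by
        linear_combination x * hsub + hone
      rw [h2x]; linear_combination hxx
    have hsq : 0 < Real.sqrt (B^2 - A^2 * Real.sin θ^2) := Real.sqrt_pos.mpr (hEpos θ)
    rw [earg, Real.sqrt_mul (sq_nonneg _), Real.sqrt_sq (by positivity),
      smul_eq_mul, abs_of_pos (by positivity)]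
    exact frac_aux (by positivity) hx0.ne' hs0.ne' hsq.ne' hxs
  have hGint : ∀ c d : ℝ, IntervalIntegrable G volume c d :=
    fun c d => hGcont.intervalIntegrable c d
  have key2 : ∫ θ in Ioo (-(π/2)) (π/2), G θ
      = ∫ θ in (0:ℝ)..(π/2), (G θ + G (-θ)) := by
    rw [← integral_Ioc_eq_integral_Ioo, ← integral_of_le (by linarith [pi_pos])]
    rw [← integral_add_adjacent_intervals (hGint (-(π/2)) 0) (hGint 0 (π/2))]
    have hGnegint : IntervalIntegrable (fun x => G (-x)) volume 0 (π/2) :=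
      (hGcont.comp continuous_neg).intervalIntegrable 0 (π/2)
    rw [intervalIntegral.integral_add (hGint 0 (π/2)) hGnegint]
    have h := intervalIntegral.integral_comp_neg (a := (0:ℝ)) (b := π/2) G
    rw [neg_zero] at h
    rw [h]
    ring
  have key3 : ∀ θ : ℝ, G θ + G (-θ)
      = (1/B) * (1 / Real.sqrt (1 - k^2 * Real.sin θ^2)) := by
    intro θ
    simp only [hG]
    have hx0 := fAux_pos A θ
    have hinv : fAux A (-θ) = 1 / fAux A θ := by
      have h := fAux_mul_fAux_neg A θ
      field_simp
      linarith [h]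
    rw [hinv, Real.sin_neg, neg_sq]
    have hE : B^2 - A^2 * Real.sin θ^2 = B^2 * (1 - k^2 * Real.sin θ^2) := by
      rw [hk]; field_simp
    have h1k : 0 < 1 - k^2 * Real.sin θ^2 := by
      nlinarith [Real.sin_sq_le_one θ, sq_nonneg (Real.sin θ), sq_nonneg k]
    rw [hE, Real.sqrt_mul (sq_nonneg B), Real.sqrt_sq hB0.le]
    have hsq : 0 < Real.sqrt (1 - k^2 * Real.sin θ^2) := Real.sqrt_pos.mpr h1k
    field_simp
    ring
  have key4 : ∫ θ in (0:ℝ)..(π/2), (G θ + G (-θ))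
      = (1/B) * ∫ θ in (0:ℝ)..(π/2), 1 / Real.sqrt (1 - k^2 * Real.sin θ ^ 2) := by
    rw [← intervalIntegral.integral_const_mul]
    apply intervalIntegral.integral_congr
    intro θ _
    exact key3 θ
  rw [key1, key2, key4, ← ellipticK_eq_trig]
  have harg : b * (a^2-1) / (a * (b^2-1)) = k := by
    rw [hk, hA, hB]; field_simp
  have hb2 : b^2 - 1 ≠ 0 := by nlinarith
  have hBne : b - 1/b ≠ 0 := by rw [← hB]; exact hB0.ne'
  have hcoef : b / (b^2 - 1) = 1/B := by
    rw [hB, div_eq_div_iff hb2 hBne]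
    field_simp
  rw [harg, hcoef]
end

section
/- Let a, b be real numbers with 1 < a < b. Then ∫_{b}^{∞} dx/√((x²−a²)(x²−1/a²)(x²−b²)(x²−1/b²)) = (1/2)·( (b/(b²−1))·K( b(a²−1)/(a(b²−1)) ) − (b/(b²+1))·K( b(a²+1)/(a(b²+1)) ) ). (The polynomial (x²−a²)(x²−1/a²)(x²−b²)(x²−1/b²) is nonnegative for x ∈ [b,∞), so the integrand is real.) -/
open MeasureTheory Real

open Set
open MeasureTheory Real Set

lemma image_one_sub : (fun x : ℝ => 1 - x) '' Ioo 0 1 = Ioo 0 1 := by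
  ext y; constructor
  · rintro ⟨x, ⟨hx0, hx1⟩, rfl⟩; simp only []; constructor <;> linarith
  · rintro ⟨hy0, hy1⟩; exact ⟨1 - y, ⟨by linarith, by linarith⟩, by ring⟩

lemma integrableOn_one_sub_rpow : IntegrableOn (fun s : ℝ => (1 - s) ^ (-(1/2) : ℝ)) (Ioo 0 1) := by
  have hder : ∀ x ∈ Ioo (0:ℝ) 1, HasDerivWithinAt (fun x : ℝ => 1 - x) (-1) (Ioo 0 1) x := by
    intro x _
    simpa using ((hasDerivAt_id x).const_sub 1).hasDerivWithinAt
  have hinj : InjOn (fun x : ℝ => 1 - x) (Ioo 0 1) := fun x _ y _ h => by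
    dsimp at h; linarith
  have := (MeasureTheory.integrableOn_image_iff_integrableOn_abs_deriv_smul measurableSet_Ioo
    hder hinj (fun x : ℝ => x ^ (-(1/2) : ℝ)))
  rw [image_one_sub] at this
  have hbase : IntegrableOn (fun x : ℝ => x ^ (-(1/2) : ℝ)) (Ioo 0 1) := by
    have := (intervalIntegral.intervalIntegrable_rpow' (a := 0) (b := 1)
      (r := (-(1/2) : ℝ)) (by norm_num)).1
    exact (this.mono_set Ioo_subset_Ioc_self)
  have h2 := this.1 hbase
  simpa using h2

lemma integrableOn_Kint {k : ℝ} (hk0 : 0 ≤ k) (hk1 : k < 1) :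
    IntegrableOn (fun s : ℝ => 1 / Real.sqrt ((1 - s ^ 2) * (1 - k ^ 2 * s ^ 2))) (Ioo 0 1) := by
  have hk2 : (0:ℝ) < 1 - k ^ 2 := by nlinarith
  have hmeas : AEStronglyMeasurable
      (fun s : ℝ => 1 / Real.sqrt ((1 - s ^ 2) * (1 - k ^ 2 * s ^ 2)))
      (volume.restrict (Ioo 0 1)) := by
    apply Measurable.aestronglyMeasurable
    fun_prop
  have hbound : IntegrableOn (fun s : ℝ => (Real.sqrt (1 - k^2))⁻¹ * (1 - s) ^ (-(1/2) : ℝ)) (Ioo 0 1) :=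
    integrableOn_one_sub_rpow.const_mul _
  apply hbound.mono' hmeas
  rw [ae_restrict_iff' measurableSet_Ioo]
  filter_upwards with s hs
  obtain ⟨hs0, hs1⟩ := hs
  have h1 : (0:ℝ) < 1 - s := by linarith
  have h2 : (1:ℝ) - s ≤ 1 - s ^ 2 := by nlinarith
  have h3 : 1 - k ^ 2 ≤ 1 - k ^ 2 * s ^ 2 := by nlinarith
  have hden : Real.sqrt ((1 - s) * (1 - k ^ 2)) ≤ Real.sqrt ((1 - s ^ 2) * (1 - k ^ 2 * s ^ 2)) := by
    apply Real.sqrt_le_sqrt; nlinarith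
  have hdenpos : (0:ℝ) < Real.sqrt ((1 - s) * (1 - k ^ 2)) :=
    Real.sqrt_pos.2 (by positivity)
  rw [Real.norm_eq_abs, abs_of_nonneg (by positivity)]
  have : 1 / Real.sqrt ((1 - s ^ 2) * (1 - k ^ 2 * s ^ 2)) ≤ 1 / Real.sqrt ((1 - s) * (1 - k ^ 2)) :=
    one_div_le_one_div_of_le hdenpos hden
  refine this.trans (le_of_eq ?_)
  rw [Real.sqrt_mul h1.le, Real.rpow_neg h1.le, ← Real.sqrt_eq_rpow]
  field_simp


lemma image_div_Ioo {B : ℝ} (hB : 0 < B) : (fun s : ℝ => B / s) '' Ioo 0 1 = Ioi B := by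
  ext p; constructor
  · rintro ⟨s, ⟨hs0, hs1⟩, rfl⟩
    simp only [mem_Ioi]
    rw [lt_div_iff₀ hs0]
    nlinarith
  · intro hp
    rw [mem_Ioi] at hp
    have hp0 : 0 < p := hB.trans hp
    exact ⟨B / p, ⟨by positivity, (div_lt_one hp0).2 hp⟩, by field_simp⟩

lemma hasDeriv_div {B : ℝ} : ∀ s ∈ Ioo (0:ℝ) 1,
    HasDerivWithinAt (fun s : ℝ => B / s) (-(B / s ^ 2)) (Ioo 0 1) s := by
  intro s hs
  have hs0 : s ≠ 0 := ne_of_gt hs.1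
  have h := ((hasDerivAt_inv hs0).const_mul B).hasDerivWithinAt (s := Ioo (0:ℝ) 1)
  simp only [div_eq_mul_inv]
  rw [show -(B * (s ^ 2)⁻¹) = B * -(s ^ 2)⁻¹ by ring]
  exact h

lemma inj_div {B : ℝ} (hB : 0 < B) : InjOn (fun s : ℝ => B / s) (Ioo 0 1) := by
  intro x hx y hy h
  dsimp at h
  have hx0 : x ≠ 0 := ne_of_gt hx.1
  have hy0 : y ≠ 0 := ne_of_gt hy.1
  field_simp at h
  linarith

lemma sqrt_arg_eq {A B s : ℝ} (hA : 0 < A) (hAB : A < B) (hs : s ∈ Ioo (0:ℝ) 1) :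
    Real.sqrt (((B/s)^2 - A^2) * ((B/s)^2 - B^2))
      = (B^2 / s^2) * Real.sqrt ((1 - s^2) * (1 - (A/B)^2 * s^2)) := by
  have hs0 : s ≠ 0 := ne_of_gt hs.1
  have hB : (0:ℝ) < B := hA.trans hAB
  have harg : ((B/s)^2 - A^2) * ((B/s)^2 - B^2)
      = (B^2/s^2)^2 * ((1 - s^2) * (1 - (A/B)^2 * s^2)) := by
    field_simp
  rw [harg, Real.sqrt_mul (sq_nonneg _), Real.sqrt_sq (by positivity)]

lemma J_eq {A B : ℝ} (hA : 0 < A) (hAB : A < B) :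
    IntegrableOn (fun p : ℝ => 1 / Real.sqrt ((p^2 - A^2) * (p^2 - B^2))) (Ioi B) ∧
    (∫ p in Ioi B, 1 / Real.sqrt ((p^2 - A^2) * (p^2 - B^2)))
      = (1/B) * ellipticK (A/B) := by
  have hB : (0:ℝ) < B := hA.trans hAB
  set g : ℝ → ℝ := fun p => 1 / Real.sqrt ((p^2 - A^2) * (p^2 - B^2)) with hg
  have key : ∀ s ∈ Ioo (0:ℝ) 1,
      |(-(B / s ^ 2))| • g (B / s)
        = (1/B) * (1 / Real.sqrt ((1 - s^2) * (1 - (A/B)^2 * s^2))) := by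
    intro s hs
    have hs0 : (0:ℝ) < s := hs.1
    rw [hg]
    simp only [smul_eq_mul]
    rw [abs_neg, abs_of_pos (by positivity)]
    rw [sqrt_arg_eq hA hAB hs]
    have hsq : Real.sqrt ((1 - s^2) * (1 - (A/B)^2 * s^2)) ≠ 0 := by
      have h1 : (0:ℝ) < 1 - s^2 := by nlinarith [hs.1, hs.2]
      have h2 : (0:ℝ) < 1 - (A/B)^2 * s^2 := by
        have : (A/B)^2 < 1 := by
          rw [div_pow, div_lt_one (by positivity)]
          nlinarith
        nlinarith [sq_nonneg s, hs.2, hs.1, this]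
      positivity
    set c := Real.sqrt ((1 - s^2) * (1 - (A/B)^2 * s^2)) with hc
    have hs' : s ≠ 0 := ne_of_gt hs0
    have hB' : B ≠ 0 := ne_of_gt hB
    field_simp
  have himg := image_div_Ioo hB
  have hk0 : 0 ≤ A/B := by positivity
  have hk1 : A/B < 1 := (div_lt_one hB).2 hAB
  have hKint : IntegrableOn
      (fun s : ℝ => 1 / Real.sqrt ((1 - s ^ 2) * (1 - (A/B) ^ 2 * s ^ 2))) (Ioo 0 1) :=
    integrableOn_Kint hk0 hk1
  constructor
  · rw [← himg, MeasureTheory.integrableOn_image_iff_integrableOn_abs_deriv_smul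
      measurableSet_Ioo hasDeriv_div (inj_div hB) g]
    exact IntegrableOn.congr_fun (hKint.const_mul (1/B))
      (fun s hs => (key s hs).symm) measurableSet_Ioo
  · rw [← himg, MeasureTheory.integral_image_eq_integral_abs_deriv_smul
      measurableSet_Ioo hasDeriv_div (inj_div hB) g]
    rw [setIntegral_congr_fun measurableSet_Ioo key]
    rw [integral_const_mul]
    congr 1
    rw [ellipticK, intervalIntegral.integral_of_le (by norm_num),
      MeasureTheory.integral_Ioc_eq_integral_Ioo]


lemma phi_mono {x y : ℝ} (hx : 0 < x) (hxy : x < y) : x - 1/x < y - 1/y := by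
  have hy : 0 < y := hx.trans hxy
  have : 1/y < 1/x := one_div_lt_one_div_of_lt hx hxy
  linarith

lemma psi_mono {x y : ℝ} (hx : 1 ≤ x) (hxy : x < y) : x + 1/x < y + 1/y := by
  have hx0 : 0 < x := by linarith
  have hy0 : 0 < y := by linarith
  have h : y + 1/y - (x + 1/x) = (y - x)*(x*y - 1)/(x*y) := by field_simp; ring
  have hpos : (0:ℝ) < (y - x)*(x*y - 1)/(x*y) := by
    apply div_pos
    · apply mul_pos (by linarith)
      nlinarith
    · positivity
  linarith

lemma image_phi {c : ℝ} (hc : 0 < c) :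
    (fun x : ℝ => x - 1/x) '' Ioi c = Ioi (c - 1/c) := by
  ext y; constructor
  · rintro ⟨x, hx, rfl⟩
    exact phi_mono hc hx
  · intro hy
    rw [mem_Ioi] at hy
    set s := Real.sqrt (y^2 + 4) with hsdef
    have hs : s^2 = y^2 + 4 := Real.sq_sqrt (by positivity)
    have habs : |y| < s := by
      rw [← Real.sqrt_sq_eq_abs]
      exact Real.sqrt_lt_sqrt (sq_nonneg y) (by linarith)
    have hys : -y < s := by
      have := neg_abs_le y
      linarith [habs]
    set x := (y + s)/2 with hxdef
    have hx0 : 0 < x := by rw [hxdef]; linarith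
    have hx2 : x*x - y*x - 1 = 0 := by rw [hxdef]; linear_combination hs/4
    have hval : x - 1/x = y := by
      field_simp
      linarith [hx2]
    refine ⟨x, ?_, hval⟩
    rw [mem_Ioi]
    by_contra h
    push_neg at h
    rcases eq_or_lt_of_le h with h' | h'
    · rw [h'] at hval; linarith
    · have := phi_mono hx0 h'
      linarith [hval]

lemma image_psi {c : ℝ} (hc : 1 < c) :
    (fun x : ℝ => x + 1/x) '' Ioi c = Ioi (c + 1/c) := by
  ext y; constructor
  · rintro ⟨x, hx, rfl⟩
    exact psi_mono hc.le hx
  · intro hy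
    rw [mem_Ioi] at hy
    have hc1 : 2 < c + 1/c := by
      have h0 : 0 < c := by linarith
      have : c + 1/c - 2 = (c-1)^2/c := by field_simp; ring
      nlinarith [sq_nonneg (c-1), div_pos (by nlinarith : (0:ℝ) < (c-1)^2) h0]
    have hy2 : 2 < y := by linarith
    set s := Real.sqrt (y^2 - 4) with hsdef
    have hs : s^2 = y^2 - 4 := Real.sq_sqrt (by nlinarith)
    have hs0 : 0 ≤ s := Real.sqrt_nonneg _
    set x := (y + s)/2 with hxdef
    have hx1 : 1 < x := by rw [hxdef]; linarith
    have hx0 : 0 < x := by linarith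
    have hx2 : x*x - y*x + 1 = 0 := by rw [hxdef]; linear_combination hs/4
    have hval : x + 1/x = y := by
      field_simp
      linarith [hx2]
    refine ⟨x, ?_, hval⟩
    rw [mem_Ioi]
    by_contra h
    push_neg at h
    rcases eq_or_lt_of_le h with h' | h'
    · rw [h'] at hval; linarith
    · have := psi_mono hx1.le h'
      linarith [hval]

lemma hasDeriv_phi {b : ℝ} (hb : 0 < b) : ∀ x ∈ Ioi b,
    HasDerivWithinAt (fun x : ℝ => x - 1/x) (1 + 1/x^2) (Ioi b) x := by
  intro x hx
  have hx0 : x ≠ 0 := ne_of_gt (hb.trans hx)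
  have h := ((hasDerivAt_id x).sub (hasDerivAt_inv hx0)).hasDerivWithinAt (s := Ioi b)
  simp only [one_div]
  rw [show (1:ℝ) + (x^2)⁻¹ = 1 - -(x^2)⁻¹ by ring]
  exact h

lemma hasDeriv_psi {b : ℝ} (hb : 0 < b) : ∀ x ∈ Ioi b,
    HasDerivWithinAt (fun x : ℝ => x + 1/x) (1 - 1/x^2) (Ioi b) x := by
  intro x hx
  have hx0 : x ≠ 0 := ne_of_gt (hb.trans hx)
  have h := ((hasDerivAt_id x).add (hasDerivAt_inv hx0)).hasDerivWithinAt (s := Ioi b)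
  simp only [one_div]
  rw [show (1:ℝ) - (x^2)⁻¹ = 1 + -(x^2)⁻¹ by ring]
  exact h

lemma inj_phi {b : ℝ} (hb : 0 < b) : InjOn (fun x : ℝ => x - 1/x) (Ioi b) := by
  intro x hx y hy h
  dsimp at h
  rcases lt_trichotomy x y with h' | h' | h'
  · exact absurd h (ne_of_lt (phi_mono (hb.trans hx) h'))
  · exact h'
  · exact absurd h.symm (ne_of_lt (phi_mono (hb.trans hy) h'))

lemma inj_psi {b : ℝ} (hb : 1 < b) : InjOn (fun x : ℝ => x + 1/x) (Ioi b) := by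
  intro x hx y hy h
  dsimp at h
  rcases lt_trichotomy x y with h' | h' | h'
  · exact absurd h (ne_of_lt (psi_mono (hb.trans hx).le h'))
  · exact h'
  · exact absurd h.symm (ne_of_lt (psi_mono (hb.trans hy).le h'))


set_option maxHeartbeats 4000000 in
theorem stmt_5 (a b : ℝ) (ha : 1 < a) (hab : a < b) :
    (∫ x in Set.Ioi b,
        1 / Real.sqrt ((x^2 - a^2) * (x^2 - 1/a^2) * (x^2 - b^2) * (x^2 - 1/b^2))) =
      (1/2) * ((b / (b^2 - 1)) * ellipticK (b * (a^2 - 1) / (a * (b^2 - 1))) -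
        (b / (b^2 + 1)) * ellipticK (b * (a^2 + 1) / (a * (b^2 + 1)))) := by
  have hb1 : 1 < b := ha.trans hab
  have ha0 : 0 < a := by linarith
  have hb0 : 0 < b := by linarith
  have ha' : a ≠ 0 := ne_of_gt ha0
  have hb' : b ≠ 0 := ne_of_gt hb0
  set A := a - 1/a with hA_def
  set B := b - 1/b with hB_def
  set A' := a + 1/a with hA'_def
  set B' := b + 1/b with hB'_def
  have hA : 0 < A := by
    rw [hA_def]
    have h1 : 1/a < 1 := by rw [div_lt_one ha0]; exact ha
    linarith
  have hAB : A < B := phi_mono ha0 hab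
  have hA2 : 0 < A' := by rw [hA'_def]; positivity
  have hA'B' : A' < B' := psi_mono ha.le hab
  obtain ⟨hI1, hV1⟩ := J_eq hA hAB
  obtain ⟨hI2, hV2⟩ := J_eq hA2 hA'B'
  set f₁ : ℝ → ℝ := fun p => 1 / Real.sqrt ((p^2 - A^2) * (p^2 - B^2)) with hf₁
  set f₂ : ℝ → ℝ := fun p => 1 / Real.sqrt ((p^2 - A'^2) * (p^2 - B'^2)) with hf₂
  have himg1 := image_phi hb0
  have himg2 := image_psi hb1
  rw [← hB_def] at himg1
  rw [← hB'_def] at himg2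
  have hderiv1 := hasDeriv_phi hb0
  have hderiv2 := hasDeriv_psi hb0
  have hsub1 : (∫ p in Set.Ioi B, f₁ p)
      = ∫ x in Set.Ioi b, |1 + 1/x^2| • f₁ (x - 1/x) := by
    rw [← himg1]
    exact MeasureTheory.integral_image_eq_integral_abs_deriv_smul
      (f' := fun x => 1 + 1/x^2) measurableSet_Ioi hderiv1 (inj_phi hb0) f₁
  have hsub2 : (∫ p in Set.Ioi B', f₂ p)
      = ∫ x in Set.Ioi b, |1 - 1/x^2| • f₂ (x + 1/x) := by
    rw [← himg2]
    exact MeasureTheory.integral_image_eq_integral_abs_deriv_smul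
      (f' := fun x => 1 - 1/x^2) measurableSet_Ioi hderiv2 (inj_psi hb1) f₂
  have hint1 : IntegrableOn (fun x => |1 + 1/x^2| • f₁ (x - 1/x)) (Set.Ioi b) := by
    rw [← MeasureTheory.integrableOn_image_iff_integrableOn_abs_deriv_smul
      (f' := fun x => 1 + 1/x^2) measurableSet_Ioi hderiv1 (inj_phi hb0) f₁, himg1]
    exact hI1
  have hint2 : IntegrableOn (fun x => |1 - 1/x^2| • f₂ (x + 1/x)) (Set.Ioi b) := by
    rw [← MeasureTheory.integrableOn_image_iff_integrableOn_abs_deriv_smul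
      (f' := fun x => 1 - 1/x^2) measurableSet_Ioi hderiv2 (inj_psi hb1) f₂, himg2]
    exact hI2
  have hpt : ∀ x ∈ Set.Ioi b,
      1 / Real.sqrt ((x^2 - a^2) * (x^2 - 1/a^2) * (x^2 - b^2) * (x^2 - 1/b^2))
        = (1/2) * (|1 + 1/x^2| • f₁ (x - 1/x) - |1 - 1/x^2| • f₂ (x + 1/x)) := by
    intro x hx
    rw [Set.mem_Ioi] at hx
    have hx1 : 1 < x := hb1.trans hx
    have hx0 : 0 < x := by linarith
    have hx' : x ≠ 0 := ne_of_gt hx0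
    have hq1 : (x^2 - a^2) * (x^2 - 1/a^2) * (x^2 - b^2) * (x^2 - 1/b^2)
        = x^4 * (((x - 1/x)^2 - A^2) * ((x - 1/x)^2 - B^2)) := by
      rw [hA_def, hB_def]; field_simp; ring
    have hq2 : (x^2 - a^2) * (x^2 - 1/a^2) * (x^2 - b^2) * (x^2 - 1/b^2)
        = x^4 * (((x + 1/x)^2 - A'^2) * ((x + 1/x)^2 - B'^2)) := by
      rw [hA'_def, hB'_def]; field_simp; ring
    have hPpos : (0:ℝ) < (x^2 - a^2) * (x^2 - 1/a^2) * (x^2 - b^2) * (x^2 - 1/b^2) := by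
      have hax : a < x := by linarith
      have h1 : a^2 < x^2 := by
        exact pow_lt_pow_left₀ hax (by linarith) (by norm_num)
      have hx2 : 1 < x^2 := by nlinarith
      have h2 : 1/a^2 < x^2 := by
        have ha2 : 1 < a^2 := by nlinarith
        have : 1/a^2 < 1 := by rw [div_lt_one (by positivity)]; exact ha2
        linarith
      have h3 : b^2 < x^2 := pow_lt_pow_left₀ hx (by linarith) (by norm_num)
      have h4 : 1/b^2 < x^2 := by
        have hb2 : 1 < b^2 := by nlinarith
        have : 1/b^2 < 1 := by rw [div_lt_one (by positivity)]; exact hb2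
        linarith
      have := mul_pos (mul_pos (mul_pos (by linarith : (0:ℝ) < x^2 - a^2)
        (by linarith : (0:ℝ) < x^2 - 1/a^2)) (by linarith : (0:ℝ) < x^2 - b^2))
        (by linarith : (0:ℝ) < x^2 - 1/b^2)
      linarith
    have hx4 : (0:ℝ) < x^4 := pow_pos hx0 4
    have hQ1pos : (0:ℝ) < ((x - 1/x)^2 - A^2) * ((x - 1/x)^2 - B^2) := by
      have h := hPpos; rw [hq1] at h
      exact (mul_pos_iff_of_pos_left hx4).mp h
    have hQ2pos : (0:ℝ) < ((x + 1/x)^2 - A'^2) * ((x + 1/x)^2 - B'^2) := by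
      have h := hPpos; rw [hq2] at h
      exact (mul_pos_iff_of_pos_left hx4).mp h
    have hQeq : ((x + 1/x)^2 - A'^2) * ((x + 1/x)^2 - B'^2)
        = ((x - 1/x)^2 - A^2) * ((x - 1/x)^2 - B^2) := by
      have h4 : (0:ℝ) < x^4 := pow_pos hx0 4
      have := hq1.symm.trans hq2
      exact (mul_left_cancel₀ (ne_of_gt h4) this).symm
    rw [hq1]
    rw [show x^4 = (x^2)^2 by ring, Real.sqrt_mul (sq_nonneg _), Real.sqrt_sq (sq_nonneg x)]
    rw [hf₁, hf₂]
    simp only [smul_eq_mul]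
    rw [hQeq]
    have hsQ : (0:ℝ) < Real.sqrt (((x - 1/x)^2 - A^2) * ((x - 1/x)^2 - B^2)) :=
      Real.sqrt_pos.2 hQ1pos
    have habs2 : (0:ℝ) < 1 - 1/x^2 := by
      have hx2 : 1 < x^2 := by nlinarith
      have : 1/x^2 < 1 := by rw [div_lt_one (by positivity)]; exact hx2
      linarith
    rw [abs_of_pos (by positivity : (0:ℝ) < 1 + 1/x^2), abs_of_pos habs2]
    set c := Real.sqrt (((x - 1/x)^2 - A^2) * ((x - 1/x)^2 - B^2)) with hc
    have hc0 : c ≠ 0 := ne_of_gt hsQ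
    field_simp
    ring
  rw [MeasureTheory.setIntegral_congr_fun measurableSet_Ioi hpt]
  rw [MeasureTheory.integral_const_mul]
  rw [MeasureTheory.integral_sub hint1 hint2]
  rw [← hsub1, ← hsub2, hV1, hV2]
  have hb2 : b^2 - 1 ≠ 0 := by nlinarith
  have hb2' : b^2 + 1 ≠ 0 := by positivity
  have hBne : B ≠ 0 := ne_of_gt (hA.trans hAB)
  have hB'ne : B' ≠ 0 := ne_of_gt (hA2.trans hA'B')
  have hden2 : a*(b^2-1) ≠ 0 := mul_ne_zero ha' hb2
  have hden4 : a*(b^2+1) ≠ 0 := mul_ne_zero ha' hb2'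
  have e1 : 1/B = b/(b^2-1) := by
    rw [div_eq_div_iff hBne hb2, hB_def]; field_simp
  have e2 : A/B = b*(a^2-1)/(a*(b^2-1)) := by
    rw [div_eq_div_iff hBne hden2, hA_def, hB_def]; field_simp
  have e3 : 1/B' = b/(b^2+1) := by
    rw [div_eq_div_iff hB'ne hb2', hB'_def]; field_simp
  have e4 : A'/B' = b*(a^2+1)/(a*(b^2+1)) := by
    rw [div_eq_div_iff hB'ne hden4, hA'_def, hB'_def]; field_simp
  rw [e1, e2, e3, e4]
end

section
/- Let a, b be real numbers with 1 < a < b. Then π = (2/a)·√( (b²−a²)(1−a²b²)/(1−b⁴) ) · ( (1+b²)·K( b(a²−1)/(a(b²−1)) ) + (1−b²)·K( b(a²+1)/(a(b²+1)) ) ) / F_D^(3)(1/2; 1/2,1/2,1/2; 2 | 1/(1−b⁴), 1/(1−a²b²), a²/(a²−b²) ). -/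
set_option maxHeartbeats 1000000
open Set



open MeasureTheory Real

lemma integrableK {k : ℝ} (hk : k^2 < 1) :
    IntegrableOn (fun t => 1 / Real.sqrt ((1 - t^2) * (1 - k^2*t^2))) (Set.Ioo (0:ℝ) 1) := by
  have hM : (0:ℝ) < Real.sqrt (1 - k^2) := Real.sqrt_pos.2 (by linarith)
  have hbint : IntegrableOn
      (fun t : ℝ => (Real.sqrt (1 - k^2))⁻¹ * (1 - t) ^ (-(1/2) : ℝ)) (Set.Ioo (0:ℝ) 1) := by
    have h1 : IntervalIntegrable (fun x : ℝ => x ^ (-(1/2) : ℝ)) volume 0 1 :=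
      intervalIntegral.intervalIntegrable_rpow' (by norm_num)
    have h2 := (h1.comp_sub_left 1)
    simp only [sub_zero, sub_self] at h2
    have h3 := (h2.symm.const_mul (Real.sqrt (1 - k^2))⁻¹)
    rwa [intervalIntegrable_iff_integrableOn_Ioo_of_le (by norm_num : (0:ℝ) ≤ 1)] at h3
  refine Integrable.mono' hbint ?_ ?_
  · refine (Measurable.aestronglyMeasurable ?_)
    exact measurable_const.div
      (Real.continuous_sqrt.measurable.comp (by fun_prop))
  · rw [ae_restrict_iff' measurableSet_Ioo]
    refine ae_of_all _ fun t ht => ?_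
    obtain ⟨ht0, ht1⟩ := ht
    have hk0 : (0:ℝ) ≤ k^2 := sq_nonneg k
    have hX : (1 - k^2) * (1 - t) ≤ (1 - t^2) * (1 - k^2*t^2) := by
      nlinarith [mul_nonneg (mul_nonneg (sub_nonneg.2 ht1.le) ht0.le)
          (sub_nonneg.2 (by nlinarith : k^2*t^2 ≤ 1)),
        mul_nonneg (mul_nonneg (sub_nonneg.2 ht1.le) hk0)
          (sub_nonneg.2 (by nlinarith : t^2 ≤ 1))]
    have hXpos : (0:ℝ) < (1 - k^2) * (1 - t) := by nlinarith
    have hs : Real.sqrt ((1 - k^2) * (1 - t)) ≤ Real.sqrt ((1 - t^2) * (1 - k^2*t^2)) :=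
      Real.sqrt_le_sqrt hX
    have hspos : 0 < Real.sqrt ((1 - k^2) * (1 - t)) := Real.sqrt_pos.2 hXpos
    have hnorm : ‖1 / Real.sqrt ((1 - t^2) * (1 - k^2*t^2))‖
        = 1 / Real.sqrt ((1 - t^2) * (1 - k^2*t^2)) := by
      rw [Real.norm_eq_abs, abs_of_nonneg]
      positivity
    rw [hnorm]
    have h4 : 1 / Real.sqrt ((1 - t^2) * (1 - k^2*t^2))
        ≤ 1 / Real.sqrt ((1 - k^2) * (1 - t)) :=
      one_div_le_one_div_of_le hspos hs
    refine h4.trans (le_of_eq ?_)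
    rw [Real.sqrt_mul (by linarith : (0:ℝ) ≤ 1 - k^2), Real.rpow_neg (by linarith : (0:ℝ) ≤ 1 - t),
      ← Real.sqrt_eq_rpow]
    rw [one_div, mul_inv]


lemma K_Ioo (k : ℝ) : ellipticK k
    = ∫ t in Set.Ioo (0:ℝ) 1, 1 / Real.sqrt ((1 - t ^ 2) * (1 - k ^ 2 * t ^ 2)) := by
  rw [ellipticK, intervalIntegral.integral_of_le zero_le_one, integral_Ioc_eq_integral_Ioo]

lemma branchK (a b ε : ℝ) (ha : 1 < a) (hab : a < b) (hε : ε = 1 ∨ ε = -1) :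
    (ellipticK (b * (a^2 - ε) / (a * (b^2 - ε))) =
      ∫ u in Set.Ioo (0:ℝ) 1,
        a * (b^2 - ε) * (b^2 + ε*(1-u)) /
          (2 * Real.sqrt (1-u) *
            Real.sqrt (u * (u + b^4 - 1) * (u + a^2*b^2 - 1) * (a^2*u + b^2 - a^2))))
    ∧ IntegrableOn (fun u => a * (b^2 - ε) * (b^2 + ε*(1-u)) /
          (2 * Real.sqrt (1-u) *
            Real.sqrt (u * (u + b^4 - 1) * (u + a^2*b^2 - 1) * (a^2*u + b^2 - a^2))))
        (Set.Ioo (0:ℝ) 1) := by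
  have hεle : ε ≤ 1 := by rcases hε with h|h <;> rw [h] <;> norm_num
  have hεge : (-1:ℝ) ≤ ε := by rcases hε with h|h <;> rw [h] <;> norm_num
  have ha0 : 0 < a := by linarith
  have hb1 : 1 < b := lt_trans ha hab
  have hb0 : 0 < b := by linarith
  have ha2 : 1 < a^2 := by nlinarith
  have ha2b2 : a^2 < b^2 := by nlinarith
  have hb21 : 1 < b^2 := by nlinarith
  have hb41 : 1 < b^4 := by nlinarith
  have hab1 : 1 < a*b := by nlinarith
  have ha2b21 : 1 < a^2*b^2 := by nlinarith
  have hc : 0 < b^2 - ε := by linarith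
  have hcnum : 0 < a^2 - ε := by linarith
  set φ : ℝ → ℝ := fun u => (b^2-ε) * Real.sqrt (1-u) / ((b^2-ε) + ε*u) with hφdef
  set D : ℝ → ℝ := fun u =>
    -((b^2-ε) * (b^2 + ε*(1-u)) / (2 * Real.sqrt (1-u) * ((b^2-ε) + ε*u)^2)) with hDdef
  set k : ℝ := b * (a^2 - ε) / (a * (b^2 - ε)) with hkdef
  have hk0 : 0 < k := div_pos (mul_pos hb0 hcnum) (mul_pos ha0 hc)
  have hknum : b * (a^2 - ε) < a * (b^2 - ε) := by
    nlinarith [mul_pos (sub_pos.2 hab) (show 0 < a*b + ε by nlinarith)]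
  have hk1 : k < 1 := (div_lt_one (mul_pos ha0 hc)).2 hknum
  have hk2 : k^2 < 1 := by nlinarith
  have hden : ∀ u ∈ Set.Icc (0:ℝ) 1, 0 < (b^2-ε) + ε*u := by
    intro u hu
    nlinarith [mul_nonneg (by linarith : (0:ℝ) ≤ 1 - ε) (by linarith [hu.2] : (0:ℝ) ≤ 1 - u),
      hu.1, hu.2]
  have hnum2 : ∀ u ∈ Set.Icc (0:ℝ) 1, 0 < b^2 + ε*(1-u) := by
    intro u hu
    nlinarith [mul_nonneg (by linarith : (0:ℝ) ≤ 1 - ε) (by linarith [hu.1] : (0:ℝ) ≤ u),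
      hu.1, hu.2]
  have hpoly1 : ∀ u : ℝ, ((b^2-ε) + ε*u)^2 - (b^2-ε)^2*(1-u) = u * (u + b^4 - 1) := by
    intro u; rcases hε with h|h <;> rw [h] <;> ring
  have hpoly2 : ∀ u : ℝ, a^2*((b^2-ε) + ε*u)^2 - b^2*(a^2-ε)^2*(1-u)
      = (u + a^2*b^2 - 1) * (a^2*u + b^2 - a^2) := by
    intro u; rcases hε with h|h <;> rw [h] <;> ring
  have hQpos : ∀ u ∈ Set.Ioo (0:ℝ) 1,
      0 < u * (u + b^4 - 1) * (u + a^2*b^2 - 1) * (a^2*u + b^2 - a^2) := by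
    intro u hu
    have := hu.1
    have h1 : 0 < u + b^4 - 1 := by nlinarith
    have h2 : 0 < u + a^2*b^2 - 1 := by nlinarith
    have h3 : 0 < a^2*u + b^2 - a^2 := by nlinarith [hu.2, sq_nonneg a]
    exact mul_pos (mul_pos (mul_pos hu.1 h1) h2) h3
  -- membership
  have hφmem : ∀ u ∈ Set.Ioo (0:ℝ) 1, φ u ∈ Set.Ioo (0:ℝ) 1 := by
    intro u hu
    have hu' : u ∈ Set.Icc (0:ℝ) 1 := Set.mem_Icc.2 ⟨hu.1.le, hu.2.le⟩
    have hd := hden u hu'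
    have hw : 0 < 1 - u := by linarith [hu.2]
    have hsw : 0 < Real.sqrt (1-u) := Real.sqrt_pos.2 hw
    have hsw2 : Real.sqrt (1-u)^2 = 1-u := Real.sq_sqrt hw.le
    constructor
    · exact div_pos (mul_pos hc hsw) hd
    · rw [div_lt_one hd]
      have hsq : ((b^2-ε) * Real.sqrt (1-u))^2 < ((b^2-ε) + ε*u)^2 := by
        rw [mul_pow, hsw2]
        nlinarith [hpoly1 u, hu.1, hb41]
      have h0 : (0:ℝ) ≤ (b^2-ε) * Real.sqrt (1-u) := by positivity
      exact lt_of_pow_lt_pow_left₀ 2 hd.le hsq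
  -- derivative
  have hφderiv : ∀ u ∈ Set.Ioo (0:ℝ) 1, HasDerivAt φ (D u) u := by
    intro u hu
    have hu' : u ∈ Set.Icc (0:ℝ) 1 := Set.mem_Icc.2 ⟨hu.1.le, hu.2.le⟩
    have hd := hden u hu'
    have hw : 0 < 1 - u := by linarith [hu.2]
    have hsw : 0 < Real.sqrt (1-u) := Real.sqrt_pos.2 hw
    have hsw2 : Real.sqrt (1-u)^2 = 1-u := Real.sq_sqrt hw.le
    have h1 : HasDerivAt (fun u : ℝ => 1 - u) (-1) u := by
      simpa using (hasDerivAt_id u).const_sub 1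
    have h2 : HasDerivAt (fun u : ℝ => Real.sqrt (1-u)) (1/(2*Real.sqrt (1-u)) * (-1)) u :=
      (Real.hasDerivAt_sqrt (by linarith : (1:ℝ)-u ≠ 0)).comp u h1
    have h3 : HasDerivAt (fun u : ℝ => (b^2-ε) + ε*u) ε u := by
      simpa using ((hasDerivAt_id u).const_mul ε).const_add (b^2-ε)
    have h4 := (h2.const_mul (b^2-ε)).div h3 (ne_of_gt hd)
    refine h4.congr_deriv ?_
    rw [hDdef]
    set s := Real.sqrt (1-u) with hs
    have hueq : u = 1 - s^2 := by rw [hsw2]; ring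
    rw [hueq]
    have hsne : s ≠ 0 := ne_of_gt hsw
    have hdne : (b^2-ε) + ε*(1-s^2) ≠ 0 := by rw [← hueq]; exact ne_of_gt hd
    field_simp
    rw [sub_sub_cancel, Real.sqrt_sq hsw.le, mul_div_cancel_left₀ _ hsne]
    ring
  have hcont : ContinuousOn φ (Set.Icc 0 1) := by
    rw [hφdef]
    apply ContinuousOn.div
    · exact (continuous_const.mul
        (Real.continuous_sqrt.comp (continuous_const.sub continuous_id))).continuousOn
    · exact (continuous_const.add (continuous_const.mul continuous_id)).continuousOn
    · intro u hu; exact ne_of_gt (hden u hu)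
  have hanti : StrictAntiOn φ (Set.Icc 0 1) := by
    apply strictAntiOn_of_deriv_neg (convex_Icc 0 1) hcont
    intro u hu
    rw [interior_Icc] at hu
    rw [(hφderiv u hu).deriv]
    have hu' : u ∈ Set.Icc (0:ℝ) 1 := Set.mem_Icc.2 ⟨hu.1.le, hu.2.le⟩
    have hd := hden u hu'
    have hn := hnum2 u hu'
    have hsw : 0 < Real.sqrt (1-u) := Real.sqrt_pos.2 (by linarith [hu.2])
    simp only [hDdef]
    exact neg_lt_zero.2 (div_pos (mul_pos hc hn) (by positivity))
  have hinj : Set.InjOn φ (Set.Ioo 0 1) := (hanti.injOn).mono Set.Ioo_subset_Icc_self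
  have hφ0 : φ 0 = 1 := by
    simp only [hφdef]
    norm_num
    exact ne_of_gt hc
  have hφ1 : φ 1 = 0 := by
    simp [hφdef]
  have himg : φ '' Set.Ioo 0 1 = Set.Ioo 0 1 := by
    apply Set.Subset.antisymm
    · rintro x ⟨u, hu, rfl⟩; exact hφmem u hu
    · have h := intermediate_value_Ioo' zero_le_one hcont
      rw [hφ0, hφ1] at h
      exact h
  have hpt : ∀ u ∈ Set.Ioo (0:ℝ) 1,
      |D u| * (1 / Real.sqrt ((1 - (φ u)^2) * (1 - k^2 * (φ u)^2)))
      = a * (b^2-ε) * (b^2 + ε*(1-u)) /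
          (2 * Real.sqrt (1-u) *
            Real.sqrt (u * (u + b^4 - 1) * (u + a^2*b^2 - 1) * (a^2*u + b^2 - a^2))) := by
    intro u hu
    have hu' : u ∈ Set.Icc (0:ℝ) 1 := Set.mem_Icc.2 ⟨hu.1.le, hu.2.le⟩
    have hd := hden u hu'
    have hn := hnum2 u hu'
    have hw : 0 < 1 - u := by linarith [hu.2]
    have hsw : 0 < Real.sqrt (1-u) := Real.sqrt_pos.2 hw
    have hsw2 : Real.sqrt (1-u)^2 = 1-u := Real.sq_sqrt hw.le
    have hQ := hQpos u hu
    have hφ2 : (φ u)^2 = (b^2-ε)^2*(1-u)/((b^2-ε)+ε*u)^2 := by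
      simp only [hφdef]
      rw [div_pow, mul_pow, hsw2]
    have hX1 : 1 - (φ u)^2 = u*(u+b^4-1)/((b^2-ε)+ε*u)^2 := by
      rw [hφ2]
      field_simp
      linear_combination hpoly1 u
    have hk2φ : k^2 * (φ u)^2 = b^2*(a^2-ε)^2*(1-u)/(a^2*((b^2-ε)+ε*u)^2) := by
      rw [hφ2, hkdef]
      field_simp
    have hX2 : 1 - k^2*(φ u)^2
        = (u+a^2*b^2-1)*(a^2*u+b^2-a^2)/(a^2*((b^2-ε)+ε*u)^2) := by
      rw [hk2φ]
      field_simp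
      linear_combination hpoly2 u
    have hXv : (1 - (φ u)^2) * (1 - k^2*(φ u)^2)
        = (u * (u + b^4 - 1) * (u + a^2*b^2 - 1) * (a^2*u + b^2 - a^2))
          / (a*((b^2-ε)+ε*u)^2)^2 := by
      rw [hX1, hX2]
      field_simp
    have hsX : Real.sqrt ((1 - (φ u)^2) * (1 - k^2*(φ u)^2))
        = Real.sqrt (u * (u + b^4 - 1) * (u + a^2*b^2 - 1) * (a^2*u + b^2 - a^2))
          / (a*((b^2-ε)+ε*u)^2) := by
      rw [hXv, Real.sqrt_div (le_of_lt hQ), Real.sqrt_sq (by positivity)]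
    have habsD : |D u| = (b^2-ε) * (b^2 + ε*(1-u)) / (2 * Real.sqrt (1-u) * ((b^2-ε)+ε*u)^2) := by
      simp only [hDdef]
      rw [abs_neg, abs_of_nonneg]
      exact div_nonneg (mul_nonneg hc.le hn.le) (by positivity)
    rw [habsD, hsX]
    have hsQ : 0 < Real.sqrt (u * (u + b^4 - 1) * (u + a^2*b^2 - 1) * (a^2*u + b^2 - a^2)) :=
      Real.sqrt_pos.2 hQ
    field_simp
  constructor
  · have hsub : (∫ t in Set.Ioo (0:ℝ) 1, 1 / Real.sqrt ((1 - t ^ 2) * (1 - k ^ 2 * t ^ 2)))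
        = ∫ u in Set.Ioo (0:ℝ) 1,
            |D u| • (1 / Real.sqrt ((1 - (φ u) ^ 2) * (1 - k ^ 2 * (φ u) ^ 2))) := by
      conv_lhs => rw [← himg]
      exact integral_image_eq_integral_abs_deriv_smul measurableSet_Ioo
        (fun u hu => (hφderiv u hu).hasDerivWithinAt) hinj _
    rw [K_Ioo, hsub]
    refine setIntegral_congr_fun measurableSet_Ioo fun u hu => ?_
    rw [smul_eq_mul]
    exact hpt u hu
  · have h1 := (integrableOn_image_iff_integrableOn_abs_deriv_smul measurableSet_Ioo
        (fun u hu => (hφderiv u hu).hasDerivWithinAt) hinj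
        (fun t => 1 / Real.sqrt ((1 - t^2) * (1 - k^2*t^2)))).1
        (by rw [himg]; exact integrableK hk2)
    refine h1.congr_fun (fun u hu => ?_) measurableSet_Ioo
    simp only [smul_eq_mul]
    exact hpt u hu


theorem stmt_6 (a b : ℝ) (ha : 1 < a) (hab : a < b) :
    π = (2/a) * Real.sqrt ((b^2 - a^2) * (1 - a^2*b^2) / (1 - b^4)) *
          ((1 + b^2) * ellipticK (b * (a^2 - 1) / (a * (b^2 - 1))) +
            (1 - b^2) * ellipticK (b * (a^2 + 1) / (a * (b^2 + 1)))) /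
        FD3 (1/2) (1/2) (1/2) (1/2) 2
          (1/(1 - b^4)) (1/(1 - a^2*b^2)) (a^2/(a^2 - b^2)) := by
  have ha0 : 0 < a := by linarith
  have hb1 : 1 < b := lt_trans ha hab
  have hb0 : 0 < b := by linarith
  have ha2 : 1 < a^2 := by nlinarith
  have ha2b2 : a^2 < b^2 := by nlinarith
  have hb21 : 1 < b^2 := by nlinarith
  have hb41 : 1 < b^4 := by nlinarith
  have ha2b21 : 1 < a^2*b^2 := by nlinarith
  -- abbreviations
  set C : ℝ := Real.sqrt ((b^4-1)*(a^2*b^2-1)*(b^2-a^2)) with hCdef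
  set S : ℝ := Real.sqrt ((b^2 - a^2) * (1 - a^2*b^2) / (1 - b^4)) with hSdef
  set K₁ : ℝ := ellipticK (b * (a^2 - 1) / (a * (b^2 - 1))) with hK1def
  set K₂ : ℝ := ellipticK (b * (a^2 + 1) / (a * (b^2 + 1))) with hK2def
  set F₁ : ℝ → ℝ := fun u => a * (b^2 - 1) * (b^2 + 1*(1-u)) /
          (2 * Real.sqrt (1-u) *
            Real.sqrt (u * (u + b^4 - 1) * (u + a^2*b^2 - 1) * (a^2*u + b^2 - a^2))) with hF1def
  set F₂ : ℝ → ℝ := fun u => a * (b^2 - (-1)) * (b^2 + (-1)*(1-u)) /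
          (2 * Real.sqrt (1-u) *
            Real.sqrt (u * (u + b^4 - 1) * (u + a^2*b^2 - 1) * (a^2*u + b^2 - a^2))) with hF2def
  obtain ⟨hKe1, hI1⟩ := branchK a b 1 ha hab (Or.inl rfl)
  obtain ⟨hKe2, hI2⟩ := branchK a b (-1) ha hab (Or.inr rfl)
  have hKe1' : K₁ = ∫ u in Set.Ioo (0:ℝ) 1, F₁ u := hKe1
  have hKe2' : K₂ = ∫ u in Set.Ioo (0:ℝ) 1, F₂ u := by
    rw [hK2def, show b * (a^2 + 1) / (a * (b^2 + 1)) = b * (a^2 - (-1)) / (a * (b^2 - (-1))) by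
      norm_num]
    exact hKe2
  set G : ℝ → ℝ := fun u => u ^ ((1:ℝ)/2 - 1) * (1 - u) ^ (2 - (1:ℝ)/2 - 1) *
      (1 - 1/(1 - b^4) * u) ^ (-((1:ℝ)/2)) * (1 - 1/(1 - a^2*b^2) * u) ^ (-((1:ℝ)/2)) *
      (1 - a^2/(a^2 - b^2) * u) ^ (-((1:ℝ)/2)) with hGdef
  -- pointwise identity on Ioo 0 1
  have hpt : ∀ u ∈ Set.Ioo (0:ℝ) 1,
      G u = C/(a*(b^2-1)) * F₁ u - C/(a*(b^2+1)) * F₂ u := by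
    intro u hu
    obtain ⟨hu0, hu1⟩ := hu
    have hw : 0 < 1 - u := by linarith
    have hA1 : 0 < 1 - 1/(1 - b^4) * u := by
      have h1 : 1/(1 - b^4) < 0 := div_neg_of_pos_of_neg one_pos (by linarith)
      nlinarith
    have hA2 : 0 < 1 - 1/(1 - a^2*b^2) * u := by
      have h1 : 1/(1 - a^2*b^2) < 0 := div_neg_of_pos_of_neg one_pos (by linarith)
      nlinarith
    have hA3 : 0 < 1 - a^2/(a^2 - b^2) * u := by
      have h1 : a^2/(a^2 - b^2) < 0 := div_neg_of_pos_of_neg (by positivity) (by linarith)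
      nlinarith
    have hq1 : 0 < u + b^4 - 1 := by linarith
    have hq2 : 0 < u + a^2*b^2 - 1 := by linarith
    have hq3 : 0 < a^2*u + b^2 - a^2 := by nlinarith
    have hQ : 0 < u * (u + b^4 - 1) * (u + a^2*b^2 - 1) * (a^2*u + b^2 - a^2) :=
      mul_pos (mul_pos (mul_pos hu0 hq1) hq2) hq3
    have hCpos : 0 < C := by
      rw [hCdef]
      apply Real.sqrt_pos.2
      have h1 : 0 < b^4 - 1 := by linarith
      have h2 : 0 < a^2*b^2 - 1 := by linarith
      have h3 : 0 < b^2 - a^2 := by linarith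
      positivity
    have e0 : ((1:ℝ)/2 - 1) = -((1:ℝ)/2) := by norm_num
    have e0' : (2 - (1:ℝ)/2 - 1) = (1:ℝ)/2 := by norm_num
    have erpow : ∀ x : ℝ, 0 < x → x ^ (-((1:ℝ)/2)) = (Real.sqrt x)⁻¹ := by
      intro x hx
      rw [Real.rpow_neg hx.le, ← Real.sqrt_eq_rpow]
    simp only [hGdef, hF1def, hF2def]
    rw [e0, e0', erpow u hu0, erpow _ hA1, erpow _ hA2, erpow _ hA3, ← Real.sqrt_eq_rpow]
    set A₁ : ℝ := 1 - 1/(1 - b^4) * u with hA1def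
    set A₂ : ℝ := 1 - 1/(1 - a^2*b^2) * u with hA2def
    set A₃ : ℝ := 1 - a^2/(a^2 - b^2) * u with hA3def
    set sQ := Real.sqrt (u * (u + b^4 - 1) * (u + a^2*b^2 - 1) * (a^2*u + b^2 - a^2)) with hsQdef
    set sw := Real.sqrt (1-u) with hswdef
    have hsw : 0 < sw := Real.sqrt_pos.2 hw
    have hsQ0 : 0 < sQ := Real.sqrt_pos.2 hQ
    have hsw2 : sw^2 = 1-u := Real.sq_sqrt hw.le
    have hsQ2 : sQ^2 = u * (u + b^4 - 1) * (u + a^2*b^2 - 1) * (a^2*u + b^2 - a^2) :=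
      Real.sq_sqrt hQ.le
    have hcomb : C/(a*(b^2-1)) * (a * (b^2-1) * (b^2 + 1*(1-u)) / (2*sw*sQ))
        - C/(a*(b^2+1)) * (a * (b^2 - -1) * (b^2 + -1*(1-u)) / (2*sw*sQ)) = C*sw/sQ := by
      rw [← hsw2]
      have hb21' : b^2 - (1:ℝ) ≠ 0 := ne_of_gt (by linarith)
      have hb21'' : b^2 + (1:ℝ) ≠ 0 := by positivity
      field_simp
      ring
    rw [hcomb]
    have hL : (0:ℝ) ≤ (Real.sqrt u)⁻¹ * sw * (Real.sqrt A₁)⁻¹ * (Real.sqrt A₂)⁻¹ *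
        (Real.sqrt A₃)⁻¹ := by
      apply mul_nonneg
      apply mul_nonneg
      apply mul_nonneg
      apply mul_nonneg
      · exact inv_nonneg.2 (Real.sqrt_nonneg _)
      · exact hsw.le
      · exact inv_nonneg.2 (Real.sqrt_nonneg _)
      · exact inv_nonneg.2 (Real.sqrt_nonneg _)
      · exact inv_nonneg.2 (Real.sqrt_nonneg _)
    have hR : (0:ℝ) ≤ C*sw/sQ := div_nonneg (mul_nonneg hCpos.le hsw.le) hsQ0.le
    have hCC : (0:ℝ) < (b^4-1)*(a^2*b^2-1)*(b^2-a^2) := by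
      have h1 : 0 < b^4 - 1 := by linarith
      have h2 : 0 < a^2*b^2 - 1 := by linarith
      have h3 : 0 < b^2 - a^2 := by linarith
      positivity
    have hQfact : u * (u + b^4 - 1) * (u + a^2*b^2 - 1) * (a^2*u + b^2 - a^2)
        = (u * A₁ * A₂ * A₃) * ((b^4-1)*(a^2*b^2-1)*(b^2-a^2)) := by
      rw [hA1def, hA2def, hA3def]
      have d1 : (1 - b^4) ≠ 0 := by linarith
      have d2 : (1 - a^2*b^2) ≠ 0 := by linarith
      have d3 : (a^2 - b^2) ≠ 0 := by linarith
      have e1 : (1 - 1/(1 - b^4) * u) * (b^4-1) = u + b^4 - 1 := by field_simp; ring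
      have e2 : (1 - 1/(1 - a^2*b^2) * u) * (a^2*b^2-1) = u + a^2*b^2 - 1 := by field_simp; ring
      have e3 : (1 - a^2/(a^2 - b^2) * u) * (b^2-a^2) = a^2*u + b^2 - a^2 := by field_simp; ring
      rw [← e1, ← e2, ← e3]
      ring
    have hsq : ((Real.sqrt u)⁻¹ * sw * (Real.sqrt A₁)⁻¹ * (Real.sqrt A₂)⁻¹ *
        (Real.sqrt A₃)⁻¹)^2 = (C*sw/sQ)^2 := by
      rw [mul_pow, mul_pow, mul_pow, mul_pow, div_pow, mul_pow,
        inv_pow, inv_pow, inv_pow, inv_pow,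
        Real.sq_sqrt hu0.le, Real.sq_sqrt hA1.le, Real.sq_sqrt hA2.le,
        Real.sq_sqrt hA3.le, hsw2, hsQ2, hCdef,
        Real.sq_sqrt hCC.le, hQfact]
      field_simp [hu0.ne', hA1.ne', hA2.ne', hA3.ne', hCC.ne',
        (by nlinarith : b^2*a^2 - 1 ≠ 0), (by linarith : b^4 - 1 ≠ 0), (by linarith : b^2 - a^2 ≠ 0)]
    calc (Real.sqrt u)⁻¹ * sw * (Real.sqrt A₁)⁻¹ * (Real.sqrt A₂)⁻¹ * (Real.sqrt A₃)⁻¹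
        = Real.sqrt (((Real.sqrt u)⁻¹ * sw * (Real.sqrt A₁)⁻¹ * (Real.sqrt A₂)⁻¹ *
            (Real.sqrt A₃)⁻¹)^2) := (Real.sqrt_sq hL).symm
      _ = Real.sqrt ((C*sw/sQ)^2) := by rw [hsq]
      _ = C*sw/sQ := Real.sqrt_sq hR
  -- global positivity constants
  have hCC : (0:ℝ) < (b^4-1)*(a^2*b^2-1)*(b^2-a^2) := by
    have h1 : 0 < b^4 - 1 := by linarith
    have h2 : 0 < a^2*b^2 - 1 := by linarith
    have h3 : 0 < b^2 - a^2 := by linarith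
    positivity
  -- integrability of G
  have hGint : IntegrableOn G (Set.Ioo (0:ℝ) 1) := by
    have h : IntegrableOn
        (fun u => C/(a*(b^2-1)) * F₁ u - C/(a*(b^2+1)) * F₂ u) (Set.Ioo (0:ℝ) 1) :=
      (hI1.const_mul _).sub (hI2.const_mul _)
    exact h.congr_fun (fun u hu => (hpt u hu).symm) measurableSet_Ioo
  -- value of the integral of G
  have hGval : (∫ u in Set.Ioo (0:ℝ) 1, G u)
      = C/(a*(b^2-1)) * K₁ - C/(a*(b^2+1)) * K₂ := by
    rw [setIntegral_congr_fun measurableSet_Ioo hpt,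
      integral_sub (hI1.const_mul _) (hI2.const_mul _),
      integral_const_mul, integral_const_mul, ← hKe1', ← hKe2']
  -- positivity of the integral of G
  have hGpt : ∀ u ∈ Set.Ioo (0:ℝ) 1, 0 < G u := by
    intro u hu
    obtain ⟨hu0, hu1⟩ := hu
    have hA1 : 0 < 1 - 1/(1 - b^4) * u := by
      have h1 : 1/(1 - b^4) < 0 := div_neg_of_pos_of_neg one_pos (by linarith)
      nlinarith
    have hA2 : 0 < 1 - 1/(1 - a^2*b^2) * u := by
      have h1 : 1/(1 - a^2*b^2) < 0 := div_neg_of_pos_of_neg one_pos (by linarith)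
      nlinarith
    have hA3 : 0 < 1 - a^2/(a^2 - b^2) * u := by
      have h1 : a^2/(a^2 - b^2) < 0 := div_neg_of_pos_of_neg (by positivity) (by linarith)
      nlinarith
    simp only [hGdef]
    have hw : (0:ℝ) < 1 - u := by linarith
    exact mul_pos (mul_pos (mul_pos (mul_pos (Real.rpow_pos_of_pos hu0 _)
      (Real.rpow_pos_of_pos hw _)) (Real.rpow_pos_of_pos hA1 _))
      (Real.rpow_pos_of_pos hA2 _)) (Real.rpow_pos_of_pos hA3 _)
  have hGpos : 0 < ∫ u in Set.Ioo (0:ℝ) 1, G u := by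
    have hnn : 0 ≤ᵐ[volume.restrict (Set.Ioo (0:ℝ) 1)] G :=
      (ae_restrict_iff' measurableSet_Ioo).2 (ae_of_all _ fun u hu => (hGpt u hu).le)
    rw [setIntegral_pos_iff_support_of_nonneg_ae hnn hGint]
    have hsub : Set.Ioo (0:ℝ) 1 ⊆ Function.support G ∩ Set.Ioo (0:ℝ) 1 :=
      fun u hu => ⟨ne_of_gt (hGpt u hu), hu⟩
    refine lt_of_lt_of_le ?_ (measure_mono hsub)
    rw [Real.volume_Ioo]
    norm_num
  -- FD3 value
  have hpref : Real.Gamma 2 / (Real.Gamma (1/2) * Real.Gamma (2 - 1/2)) = 2/π := by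
    have h32 : (2:ℝ) - 1/2 = 1/2 + 1 := by norm_num
    rw [Real.Gamma_two, h32, Real.Gamma_add_one (by norm_num : (1/2:ℝ) ≠ 0),
      Real.Gamma_one_half_eq]
    have hss : Real.sqrt π * Real.sqrt π = π := Real.mul_self_sqrt pi_nonneg
    have hsne : Real.sqrt π ≠ 0 := ne_of_gt (Real.sqrt_pos.2 pi_pos)
    field_simp
    exact (Real.sq_sqrt pi_nonneg).symm
  have hFD3 : FD3 (1/2) (1/2) (1/2) (1/2) 2
      (1/(1 - b^4)) (1/(1 - a^2*b^2)) (a^2/(a^2 - b^2))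
      = 2/π * ∫ u in Set.Ioo (0:ℝ) 1, G u := by
    rw [FD3, hpref, intervalIntegral.integral_of_le zero_le_one,
      integral_Ioc_eq_integral_Ioo]
  have hFD3pos : 0 < FD3 (1/2) (1/2) (1/2) (1/2) 2
      (1/(1 - b^4)) (1/(1 - a^2*b^2)) (a^2/(a^2 - b^2)) := by
    rw [hFD3]
    exact mul_pos (div_pos two_pos pi_pos) hGpos
  -- relation between C and S
  have hCS : C = S * (b^4 - 1) := by
    have harg : (b^2 - a^2) * (1 - a^2*b^2) / (1 - b^4)
        = ((b^4-1)*(a^2*b^2-1)*(b^2-a^2)) / (b^4-1)^2 := by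
      rw [div_eq_div_iff (by linarith : (1:ℝ) - b^4 ≠ 0)
        (ne_of_gt (pow_pos (by linarith : (0:ℝ) < b^4 - 1) 2))]
      ring
    rw [hCdef, hSdef, harg, Real.sqrt_div hCC.le,
      Real.sqrt_sq (by linarith : (0:ℝ) ≤ b^4 - 1),
      div_mul_cancel₀ _ (by linarith : (b:ℝ)^4 - 1 ≠ 0)]
  -- final assembly
  rw [eq_div_iff (ne_of_gt hFD3pos), hFD3, hGval, hCS]
  have hb2m : (b:ℝ)^2 - 1 ≠ 0 := by linarith
  have hb2p : (b:ℝ)^2 + 1 ≠ 0 := by positivity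
  field_simp
  ring
end

section
/- Let a, b be real numbers with 1 < a < b. Then π = ( 2√((b²−a²)(a²b²−1)) / (a(b²−1)) ) · K( b(a²−1)/(a(b²−1)) ) / F_D^(3)(1/2; −1/2, 1/2, 1/2; 1 | 1−a⁴, (a⁴−1)b²/(a²−b²), (a⁴−1)/(a²b²−1) ). -/
open MeasureTheory Real

namespace Stmt12Aux
open Set

lemma eq_of_sq_eq {x y : ℝ} (hx : 0 ≤ x) (hy : 0 ≤ y) (h : x ^ 2 = y ^ 2) : x = y := by
  rw [← Real.sqrt_sq hx, h, Real.sqrt_sq hy]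

lemma rpow_neg_half {x : ℝ} (hx : 0 < x) : x ^ (-(1/2) : ℝ) = (Real.sqrt x)⁻¹ := by
  rw [Real.rpow_neg hx.le, Real.sqrt_eq_rpow]

lemma rpow_half (x : ℝ) : x ^ ((1/2) : ℝ) = Real.sqrt x := (Real.sqrt_eq_rpow x).symm

noncomputable def yf (a b w : ℝ) : ℝ :=
  Real.sqrt ((w^2 - 1) * ((a^4 - w^2) * ((w^2 - a^2/b^2) * (a^2*b^2 - w^2))))

noncomputable def qf (a b t : ℝ) : ℝ :=
  1 / Real.sqrt ((1 - t^2) * (1 - (b*(a^2-1)/(a*(b^2-1)))^2 * t^2))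

noncomputable def hfx (a b x : ℝ) : ℝ :=
  1 / Real.sqrt (((a^2-1)^2 - x^2) * (a^2*(b^2-1)^2/b^2 - x^2))

variable {a b : ℝ}

lemma himg1 (ha : 1 < a) :
    (fun w : ℝ => (w^2 - 1)/(a^4 - 1)) '' Ioo 1 (a^2) = Ioo 0 1 := by
  have ha2 : (1:ℝ) < a^2 := by nlinarith
  have hA : (0:ℝ) < a^4 - 1 := by nlinarith
  apply Subset.antisymm
  · rintro _ ⟨w, hw, rfl⟩
    exact ⟨div_pos (by nlinarith [hw.1, hw.2]) hA,
      (div_lt_one hA).2 (by nlinarith [hw.1, hw.2])⟩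
  · have hc : ContinuousOn (fun w : ℝ => (w^2 - 1)/(a^4 - 1)) (Icc 1 (a^2)) :=
      (Continuous.div_const ((continuous_pow 2).sub continuous_const) _).continuousOn
    have h := intermediate_value_Ioo ha2.le hc
    have e1 : ((1:ℝ)^2 - 1)/(a^4 - 1) = 0 := by norm_num
    have e2 : (((a^2):ℝ)^2 - 1)/(a^4 - 1) = 1 := by
      rw [div_eq_one_iff_eq hA.ne']; ring
    simpa [e1, e2] using h

lemma himg2 (ha : 1 < a) :
    (fun w : ℝ => a^2/w) '' Ioo 1 (a^2) = Ioo 1 (a^2) := by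
  have ha2 : (1:ℝ) < a^2 := by nlinarith
  apply Subset.antisymm
  · rintro _ ⟨w, hw, rfl⟩
    have hw0 : (0:ℝ) < w := lt_trans one_pos hw.1
    exact ⟨(one_lt_div hw0).2 hw.2, by rw [div_lt_iff₀ hw0]; nlinarith [hw.1]⟩
  · have hc : ContinuousOn (fun w : ℝ => a^2/w) (Icc 1 (a^2)) := by
      apply ContinuousOn.div continuousOn_const continuousOn_id
      intro x hx; exact ne_of_gt (lt_of_lt_of_le one_pos hx.1)
    have h := intermediate_value_Ioo' ha2.le hc
    have e1 : a^2/(1:ℝ) = a^2 := by norm_num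
    have e2 : a^2/(a^2) = 1 := div_self (by positivity)
    simpa [e1, e2] using h

lemma himg3 (ha : 1 < a) :
    (fun w : ℝ => w - a^2/w) '' Ioo 1 (a^2) = Ioo (1 - a^2) (a^2 - 1) := by
  have ha2 : (1:ℝ) < a^2 := by nlinarith
  apply Subset.antisymm
  · rintro _ ⟨w, hw, rfl⟩
    have hw0 : (0:ℝ) < w := lt_trans one_pos hw.1
    have h1 : a^2/w < a^2 := by rw [div_lt_iff₀ hw0]; nlinarith [hw.1]
    have h2 : 1 < a^2/w := (one_lt_div hw0).2 hw.2
    exact ⟨by linarith [hw.1], by linarith [hw.2]⟩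
  · have hc : ContinuousOn (fun w : ℝ => w - a^2/w) (Icc 1 (a^2)) := by
      apply ContinuousOn.sub continuousOn_id
      apply ContinuousOn.div continuousOn_const continuousOn_id
      intro x hx; exact ne_of_gt (lt_of_lt_of_le one_pos hx.1)
    have h := intermediate_value_Ioo ha2.le hc
    have e1 : (1:ℝ) - a^2/1 = 1 - a^2 := by norm_num
    have e2 : a^2 - a^2/(a^2) = a^2 - 1 := by rw [div_self (by positivity : (a^2:ℝ) ≠ 0)]
    simpa [e1, e2] using h

lemma himg4 (ha : 1 < a) :
    (fun t : ℝ => (a^2 - 1)*t) '' Ioo (-1 : ℝ) 1 = Ioo (1 - a^2) (a^2 - 1) := by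
  have ha2 : (0:ℝ) < a^2 - 1 := by nlinarith
  rw [image_mul_left_Ioo ha2]
  congr 1 <;> ring

lemma himgneg : (fun t : ℝ => -t) '' Ioo (0:ℝ) 1 = Ioo (-1) 0 := by
  have : (fun t : ℝ => -t) = (Neg.neg : ℝ → ℝ) := rfl
  rw [this, Set.image_neg_Ioo]; norm_num




lemma hd1 (a : ℝ) : ∀ w ∈ Ioo (1:ℝ) (a^2),
    HasDerivWithinAt (fun w : ℝ => (w^2 - 1)/(a^4 - 1)) (2*w/(a^4 - 1)) (Ioo 1 (a^2)) w := by
  intro w _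
  have h : HasDerivAt (fun w : ℝ => (w^2 - 1)/(a^4 - 1)) (2*w/(a^4 - 1)) w := by
    have := ((hasDerivAt_pow 2 w).sub_const 1).div_const (a^4 - 1)
    simpa using this
  exact h.hasDerivWithinAt

lemma hd2 : ∀ w ∈ Ioo (1:ℝ) (a^2),
    HasDerivWithinAt (fun w : ℝ => a^2/w) (-(a^2/w^2)) (Ioo 1 (a^2)) w := by
  intro w hw
  have hw0 : w ≠ 0 := ne_of_gt (lt_trans one_pos hw.1)
  have h : HasDerivAt (fun w : ℝ => a^2/w) (-(a^2/w^2)) w := by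
    have h0 := (hasDerivAt_inv hw0).const_mul (a^2)
    have e : -(a^2/w^2) = a^2 * -(w^2)⁻¹ := by field_simp
    rw [e]
    simpa only [div_eq_mul_inv] using h0
  exact h.hasDerivWithinAt

lemma hd3 : ∀ w ∈ Ioo (1:ℝ) (a^2),
    HasDerivWithinAt (fun w : ℝ => w - a^2/w) (1 + a^2/w^2) (Ioo 1 (a^2)) w := by
  intro w hw
  have hw0 : w ≠ 0 := ne_of_gt (lt_trans one_pos hw.1)
  have h : HasDerivAt (fun w : ℝ => w - a^2/w) (1 + a^2/w^2) w := by
    have h0 := (hasDerivAt_id w).sub ((hasDerivAt_inv hw0).const_mul (a^2))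
    have e : 1 + a^2/w^2 = 1 - a^2 * -(w^2)⁻¹ := by field_simp; ring
    rw [e]
    refine h0.congr_of_eventuallyEq (Filter.Eventually.of_forall fun x => ?_); simp [div_eq_mul_inv]
  exact h.hasDerivWithinAt

lemma hd4 : ∀ t ∈ Ioo (-1:ℝ) 1,
    HasDerivWithinAt (fun t : ℝ => (a^2 - 1)*t) (a^2 - 1) (Ioo (-1:ℝ) 1) t := by
  intro t _
  have h : HasDerivAt (fun t : ℝ => (a^2 - 1)*t) (a^2 - 1) t := by
    simpa using (hasDerivAt_id t).const_mul (a^2 - 1)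
  exact h.hasDerivWithinAt

lemma hdneg : ∀ t ∈ Ioo (0:ℝ) 1,
    HasDerivWithinAt (fun t : ℝ => -t) (-1) (Ioo (0:ℝ) 1) t :=
  fun t _ => (hasDerivAt_neg t).hasDerivWithinAt

lemma hi1 (ha : 1 < a) : InjOn (fun w : ℝ => (w^2 - 1)/(a^4 - 1)) (Ioo 1 (a^2)) := by
  have hA : (0:ℝ) < a^4 - 1 := by nlinarith [sq_nonneg a, sq_nonneg (a-1), sq_nonneg (a+1)]
  intro w hw v hv h
  simp only at h
  have h2 : w^2 = v^2 := by
    field_simp at h; linarith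
  have hw0 : (0:ℝ) ≤ w := le_of_lt (lt_trans one_pos hw.1)
  have hv0 : (0:ℝ) ≤ v := le_of_lt (lt_trans one_pos hv.1)
  rw [← Real.sqrt_sq hw0, h2, Real.sqrt_sq hv0]

lemma hi2 (ha : 1 < a) : InjOn (fun w : ℝ => a^2/w) (Ioo 1 (a^2)) := by
  intro w hw v hv h
  have hw0 : w ≠ 0 := ne_of_gt (lt_trans one_pos hw.1)
  have hv0 : v ≠ 0 := ne_of_gt (lt_trans one_pos hv.1)
  have ha0 : a^2 ≠ 0 := by positivity
  simp only at h
  field_simp at h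
  exact h.symm

lemma hi3 (ha : 1 < a) : InjOn (fun w : ℝ => w - a^2/w) (Ioo 1 (a^2)) := by
  intro w hw v hv h
  have hw0 : (0:ℝ) < w := lt_trans one_pos hw.1
  have hv0 : (0:ℝ) < v := lt_trans one_pos hv.1
  simp only at h
  have h2 : (w - v) * (w*v + a^2) = 0 := by
    field_simp at h
    nlinarith [h]
  rcases mul_eq_zero.1 h2 with h3 | h3
  · linarith
  · nlinarith

lemma hi4 (ha : 1 < a) : InjOn (fun t : ℝ => (a^2 - 1)*t) (Ioo (-1:ℝ) 1) := by
  intro t _ s _ h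
  have ha2 : (a^2 - 1 : ℝ) ≠ 0 := by nlinarith
  exact mul_left_cancel₀ ha2 h

lemma hineg : InjOn (fun t : ℝ => -t) (Ioo (0:ℝ) 1) :=
  fun t _ s _ h => neg_injective h


lemma radpos (ha : 1 < a) (hab : a < b) {w : ℝ} (hw : w ∈ Ioo 1 (a^2)) :
    0 < (w^2 - 1) * ((a^4 - w^2) * ((w^2 - a^2/b^2) * (a^2*b^2 - w^2))) := by
  obtain ⟨hw1, hwa⟩ := hw
  have hb0 : (0:ℝ) < b := by linarith
  have h1 : (1:ℝ) < w^2 := by nlinarith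
  have h2 : w^2 < a^4 := by nlinarith
  have h3 : a^2/b^2 < 1 := by
    rw [div_lt_one (by positivity)]; nlinarith
  have h4 : a^4 < a^2*b^2 := by nlinarith [sq_nonneg a, mul_pos (mul_pos (by linarith : (0:ℝ)<a) (by linarith : (0:ℝ)<a)) (by nlinarith : (0:ℝ) < b^2 - a^2)]
  exact mul_pos (by linarith) (mul_pos (by linarith)
    (mul_pos (by linarith) (by linarith)))

set_option maxHeartbeats 2000000 in
lemma P2 (ha : 1 < a) (hab : a < b) :
    EqOn (fun w : ℝ => |(-(a^2/w^2))| • ((a^2/w)^2 / yf a b (a^2/w)))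
      (fun w : ℝ => a^2 / yf a b w) (Ioo 1 (a^2)) := by
  intro w hw
  obtain ⟨hw1, hwa⟩ := hw
  have hw0 : (0:ℝ) < w := lt_trans one_pos hw1
  have hb0 : (0:ℝ) < b := by linarith
  have hv : a^2/w ∈ Ioo (1:ℝ) (a^2) := by
    constructor
    · rw [lt_div_iff₀ hw0]; nlinarith
    · rw [div_lt_iff₀ hw0]; nlinarith
  have hP : 0 < (w^2 - 1) * ((a^4 - w^2) * ((w^2 - a^2/b^2) * (a^2*b^2 - w^2))) :=
    radpos ha hab ⟨hw1, hwa⟩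
  have hPv : 0 < ((a^2/w)^2 - 1) * ((a^4 - (a^2/w)^2) *
      (((a^2/w)^2 - a^2/b^2) * (a^2*b^2 - (a^2/w)^2))) := radpos ha hab hv
  have hT : 0 < Real.sqrt ((w^2 - 1) * ((a^4 - w^2) * ((w^2 - a^2/b^2) * (a^2*b^2 - w^2)))) :=
    Real.sqrt_pos.2 hP
  simp only [abs_neg, smul_eq_mul, yf]
  rw [abs_of_pos (by positivity)]
  have hrv : ((a^2/w)^2 - 1) * ((a^4 - (a^2/w)^2) *
      (((a^2/w)^2 - a^2/b^2) * (a^2*b^2 - (a^2/w)^2)))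
      = (a^4/w^4)^2 * ((w^2 - 1) * ((a^4 - w^2) * ((w^2 - a^2/b^2) * (a^2*b^2 - w^2)))) := by
    field_simp
  rw [hrv, Real.sqrt_mul (by positivity) , Real.sqrt_sq (by positivity)]
  have ha0 : a ≠ 0 := by positivity
  generalize hTT : Real.sqrt ((w^2 - 1) * ((a^4 - w^2) * ((w^2 - a^2/b^2) * (a^2*b^2 - w^2)))) = T at hT ⊢
  field_simp [hw0.ne', ha0, hT.ne']
end Stmt12Aux

namespace Stmt12Aux2
open Set Stmt12Aux
variable {a b : ℝ}

set_option maxHeartbeats 2000000 in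
lemma P1 (ha : 1 < a) (hab : a < b) :
    EqOn (fun w : ℝ => |2*w/(a^4 - 1)| •
        ((fun u : ℝ => u ^ ((1:ℝ)/2 - 1) * (1 - u) ^ ((1:ℝ) - 1/2 - 1) *
          (1 - (1 - a^4) * u) ^ (-(-(1/2)) : ℝ) *
          (1 - ((a^4 - 1)*b^2/(a^2 - b^2)) * u) ^ (-(1/2) : ℝ) *
          (1 - ((a^4 - 1)/(a^2*b^2 - 1)) * u) ^ (-(1/2) : ℝ)) ((w^2 - 1)/(a^4 - 1))))
      (fun w : ℝ => (2*Real.sqrt ((b^2 - a^2)*(a^2*b^2 - 1))/b) * (w^2 / yf a b w))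
      (Ioo 1 (a^2)) := by
  intro w hw
  obtain ⟨hw1, hwa⟩ := hw
  have hw0 : (0:ℝ) < w := lt_trans one_pos hw1
  have ha0 : (0:ℝ) < a := by linarith
  have hb0 : (0:ℝ) < b := by linarith
  have hA : (0:ℝ) < a^4 - 1 := by nlinarith
  have hba2 : (0:ℝ) < b^2 - a^2 := by nlinarith
  have hab1 : (0:ℝ) < a^2*b^2 - 1 := by nlinarith
  have habne : a^2 - b^2 ≠ 0 := by nlinarith
  have hw2 : (1:ℝ) < w^2 := by nlinarith
  have hwa4 : w^2 < a^4 := by nlinarith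
  have hu0 : 0 < (w^2 - 1)/(a^4 - 1) := div_pos (by linarith) hA
  have hD : (0:ℝ) < (b^2 - a^2)*(a^2*b^2 - 1) := mul_pos hba2 hab1
  have hrad : 0 < (w^2 - 1) * ((a^4 - w^2) * ((w^2 - a^2/b^2) * (a^2*b^2 - w^2))) :=
    radpos ha hab ⟨hw1, hwa⟩
  have e2 : (1:ℝ) - (w^2 - 1)/(a^4 - 1) = (a^4 - w^2)/(a^4 - 1) := by field_simp; ring
  have e3 : 1 - (1 - a^4) * ((w^2 - 1)/(a^4 - 1)) = w^2 := by field_simp; ring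
  have e4 : 1 - ((a^4 - 1)*b^2/(a^2 - b^2)) * ((w^2 - 1)/(a^4 - 1))
      = (b^2*w^2 - a^2)/(b^2 - a^2) := by
    field_simp
    ring
  have e5 : 1 - ((a^4 - 1)/(a^2*b^2 - 1)) * ((w^2 - 1)/(a^4 - 1))
      = (a^2*b^2 - w^2)/(a^2*b^2 - 1) := by
    field_simp
    ring
  have h2p : (0:ℝ) < (a^4 - w^2)/(a^4 - 1) := div_pos (by linarith) hA
  have h4p : (0:ℝ) < (b^2*w^2 - a^2)/(b^2 - a^2) := div_pos (by nlinarith) hba2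
  have h5p : (0:ℝ) < (a^2*b^2 - w^2)/(a^2*b^2 - 1) := div_pos (by nlinarith) hab1
  have hex1 : ((1:ℝ)/2 - 1) = -(1/2) := by norm_num
  have hex2 : ((1:ℝ) - 1/2 - 1) = -(1/2) := by norm_num
  have hex3 : (-(-(1/2)) : ℝ) = (1/2 : ℝ) := by norm_num
  simp only [smul_eq_mul, yf]
  rw [abs_of_pos (by positivity), hex1, hex2, hex3, e2, e3, e4, e5,
    rpow_neg_half hu0, rpow_neg_half h2p, rpow_half, rpow_neg_half h4p, rpow_neg_half h5p,
    Real.sqrt_sq hw0.le]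
  have hcomb : (Real.sqrt ((w^2 - 1)/(a^4 - 1)))⁻¹ * (Real.sqrt ((a^4 - w^2)/(a^4 - 1)))⁻¹ * w *
      (Real.sqrt ((b^2*w^2 - a^2)/(b^2 - a^2)))⁻¹ * (Real.sqrt ((a^2*b^2 - w^2)/(a^2*b^2 - 1)))⁻¹
      = w * (Real.sqrt ((w^2 - 1)/(a^4 - 1)) * (Real.sqrt ((a^4 - w^2)/(a^4 - 1)) *
          (Real.sqrt ((b^2*w^2 - a^2)/(b^2 - a^2)) * Real.sqrt ((a^2*b^2 - w^2)/(a^2*b^2 - 1)))))⁻¹ := by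
    rw [mul_inv, mul_inv, mul_inv]; ring
  rw [hcomb, ← Real.sqrt_mul h4p.le, ← Real.sqrt_mul h2p.le, ← Real.sqrt_mul hu0.le]
  have hprod : (w^2 - 1)/(a^4 - 1) * ((a^4 - w^2)/(a^4 - 1) *
      ((b^2*w^2 - a^2)/(b^2 - a^2) * ((a^2*b^2 - w^2)/(a^2*b^2 - 1))))
      = (b/((a^4 - 1) * Real.sqrt ((b^2 - a^2)*(a^2*b^2 - 1))))^2 *
        ((w^2 - 1) * ((a^4 - w^2) * ((w^2 - a^2/b^2) * (a^2*b^2 - w^2)))) := by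
    rw [div_pow, mul_pow, Real.sq_sqrt hD.le]
    field_simp
  rw [hprod, Real.sqrt_mul (sq_nonneg _), Real.sqrt_sq (by positivity)]
  have hT : 0 < Real.sqrt ((w^2 - 1) * ((a^4 - w^2) * ((w^2 - a^2/b^2) * (a^2*b^2 - w^2)))) :=
    Real.sqrt_pos.2 hrad
  have hS : 0 < Real.sqrt ((b^2 - a^2)*(a^2*b^2 - 1)) := Real.sqrt_pos.2 hD
  generalize Real.sqrt ((w^2 - 1) * ((a^4 - w^2) * ((w^2 - a^2/b^2) * (a^2*b^2 - w^2)))) = T at hT ⊢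
  generalize Real.sqrt ((b^2 - a^2)*(a^2*b^2 - 1)) = S at hS ⊢
  field_simp


set_option maxHeartbeats 1000000 in
lemma P3 (ha : 1 < a) (hab : a < b) :
    EqOn (fun w : ℝ => |1 + a^2/w^2| • hfx a b (w - a^2/w))
      (fun w : ℝ => (w^2 + a^2) / yf a b w) (Ioo 1 (a^2)) := by
  intro w hw
  obtain ⟨hw1, hwa⟩ := hw
  have hw0 : (0:ℝ) < w := lt_trans one_pos hw1
  have hb0 : (0:ℝ) < b := by linarith
  have hrad : 0 < (w^2 - 1) * ((a^4 - w^2) * ((w^2 - a^2/b^2) * (a^2*b^2 - w^2))) :=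
    radpos ha hab ⟨hw1, hwa⟩
  simp only [smul_eq_mul, hfx, yf]
  rw [abs_of_pos (by positivity)]
  have hrw : ((a^2 - 1)^2 - (w - a^2/w)^2) * (a^2*(b^2 - 1)^2/b^2 - (w - a^2/w)^2)
      = (1/w^2)^2 * ((w^2 - 1) * ((a^4 - w^2) * ((w^2 - a^2/b^2) * (a^2*b^2 - w^2)))) := by
    field_simp
    ring
  rw [hrw, Real.sqrt_mul (sq_nonneg _), Real.sqrt_sq (by positivity)]
  have hT : 0 < Real.sqrt ((w^2 - 1) * ((a^4 - w^2) * ((w^2 - a^2/b^2) * (a^2*b^2 - w^2)))) :=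
    Real.sqrt_pos.2 hrad
  generalize Real.sqrt ((w^2 - 1) * ((a^4 - w^2) * ((w^2 - a^2/b^2) * (a^2*b^2 - w^2)))) = T at hT ⊢
  field_simp

set_option maxHeartbeats 1000000 in
lemma P4 (ha : 1 < a) (hab : a < b) :
    EqOn (fun t : ℝ => |a^2 - 1| • hfx a b ((a^2 - 1)*t))
      (fun t : ℝ => (b/(a*(b^2 - 1))) * qf a b t) (Ioo (-1:ℝ) 1) := by
  intro t ht
  obtain ⟨ht1, ht2⟩ := ht
  have ha0 : (0:ℝ) < a := by linarith
  have hb0 : (0:ℝ) < b := by linarith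
  have ha2 : (0:ℝ) < a^2 - 1 := by nlinarith
  have hb2 : (0:ℝ) < b^2 - 1 := by nlinarith
  have ht2' : t^2 < 1 := by nlinarith
  have hlt : b*(a^2-1) < a*(b^2-1) := by
    nlinarith [mul_pos (sub_pos.2 hab) (show (0:ℝ) < a*b+1 by positivity)]
  have hposx : (0:ℝ) < b*(a^2-1) := mul_pos hb0 ha2
  have hk1 : (b*(a^2-1)/(a*(b^2-1)))^2 < 1 := by
    rw [div_pow, div_lt_one (by positivity)]
    nlinarith [hlt, hposx]
  have hq1 : 0 < 1 - t^2 := by linarith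
  have hq2 : 0 < 1 - (b*(a^2-1)/(a*(b^2-1)))^2 * t^2 := by nlinarith [sq_nonneg t, sq_nonneg (b*(a^2-1)/(a*(b^2-1)))]
  have hq : 0 < (1 - t^2) * (1 - (b*(a^2-1)/(a*(b^2-1)))^2 * t^2) := mul_pos hq1 hq2
  simp only [smul_eq_mul, hfx, qf]
  rw [abs_of_pos ha2]
  have hrw : ((a^2 - 1)^2 - ((a^2 - 1)*t)^2) * (a^2*(b^2 - 1)^2/b^2 - ((a^2 - 1)*t)^2)
      = ((a^2 - 1) * (a*(b^2 - 1)/b))^2 *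
        ((1 - t^2) * (1 - (b*(a^2-1)/(a*(b^2-1)))^2 * t^2)) := by
    field_simp
  rw [hrw, Real.sqrt_mul (sq_nonneg _), Real.sqrt_sq (by positivity)]
  have hT : 0 < Real.sqrt ((1 - t^2) * (1 - (b*(a^2-1)/(a*(b^2-1)))^2 * t^2)) := Real.sqrt_pos.2 hq
  generalize Real.sqrt ((1 - t^2) * (1 - (b*(a^2-1)/(a*(b^2-1)))^2 * t^2)) = T at hT ⊢
  field_simp

lemma Pneg (a b : ℝ) :
    EqOn (fun t : ℝ => |(-1:ℝ)| • qf a b (-t)) (fun t : ℝ => qf a b t) (Ioo (0:ℝ) 1) := by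
  intro t _
  simp only [qf, smul_eq_mul, abs_neg, abs_one, one_mul, neg_sq]


lemma ksq_lt_one (ha : 1 < a) (hab : a < b) : (b*(a^2-1)/(a*(b^2-1)))^2 < 1 := by
  have ha0 : (0:ℝ) < a := by linarith
  have hb0 : (0:ℝ) < b := by linarith
  have ha2 : (0:ℝ) < a^2 - 1 := by nlinarith
  have hb2 : (0:ℝ) < b^2 - 1 := by nlinarith
  have hlt : b*(a^2-1) < a*(b^2-1) := by
    nlinarith [mul_pos (sub_pos.2 hab) (show (0:ℝ) < a*b+1 by positivity)]
  have hposx : (0:ℝ) < b*(a^2-1) := mul_pos hb0 ha2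
  rw [div_pow, div_lt_one (by positivity)]
  nlinarith [hlt, hposx]

lemma qmeas (a b : ℝ) : Measurable (qf a b) := by
  unfold qf
  exact measurable_const.div (Real.continuous_sqrt.measurable.comp (by fun_prop))

lemma qint (ha : 1 < a) (hab : a < b) : IntegrableOn (qf a b) (Ioo 0 1) volume := by
  have hk := ksq_lt_one ha hab
  have hk0 : (0:ℝ) ≤ (b*(a^2-1)/(a*(b^2-1)))^2 := sq_nonneg _
  have hrpow : IntervalIntegrable (fun x : ℝ => x ^ (-(1/2) : ℝ)) volume 0 1 :=
    intervalIntegral.intervalIntegrable_rpow' (by norm_num)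
  have h2 : IntervalIntegrable (fun x : ℝ => (1 - x) ^ (-(1/2) : ℝ)) volume 0 1 := by
    simpa using (hrpow.comp_sub_left 1).symm
  have h3 : IntegrableOn (fun x : ℝ => (1 - x) ^ (-(1/2) : ℝ)) (Ioo 0 1) volume :=
    ((intervalIntegrable_iff_integrableOn_Ioc_of_le (by norm_num)).1 h2).mono_set
      Ioo_subset_Ioc_self
  refine MeasureTheory.Integrable.mono
    (h3.const_mul ((Real.sqrt (1 - (b*(a^2-1)/(a*(b^2-1)))^2))⁻¹))
    ((qmeas a b).aestronglyMeasurable) ?_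
  filter_upwards [ae_restrict_mem measurableSet_Ioo] with t ht
  obtain ⟨ht0, ht1⟩ := ht
  have hR1 : 0 < 1 - t := by linarith
  have hkk : 0 < 1 - (b*(a^2-1)/(a*(b^2-1)))^2 := by linarith
  have hkt : (b*(a^2-1)/(a*(b^2-1)))^2 * t < 1 := by nlinarith
  have ht3 : (0:ℝ) ≤ 1 - t^3 := by
    have := pow_lt_one₀ ht0.le ht1 (three_ne_zero); linarith
  have hint1 : (0:ℝ) ≤ (1-t)*t*(1 - (b*(a^2-1)/(a*(b^2-1)))^2*t) :=
    mul_nonneg (mul_nonneg hR1.le ht0.le) (by linarith)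
  have hint2 : (0:ℝ) ≤ (1-t)*((b*(a^2-1)/(a*(b^2-1)))^2)*(1-t^3) :=
    mul_nonneg (mul_nonneg hR1.le hk0) ht3
  have hRb : (1-t)*(1 - (b*(a^2-1)/(a*(b^2-1)))^2) ≤
      (1 - t^2)*(1 - (b*(a^2-1)/(a*(b^2-1)))^2 * t^2) := by
    nlinarith [hint1, hint2]
  have h6 : 0 < Real.sqrt ((1-t)*(1 - (b*(a^2-1)/(a*(b^2-1)))^2)) :=
    Real.sqrt_pos.2 (mul_pos hR1 hkk)
  rw [Real.norm_eq_abs, Real.norm_eq_abs, abs_of_nonneg (by simp only [qf]; positivity),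
    abs_of_nonneg (by positivity)]
  calc qf a b t = 1 / Real.sqrt ((1 - t^2)*(1 - (b*(a^2-1)/(a*(b^2-1)))^2 * t^2)) := rfl
    _ ≤ 1 / Real.sqrt ((1-t)*(1 - (b*(a^2-1)/(a*(b^2-1)))^2)) :=
      one_div_le_one_div_of_le h6 (Real.sqrt_le_sqrt hRb)
    _ = (Real.sqrt (1 - (b*(a^2-1)/(a*(b^2-1)))^2))⁻¹ * (1-t) ^ (-(1/2) : ℝ) := by
      rw [rpow_neg_half hR1, Real.sqrt_mul hR1.le, one_div, mul_inv]
      ring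

lemma Kge1 (ha : 1 < a) (hab : a < b) : 1 ≤ ∫ t in Ioo (0:ℝ) 1, qf a b t := by
  have hk := ksq_lt_one ha hab
  have hk0 : (0:ℝ) ≤ (b*(a^2-1)/(a*(b^2-1)))^2 := sq_nonneg _
  have h0 : ∫ _t in Ioo (0:ℝ) 1, (1:ℝ) = 1 := by simp
  have hmono : ∫ _t in Ioo (0:ℝ) 1, (1:ℝ) ≤ ∫ t in Ioo (0:ℝ) 1, qf a b t := by
    refine setIntegral_mono_on (integrableOn_const measure_Ioo_lt_top.ne)
      (qint ha hab) measurableSet_Ioo ?_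
    intro t ht
    obtain ⟨ht0, ht1⟩ := ht
    have h1 : 0 < 1 - t^2 := by nlinarith
    have h2 : 0 < 1 - (b*(a^2-1)/(a*(b^2-1)))^2 * t^2 := by
      nlinarith [mul_nonneg hk0 (sq_nonneg t)]
    have hR1 : (1 - t^2)*(1 - (b*(a^2-1)/(a*(b^2-1)))^2 * t^2) ≤ 1 := by
      nlinarith [mul_nonneg hk0 (sq_nonneg t)]
    have hR0 : 0 < (1 - t^2)*(1 - (b*(a^2-1)/(a*(b^2-1)))^2 * t^2) := mul_pos h1 h2
    show (1:ℝ) ≤ qf a b t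
    simp only [qf]
    rw [le_div_iff₀ (Real.sqrt_pos.2 hR0), one_mul]
    exact Real.sqrt_le_one.2 hR1
  linarith [hmono, h0.symm.le, h0.le]


set_option maxHeartbeats 2000000 in
lemma key (ha : 1 < a) (hab : a < b) :
    ∫ u in Ioo (0:ℝ) 1, (u ^ ((1:ℝ)/2 - 1) * (1 - u) ^ ((1:ℝ) - 1/2 - 1) *
      (1 - (1 - a^4) * u) ^ (-(-(1/2)) : ℝ) *
      (1 - (a^4 - 1)*b^2/(a^2 - b^2) * u) ^ (-(1/2) : ℝ) *
      (1 - (a^4 - 1)/(a^2*b^2 - 1) * u) ^ (-(1/2) : ℝ))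
    = (2*Real.sqrt ((b^2 - a^2)*(a^2*b^2 - 1))/(a*(b^2 - 1))) *
        ∫ t in Ioo (0:ℝ) 1, qf a b t := by
  have ha0 : (0:ℝ) < a := by linarith
  have hb0 : (0:ℝ) < b := by linarith
  have hb21 : (0:ℝ) < b^2 - 1 := by nlinarith
  -- step 1 & 2 : substitution u = (w²-1)/(a⁴-1) and pointwise identity
  have step1 : (∫ u in Ioo (0:ℝ) 1, (u ^ ((1:ℝ)/2 - 1) * (1 - u) ^ ((1:ℝ) - 1/2 - 1) *
      (1 - (1 - a^4) * u) ^ (-(-(1/2)) : ℝ) *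
      (1 - (a^4 - 1)*b^2/(a^2 - b^2) * u) ^ (-(1/2) : ℝ) *
      (1 - (a^4 - 1)/(a^2*b^2 - 1) * u) ^ (-(1/2) : ℝ)))
      = ∫ w in Ioo (1:ℝ) (a^2), (2*Real.sqrt ((b^2 - a^2)*(a^2*b^2 - 1))/b) *
          (w^2 / yf a b w) := by
    rw [← himg1 ha]
    rw [integral_image_eq_integral_abs_deriv_smul measurableSet_Ioo (hd1 a) (hi1 ha)]
    exact setIntegral_congr_fun measurableSet_Ioo (P1 ha hab)
  -- symmetry step
  have stepB : (∫ w in Ioo (1:ℝ) (a^2), w^2 / yf a b w)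
      = ∫ w in Ioo (1:ℝ) (a^2), a^2 / yf a b w := by
    conv_lhs => rw [← himg2 ha]
    rw [integral_image_eq_integral_abs_deriv_smul measurableSet_Ioo hd2 (hi2 ha)]
    exact setIntegral_congr_fun measurableSet_Ioo (P2 ha hab)
  -- integrability chain
  have hIoo : IntegrableOn (qf a b) (Ioo (-1:ℝ) 0) volume := by
    rw [← himgneg]
    rw [integrableOn_image_iff_integrableOn_abs_deriv_smul measurableSet_Ioo hdneg hineg]
    exact (qint ha hab).congr_fun (fun t ht => (Pneg a b ht).symm) measurableSet_Ioo
  have qint2 : IntegrableOn (qf a b) (Ioo (-1:ℝ) 1) volume := by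
    have hu : Ioc (-1:ℝ) 0 ∪ Ioo 0 1 = Ioo (-1:ℝ) 1 :=
      Ioc_union_Ioo_eq_Ioo (by norm_num) (by norm_num)
    rw [← hu]
    exact ((integrableOn_Ioc_iff_integrableOn_Ioo).2 hIoo).union (qint ha hab)
  have h_int : IntegrableOn (hfx a b) (Ioo (1 - a^2) (a^2 - 1)) volume := by
    rw [← himg4 ha]
    rw [integrableOn_image_iff_integrableOn_abs_deriv_smul measurableSet_Ioo hd4 (hi4 ha)]
    have hc : IntegrableOn (fun t => b/(a*(b^2 - 1)) * qf a b t) (Ioo (-1:ℝ) 1) volume :=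
      qint2.const_mul _
    exact hc.congr_fun (fun t ht => (P4 ha hab ht).symm) measurableSet_Ioo
  have hym : Measurable (yf a b) := by
    unfold yf
    exact Real.continuous_sqrt.measurable.comp (by fun_prop)
  have Int1 : IntegrableOn (fun w => (w^2 + a^2) / yf a b w) (Ioo (1:ℝ) (a^2)) volume := by
    have h := (integrableOn_image_iff_integrableOn_abs_deriv_smul measurableSet_Ioo hd3
      (hi3 ha) (hfx a b)).1 (by rw [himg3 ha]; exact h_int)
    exact h.congr_fun (P3 ha hab) measurableSet_Ioo
  have Intw : IntegrableOn (fun w => w^2 / yf a b w) (Ioo (1:ℝ) (a^2)) volume := by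
    refine MeasureTheory.Integrable.mono Int1
      (((continuous_pow 2).measurable.div hym).aestronglyMeasurable) ?_
    filter_upwards [ae_restrict_mem measurableSet_Ioo] with w hw
    have hy : 0 < yf a b w := Real.sqrt_pos.2 (radpos ha hab hw)
    rw [Real.norm_eq_abs, Real.norm_eq_abs, abs_of_nonneg (by positivity),
      abs_of_nonneg (by positivity)]
    exact (div_le_div_iff_of_pos_right hy).2 (by nlinarith [sq_nonneg a])
  have Inta : IntegrableOn (fun w => a^2 / yf a b w) (Ioo (1:ℝ) (a^2)) volume := by
    refine MeasureTheory.Integrable.mono Int1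
      ((measurable_const.div hym).aestronglyMeasurable) ?_
    filter_upwards [ae_restrict_mem measurableSet_Ioo] with w hw
    have hy : 0 < yf a b w := Real.sqrt_pos.2 (radpos ha hab hw)
    rw [Real.norm_eq_abs, Real.norm_eq_abs, abs_of_nonneg (by positivity),
      abs_of_nonneg (by positivity)]
    exact (div_le_div_iff_of_pos_right hy).2 (by nlinarith [sq_nonneg w])
  -- averaging
  have hsplit : (∫ w in Ioo (1:ℝ) (a^2), (w^2 + a^2) / yf a b w)
      = (∫ w in Ioo (1:ℝ) (a^2), w^2 / yf a b w) +
        ∫ w in Ioo (1:ℝ) (a^2), a^2 / yf a b w := by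
    rw [← MeasureTheory.integral_add Intw Inta]
    exact setIntegral_congr_fun measurableSet_Ioo
      (fun w _ => add_div _ _ _)
  have hX2 : (∫ w in Ioo (1:ℝ) (a^2), (w^2 + a^2) / yf a b w)
      = 2 * ∫ w in Ioo (1:ℝ) (a^2), w^2 / yf a b w := by
    rw [hsplit, ← stepB]; ring
  -- substitution x = w - a²/w
  have step5 : (∫ x in Ioo (1 - a^2) (a^2 - 1), hfx a b x)
      = ∫ w in Ioo (1:ℝ) (a^2), (w^2 + a^2) / yf a b w := by
    rw [← himg3 ha]
    rw [integral_image_eq_integral_abs_deriv_smul measurableSet_Ioo hd3 (hi3 ha)]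
    exact setIntegral_congr_fun measurableSet_Ioo (P3 ha hab)
  -- substitution x = (a²-1)t
  have step6 : (∫ x in Ioo (1 - a^2) (a^2 - 1), hfx a b x)
      = (b/(a*(b^2 - 1))) * ∫ t in Ioo (-1:ℝ) 1, qf a b t := by
    rw [← himg4 ha]
    rw [integral_image_eq_integral_abs_deriv_smul measurableSet_Ioo hd4 (hi4 ha)]
    rw [setIntegral_congr_fun measurableSet_Ioo (P4 ha hab)]
    exact MeasureTheory.integral_const_mul _ _
  -- symmetrize the t-integral
  have step7 : (∫ t in Ioo (-1:ℝ) 1, qf a b t) = 2 * ∫ t in Ioo (0:ℝ) 1, qf a b t := by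
    have hu : Ioc (-1:ℝ) 0 ∪ Ioo 0 1 = Ioo (-1:ℝ) 1 :=
      Ioc_union_Ioo_eq_Ioo (by norm_num) (by norm_num)
    have hdisj : Disjoint (Ioc (-1:ℝ) 0) (Ioo (0:ℝ) 1) := by
      rw [Set.disjoint_left]
      rintro x ⟨_, hx2⟩ ⟨hx3, _⟩
      linarith
    rw [← hu, MeasureTheory.setIntegral_union hdisj measurableSet_Ioo
      ((integrableOn_Ioc_iff_integrableOn_Ioo).2 hIoo) (qint ha hab),
      MeasureTheory.integral_Ioc_eq_integral_Ioo]
    have hswap : (∫ t in Ioo (-1:ℝ) 0, qf a b t) = ∫ t in Ioo (0:ℝ) 1, qf a b t := by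
      rw [← himgneg]
      rw [integral_image_eq_integral_abs_deriv_smul measurableSet_Ioo hdneg hineg]
      exact setIntegral_congr_fun measurableSet_Ioo (Pneg a b)
    rw [hswap]; ring
  -- assemble
  rw [step1, MeasureTheory.integral_const_mul]
  have hXval : (∫ w in Ioo (1:ℝ) (a^2), w^2 / yf a b w)
      = (b/(a*(b^2 - 1))) * ∫ t in Ioo (0:ℝ) 1, qf a b t := by
    have h1 : 2 * (∫ w in Ioo (1:ℝ) (a^2), w^2 / yf a b w)
        = (b/(a*(b^2 - 1))) * (2 * ∫ t in Ioo (0:ℝ) 1, qf a b t) := by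
      rw [← hX2, ← step5, step6, step7]
    linarith
  rw [hXval]
  have hbne : b ≠ 0 := hb0.ne'
  have habne2 : a*(b^2 - 1) ≠ 0 := by positivity
  field_simp

end Stmt12Aux2


theorem stmt_12 (a b : ℝ) (ha : 1 < a) (hab : a < b) :
    π = (2 * Real.sqrt ((b^2 - a^2) * (a^2*b^2 - 1)) / (a * (b^2 - 1))) *
          ellipticK (b * (a^2 - 1) / (a * (b^2 - 1))) /
        FD3 (1/2) (-(1/2)) (1/2) (1/2) 1
          (1 - a^4) ((a^4 - 1) * b^2 / (a^2 - b^2)) ((a^4 - 1) / (a^2*b^2 - 1)) := by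
  have ha0 : (0:ℝ) < a := by linarith
  have hb0 : (0:ℝ) < b := by linarith
  have hb21 : (0:ℝ) < b^2 - 1 := by nlinarith
  have hD : (0:ℝ) < (b^2 - a^2)*(a^2*b^2 - 1) := by
    have h1 : (0:ℝ) < b^2 - a^2 := by nlinarith
    have h2 : (0:ℝ) < a^2*b^2 - 1 := by nlinarith
    exact mul_pos h1 h2
  have hsD : 0 < Real.sqrt ((b^2 - a^2)*(a^2*b^2 - 1)) := Real.sqrt_pos.2 hD
  have hEK : ellipticK (b*(a^2 - 1)/(a*(b^2 - 1)))
      = ∫ t in Set.Ioo (0:ℝ) 1, Stmt12Aux.qf a b t := by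
    rw [ellipticK, intervalIntegral.integral_of_le zero_le_one,
      MeasureTheory.integral_Ioc_eq_integral_Ioo]
    rfl
  have hK1 : 1 ≤ ∫ t in Set.Ioo (0:ℝ) 1, Stmt12Aux.qf a b t := Stmt12Aux2.Kge1 ha hab
  have hKpos : 0 < ∫ t in Set.Ioo (0:ℝ) 1, Stmt12Aux.qf a b t := lt_of_lt_of_le one_pos hK1
  have hFD : FD3 (1/2) (-(1/2)) (1/2) (1/2) 1
      (1 - a^4) ((a^4 - 1)*b^2/(a^2 - b^2)) ((a^4 - 1)/(a^2*b^2 - 1))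
      = (2*Real.sqrt ((b^2 - a^2)*(a^2*b^2 - 1))/(a*(b^2 - 1))) *
          (∫ t in Set.Ioo (0:ℝ) 1, Stmt12Aux.qf a b t) / π := by
    rw [FD3, intervalIntegral.integral_of_le zero_le_one,
      MeasureTheory.integral_Ioc_eq_integral_Ioo, Stmt12Aux2.key ha hab,
      show (1:ℝ) - 1/2 = 1/2 by norm_num, Real.Gamma_one, Real.Gamma_one_half_eq,
      Real.mul_self_sqrt Real.pi_pos.le]
    ring
  rw [show b * (a^2 - 1) / (a * (b^2 - 1)) = b*(a^2 - 1)/(a*(b^2 - 1)) from rfl] at *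
  rw [hEK, hFD]
  have hMK : (0:ℝ) < 2*Real.sqrt ((b^2 - a^2)*(a^2*b^2 - 1))/(a*(b^2 - 1)) *
      (∫ t in Set.Ioo (0:ℝ) 1, Stmt12Aux.qf a b t) := by positivity
  rw [eq_div_iff (by positivity : (2*Real.sqrt ((b^2 - a^2)*(a^2*b^2 - 1))/(a*(b^2 - 1)) *
      (∫ t in Set.Ioo (0:ℝ) 1, Stmt12Aux.qf a b t)) / π ≠ 0)]
  field_simp
end
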